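/- arXiv:1709.06769 — 11 statements merged into one kernel-verified Lean document; each statement's English description precedes it below -/
import Mathlib

section
/- Let 𝒜 be a hyperplane arrangement in 𝔽_q^m, where 𝔽_q is a finite field with q elements. Then the number of points of the complement c(𝒜) = 𝔽_q^m ∖ ⋃_{i=1}^n Hᵢ equals χ_𝒜(q) = Σ_{F ∈ L(𝒜)} ν(∅,F) · q^{m − rk(F)}, where rk(F) = dim span{aᵢ : i ∈ F} and ∅ is the minimal flat. -/
open scoped Classical

theorem stmt_1 {K : Type*} [Field K] [Fintype K] (m n : ℕ) (hm : 1 ≤ m) (hn : 1 ≤ n)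
    (a : Fin n → ((Fin m → K) →ₗ[K] K)) (ha : ∀ i, a i ≠ 0) (r : Fin n → K)
    (H : Fin n → Set (Fin m → K)) (hH : ∀ i, H i = {v | a i v = r i})
    (HF : Finset (Fin n) → Set (Fin m → K)) (hHF : ∀ F, HF F = ⋂ i ∈ F, H i)
    (IsFlat : Finset (Fin n) → Prop)
    (hFlat : ∀ F, IsFlat F ↔ (HF F).Nonempty ∧ ∀ i, (i ∈ F ↔ HF F ⊆ H i))
    (ν : Finset (Fin n) → Finset (Fin n) → ℤ)
    (hν₁ : ∀ F, IsFlat F → ν F F = 1)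
    (hν₂ : ∀ F F', IsFlat F → IsFlat F' → F ⊂ F' →
      ∑ G ∈ Finset.univ.filter (fun G => IsFlat G ∧ F ⊆ G ∧ G ⊆ F'), ν F G = 0)
    (rk : Finset (Fin n) → ℕ)
    (hrk : ∀ F, rk F = Module.finrank K (Submodule.span K (a '' (F : Set (Fin n))))) :
    (Nat.card {v : Fin m → K // ∀ i, v ∉ H i} : ℤ)
      = ∑ F ∈ Finset.univ.filter IsFlat, ν ∅ F * (Fintype.card K : ℤ) ^ (m - rk F) := by
  classical
  have memHF : ∀ (F : Finset (Fin n)) v, v ∈ HF F ↔ ∀ i ∈ F, v ∈ H i := by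
    intro F v; rw [hHF]; simp
  set Fl : (Fin m → K) → Finset (Fin n) :=
    fun v => Finset.univ.filter (fun i => v ∈ H i) with hFl
  have hsub : ∀ (F : Finset (Fin n)) v, v ∈ HF F ↔ F ⊆ Fl v := by
    intro F v
    rw [memHF]
    constructor
    · intro h i hi; simp [hFl, h i hi]
    · intro h i hi
      have := h hi
      simp [hFl] at this
      exact this
  have hmemH : ∀ i v, v ∈ H i ↔ a i v = r i := by
    intro i v; rw [hH]; rfl
  have hFlFlat : ∀ v, IsFlat (Fl v) := by
    intro v
    rw [hFlat]
    have hv : v ∈ HF (Fl v) := (hsub _ _).2 (le_refl _)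
    refine ⟨⟨v, hv⟩, fun i => ⟨?_, ?_⟩⟩
    · intro hi w hw
      rw [memHF] at hw; exact hw i hi
    · intro hsubi
      have := hsubi hv
      simp [hFl, this]
  have hEmptyFlat : IsFlat (∅ : Finset (Fin n)) := by
    rw [hFlat]
    constructor
    · exact ⟨0, (memHF _ _).2 (by simp)⟩
    · intro i
      simp only [Finset.notMem_empty, false_iff]
      intro hcon
      obtain ⟨w, hw⟩ : ∃ w, a i w ≠ r i := by
        by_contra hc
        push_neg at hc
        apply ha i
        have h0 : r i = 0 := by simpa using (hc 0).symm
        apply LinearMap.ext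
        intro v
        simp [hc, h0]
      have hwm : w ∈ HF ∅ := (memHF _ _).2 (by simp)
      exact hw ((hmemH i w).1 (hcon hwm))
  -- cardinality of a flat's intersection
  have hcard : ∀ F : Finset (Fin n), IsFlat F →
      Nat.card (HF F) = Fintype.card K ^ (m - rk F) := by
    intro F hF
    obtain ⟨v₀, hv₀⟩ := ((hFlat F).1 hF).1
    set Φ : Submodule K (Module.Dual K (Fin m → K)) :=
      Submodule.span K (a '' (F : Set (Fin n))) with hΦ
    have hker : ∀ x : Fin m → K, (∀ i ∈ F, a i x = 0) ↔ x ∈ Φ.dualCoannihilator := by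
      intro x
      rw [Submodule.mem_dualCoannihilator]
      constructor
      · intro h φ hφ
        have hle : Φ ≤ LinearMap.ker ((LinearMap.applyₗ x :
            ((Fin m → K) →ₗ[K] K) →ₗ[K] K)) := by
          rw [hΦ, Submodule.span_le]
          rintro _ ⟨i, hi, rfl⟩
          simpa using h i hi
        simpa using hle hφ
      · intro h i hi
        exact h (a i) (Submodule.subset_span ⟨i, hi, rfl⟩)
    have hmemHF : ∀ v, v ∈ HF F ↔ ∀ i ∈ F, a i v = r i := by
      intro v; rw [memHF]; exact forall₂_congr fun i hi => hmemH i v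
    have e : (HF F) ≃ Φ.dualCoannihilator :=
      { toFun := fun v => ⟨(v : Fin m → K) - v₀, by
          rw [← hker]
          intro i hi
          have h1 := (hmemHF _).1 v.2 i hi
          have h2 := (hmemHF _).1 hv₀ i hi
          simp [map_sub, h1, h2]⟩
        invFun := fun w => ⟨(w : Fin m → K) + v₀, by
          rw [hmemHF]
          intro i hi
          have h1 := (hker _).2 w.2 i hi
          have h2 := (hmemHF _).1 hv₀ i hi
          simp [map_add, h1, h2]⟩
        left_inv := fun v => by ext1; simp
        right_inv := fun w => by ext1; simp }
    have hrkle : rk F + Module.finrank K Φ.dualCoannihilator = m := by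
      rw [hrk]
      have := Subspace.finrank_add_finrank_dualCoannihilator_eq Φ
      rw [Module.finrank_fin_fun] at this
      exact this
    have hdim : Module.finrank K Φ.dualCoannihilator = m - rk F := by omega
    rw [Nat.card_congr e, Nat.card_eq_fintype_card, Module.card_eq_pow_finrank (K := K), hdim]
  have hcard' : ∀ F : Finset (Fin n), IsFlat F →
      ((Finset.univ.filter (fun v => v ∈ HF F)).card = Fintype.card K ^ (m - rk F)) := by
    intro F hF
    rw [← hcard F hF]
    rw [Nat.card_eq_fintype_card]
    rw [← Fintype.card_subtype]
  calc (Nat.card {v : Fin m → K // ∀ i, v ∉ H i} : ℤ)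
      = ∑ v : Fin m → K, (if Fl v = ∅ then (1 : ℤ) else 0) := by
        rw [Finset.sum_boole]
        congr 1
        rw [Nat.card_eq_fintype_card, Fintype.card_subtype]
        congr 1
        apply Finset.filter_congr
        intro v _
        simp only [hFl, eq_iff_iff]
        rw [Finset.filter_eq_empty_iff]
        simp
    _ = ∑ v : Fin m → K, ∑ F ∈ Finset.univ.filter IsFlat,
          ν ∅ F * (if F ⊆ Fl v then (1 : ℤ) else 0) := by
        refine Finset.sum_congr rfl fun v _ => Eq.symm ?_
        calc ∑ F ∈ Finset.univ.filter IsFlat, ν ∅ F * (if F ⊆ Fl v then (1 : ℤ) else 0)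
            = ∑ F ∈ (Finset.univ.filter IsFlat).filter (fun F => F ⊆ Fl v), ν ∅ F := by
              conv_rhs => rw [Finset.sum_filter]
              refine Finset.sum_congr rfl fun F _ => ?_
              split <;> simp
          _ = ∑ F ∈ Finset.univ.filter
                (fun G => IsFlat G ∧ (∅ : Finset (Fin n)) ⊆ G ∧ G ⊆ Fl v), ν ∅ F := by
              rw [Finset.filter_filter]
              refine Finset.sum_congr ?_ (fun _ _ => rfl)
              apply Finset.filter_congr
              intro G _
              simp
          _ = if Fl v = ∅ then 1 else 0 := by
              by_cases h : Fl v = ∅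
              · rw [if_pos h]
                have hset : Finset.univ.filter
                    (fun G => IsFlat G ∧ (∅ : Finset (Fin n)) ⊆ G ∧ G ⊆ Fl v)
                    = {(∅ : Finset (Fin n))} := by
                  ext G
                  simp only [Finset.mem_filter, Finset.mem_univ, true_and,
                    Finset.mem_singleton, h, Finset.subset_empty]
                  constructor
                  · exact fun hg => hg.2.2
                  · rintro rfl
                    exact ⟨hEmptyFlat, Finset.Subset.refl _, rfl⟩
                rw [hset, Finset.sum_singleton, hν₁ _ hEmptyFlat]
              · rw [if_neg h]
                exact hν₂ ∅ (Fl v) hEmptyFlat (hFlFlat v)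
                  (Finset.empty_ssubset.2 (Finset.nonempty_iff_ne_empty.2 h))
    _ = ∑ F ∈ Finset.univ.filter IsFlat,
          ν ∅ F * (Fintype.card K : ℤ) ^ (m - rk F) := by
        rw [Finset.sum_comm]
        refine Finset.sum_congr rfl fun F hF => ?_
        rw [← Finset.mul_sum]
        congr 1
        rw [Finset.sum_boole]
        have : Finset.univ.filter (fun v => F ⊆ Fl v)
            = Finset.univ.filter (fun v => v ∈ HF F) := by
          apply Finset.filter_congr; intro v _; exact (hsub F v).symm
        rw [this]
        rw [hcard' F (Finset.mem_filter.1 hF).2]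
        push_cast
        ring
end

section
/- Let 𝒜 be a central hyperplane arrangement over a field k and let F ⊆ F' be two flats of 𝒜. Then (−1)^{rk(F') − rk(F)} · ν(F,F') > 0, where rk(F) = dim span{aᵢ : i ∈ F}. -/
open scoped Classical

lemma dual_span_iff' {k V : Type*} [Field k] [AddCommGroup V] [Module k V]
    [FiniteDimensional k V] (S : Set (Module.Dual k V)) (f : Module.Dual k V) :
    f ∈ Submodule.span k S ↔ ∀ v : V, (∀ g ∈ S, g v = 0) → f v = 0 := by
  constructor
  · intro hf v hv
    induction hf using Submodule.span_induction with
    | mem g hg => exact hv g hg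
    | zero => simp
    | add g h _ _ hg hh => simp [hg, hh]
    | smul c g _ hg => simp [hg]
  · intro hv
    have h1 : f ∈ (Submodule.span k S).dualCoannihilator.dualAnnihilator := by
      rw [Submodule.mem_dualAnnihilator]
      intro w hw
      rw [← SetLike.mem_coe, Submodule.coe_dualCoannihilator_span] at hw
      exact hv w hw
    rwa [Subspace.dualCoannihilator_dualAnnihilator_eq] at h1

lemma moebius_sign {ι : Type*} [Fintype ι] [DecidableEq ι]
    (Flat : Finset ι → Prop) (cl : Finset ι → Finset ι) (rk : Finset ι → ℕ)
    (ν : Finset ι → Finset ι → ℤ)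
    (hsub : ∀ S, S ⊆ cl S)
    (hflatcl : ∀ S, Flat (cl S))
    (hmin : ∀ S G, Flat G → S ⊆ G → cl S ⊆ G)
    (hrkmono : ∀ S T, S ⊆ T → rk S ≤ rk T)
    (hrkstrict : ∀ G G', Flat G → Flat G' → G ⊂ G' → rk G < rk G')
    (hrkins : ∀ (i : ι) (S : Finset ι), rk (cl (insert i S)) ≤ rk S + 1)
    (hexch : ∀ (i j : ι) (G : Finset ι), Flat G → j ∈ cl (insert i G) → j ∉ G →
      i ∈ cl (insert j G))
    (hν₁ : ∀ F, Flat F → ν F F = 1)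
    (hν₂ : ∀ F F', Flat F → Flat F' → F ⊂ F' →
      ∑ G ∈ Finset.univ.filter (fun G => Flat G ∧ F ⊆ G ∧ G ⊆ F'), ν F G = 0) :
    ∀ (d : ℕ) (F F' : Finset ι), Flat F → Flat F' → F ⊆ F' → rk F' = rk F + d →
      0 < (-1 : ℤ) ^ d * ν F F' := by
  have hclflat : ∀ G, Flat G → cl G = G := fun G hG =>
    Finset.Subset.antisymm (hmin G G hG (Finset.Subset.refl G)) (hsub G)
  intro d
  induction d using Nat.strong_induction_on with
  | _ d IH =>
    intro F F' hF hF' hFF' hd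
    by_cases hne : F = F'
    · subst hne
      have hd0 : d = 0 := by omega
      subst hd0
      simp [hν₁ F hF]
    have hss : F ⊂ F' := Finset.ssubset_iff_subset_ne.mpr ⟨hFF', hne⟩
    have hdpos : 0 < d := by have := hrkstrict F F' hF hF' hss; omega
    obtain ⟨i, hiF', hiF⟩ : ∃ i, i ∈ F' ∧ i ∉ F := by
      obtain ⟨i, h1, h2⟩ := Finset.exists_of_ssubset hss; exact ⟨i, h1, h2⟩
    set z0 := cl (insert i F) with hz0
    set g : Finset ι → ℤ := fun z =>
      ∑ G ∈ Finset.univ.filter (fun G => Flat G ∧ F ⊆ G ∧ G ⊆ F' ∧ cl (insert i G) = z),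
        ν F G with hg
    have hz0F' : z0 ⊆ F' := hmin _ _ hF' (Finset.insert_subset hiF' hFF')
    have hiz0 : i ∈ z0 := hsub _ (Finset.mem_insert_self i F)
    have hFz0 : F ⊆ z0 := fun x hx => hsub _ (Finset.mem_insert_of_mem hx)
    have claimA : ∀ z, Flat z → z0 ⊆ z → z ⊆ F' →
        ∑ z' ∈ Finset.univ.filter (fun z' => Flat z' ∧ z0 ⊆ z' ∧ z' ⊆ z), g z' = 0 := by
      intro z hz hz0z hzF'
      have hFz : F ⊂ z := Finset.ssubset_iff_subset_ne.mpr ⟨hFz0.trans hz0z, by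
        intro h; exact hiF (h ▸ hz0z hiz0)⟩
      rw [← hν₂ F z hF hz hFz]
      rw [← Finset.sum_fiberwise_of_maps_to (g := fun G => cl (insert i G))
        (t := Finset.univ.filter (fun z' => Flat z' ∧ z0 ⊆ z' ∧ z' ⊆ z)) ?_ (fun G => ν F G)]
      · apply Finset.sum_congr rfl
        intro z' hz'
        simp only [Finset.mem_filter, Finset.mem_univ, true_and] at hz'
        apply Finset.sum_congr _ (fun _ _ => rfl)
        ext G
        simp only [hg, Finset.mem_filter, Finset.mem_univ, true_and]
        constructor
        · rintro ⟨h1, h2, h3, h4⟩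
          refine ⟨⟨h1, h2, ?_⟩, h4⟩
          have : G ⊆ cl (insert i G) := (Finset.subset_insert i G).trans (hsub _)
          rw [h4] at this
          exact this.trans hz'.2.2
        · rintro ⟨⟨h1, h2, h3⟩, h4⟩
          exact ⟨h1, h2, h3.trans hzF', h4⟩
      · intro G hG
        simp only [Finset.mem_filter, Finset.mem_univ, true_and] at hG ⊢
        obtain ⟨h1, h2, h3⟩ := hG
        refine ⟨hflatcl _, ?_, ?_⟩
        · exact hmin _ _ (hflatcl _)
            ((Finset.insert_subset_insert i h2).trans (hsub _))
        · exact hmin _ _ hz (Finset.insert_subset (hz0z hiz0) h3)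
    have claimB : ∀ c z, z.card = c → Flat z → z0 ⊆ z → z ⊆ F' → g z = 0 := by
      intro c
      induction c using Nat.strong_induction_on with
      | _ c IHc =>
        intro z hc hz hz0z hzF'
        have hA := claimA z hz hz0z hzF'
        have hzmem : z ∈ Finset.univ.filter (fun z' => Flat z' ∧ z0 ⊆ z' ∧ z' ⊆ z) := by
          simp [hz, hz0z]
        rw [← Finset.add_sum_erase _ g hzmem] at hA
        have hrest : ∀ z' ∈ (Finset.univ.filter
            (fun z' => Flat z' ∧ z0 ⊆ z' ∧ z' ⊆ z)).erase z, g z' = 0 := by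
          intro z' hz'
          rw [Finset.mem_erase, Finset.mem_filter] at hz'
          obtain ⟨hne', -, h1, h2, h3⟩ := hz'
          have hss' : z' ⊂ z := Finset.ssubset_iff_subset_ne.mpr ⟨h3, hne'⟩
          exact IHc z'.card (by rw [← hc]; exact Finset.card_lt_card hss') z' rfl h1 h2
            (h3.trans hzF')
        rw [Finset.sum_eq_zero hrest] at hA
        omega
    have hgF' : g F' = 0 := claimB F'.card F' rfl hF' hz0F' (Finset.Subset.refl F')
    have hF'mem : F' ∈ Finset.univ.filter
        (fun G => Flat G ∧ F ⊆ G ∧ G ⊆ F' ∧ cl (insert i G) = F') := by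
      simp only [Finset.mem_filter, Finset.mem_univ, true_and]
      exact ⟨hF', hFF', Finset.Subset.refl F', by
        rw [Finset.insert_eq_self.mpr hiF', hclflat F' hF']⟩
    set E := (Finset.univ.filter
      (fun G => Flat G ∧ F ⊆ G ∧ G ⊆ F' ∧ cl (insert i G) = F')).erase F' with hE
    have hsplit : ν F F' + ∑ G ∈ E, ν F G = 0 := by
      rw [hE, Finset.add_sum_erase _ (fun G => ν F G) hF'mem]
      simpa [hg] using hgF'
    have hGprop : ∀ G ∈ E, Flat G ∧ F ⊆ G ∧ rk G = rk F + (d - 1) := by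
      intro G hGE
      rw [hE, Finset.mem_erase, Finset.mem_filter] at hGE
      obtain ⟨hne', -, h1, h2, h3, h4⟩ := hGE
      have hGss : G ⊂ F' := Finset.ssubset_iff_subset_ne.mpr ⟨h3, hne'⟩
      have h5 : rk G < rk F' := hrkstrict G F' h1 hF' hGss
      have h6 : rk F' ≤ rk G + 1 := by rw [← h4]; exact hrkins i G
      have h7 : rk F ≤ rk G := hrkmono F G h2
      exact ⟨h1, h2, by omega⟩
    have hEne : E.Nonempty := by
      obtain ⟨G, hGC, hGmax⟩ := Finset.exists_max_image
        (Finset.univ.filter (fun G => Flat G ∧ F ⊆ G ∧ G ⊆ F' ∧ i ∉ G))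
        Finset.card ⟨F, by simp [hF, hFF', hiF]⟩
      simp only [Finset.mem_filter, Finset.mem_univ, true_and] at hGC
      obtain ⟨h1, h2, h3, h4⟩ := hGC
      have hkey : cl (insert i G) = F' := by
        by_contra hne'
        have hsubF' : cl (insert i G) ⊆ F' := hmin _ _ hF' (Finset.insert_subset hiF' h3)
        obtain ⟨j, hj1, hj2⟩ : ∃ j, j ∈ F' ∧ j ∉ cl (insert i G) := by
          obtain ⟨j, hj⟩ := Finset.exists_of_ssubset
            (Finset.ssubset_iff_subset_ne.mpr ⟨hsubF', hne'⟩)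
          exact ⟨j, hj.1, hj.2⟩
        have hjG : j ∉ G := fun h => hj2 (hsub _ (Finset.mem_insert_of_mem h))
        have hiG' : i ∉ cl (insert j G) := fun h => hj2 (hexch j i G h1 h h4)
        have hmem' : cl (insert j G) ∈ Finset.univ.filter
            (fun G => Flat G ∧ F ⊆ G ∧ G ⊆ F' ∧ i ∉ G) := by
          simp only [Finset.mem_filter, Finset.mem_univ, true_and]
          exact ⟨hflatcl _, h2.trans ((Finset.subset_insert j G).trans (hsub _)),
            hmin _ _ hF' (Finset.insert_subset hj1 h3), hiG'⟩
        have hGG' : G ⊂ cl (insert j G) := by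
          refine Finset.ssubset_iff_subset_ne.mpr
            ⟨(Finset.subset_insert j G).trans (hsub _), fun h => hjG ?_⟩
          rw [h]; exact hsub _ (Finset.mem_insert_self j G)
        exact absurd (Finset.card_lt_card hGG') (not_lt.mpr (hGmax _ hmem'))
      refine ⟨G, ?_⟩
      rw [hE, Finset.mem_erase, Finset.mem_filter]
      refine ⟨fun h => h4 ?_, Finset.mem_univ G, h1, h2, h3, hkey⟩
      rw [h]; exact hiF'
    obtain ⟨e, rfl⟩ : ∃ e, d = e + 1 := ⟨d - 1, by omega⟩
    have hν' : ν F F' = -∑ G ∈ E, ν F G := by linarith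
    have hstep : (-1 : ℤ) ^ (e + 1) * ν F F' = ∑ G ∈ E, (-1 : ℤ) ^ e * ν F G := by
      rw [hν', mul_neg, Finset.mul_sum, ← Finset.sum_neg_distrib]
      exact Finset.sum_congr rfl fun G _ => by ring
    rw [hstep]
    apply Finset.sum_pos
    · intro G hG
      obtain ⟨h1, h2, h3⟩ := hGprop G hG
      exact IH e (by omega) F G hF h1 h2 (by omega)
    · exact hEne

theorem stmt_3 {k : Type*} [Field k] (m n : ℕ) (hm : 1 ≤ m) (hn : 1 ≤ n)
    (a : Fin n → ((Fin m → k) →ₗ[k] k)) (ha : ∀ i, a i ≠ 0)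
    (H : Fin n → Set (Fin m → k)) (hH : ∀ i, H i = {v | a i v = 0})
    (HF : Finset (Fin n) → Set (Fin m → k)) (hHF : ∀ F, HF F = ⋂ i ∈ F, H i)
    (IsFlat : Finset (Fin n) → Prop)
    (hFlat : ∀ F, IsFlat F ↔ ∀ i, (i ∈ F ↔ HF F ⊆ H i))
    (ν : Finset (Fin n) → Finset (Fin n) → ℤ)
    (hν₁ : ∀ F, IsFlat F → ν F F = 1)
    (hν₂ : ∀ F F', IsFlat F → IsFlat F' → F ⊂ F' →
      ∑ G ∈ Finset.univ.filter (fun G => IsFlat G ∧ F ⊆ G ∧ G ⊆ F'), ν F G = 0)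
    (rk : Finset (Fin n) → ℕ)
    (hrk : ∀ F, rk F = Module.finrank k (Submodule.span k (a '' (F : Set (Fin n)))))
    (F F' : Finset (Fin n)) (hF : IsFlat F) (hF' : IsFlat F') (hFF' : F ⊆ F') :
    0 < (-1 : ℤ) ^ (rk F' - rk F) * ν F F' := by
  have hHsub : ∀ (G : Finset (Fin n)) (i : Fin n),
      (HF G ⊆ H i) ↔ a i ∈ Submodule.span k (a '' (G : Set (Fin n))) := by
    intro G i
    rw [dual_span_iff']
    constructor
    · intro h v hv
      have hvG : v ∈ HF G := by
        rw [hHF]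
        simp only [Set.mem_iInter]
        intro j hj
        rw [hH]
        exact hv (a j) ⟨j, hj, rfl⟩
      have := h hvG
      rwa [hH] at this
    · intro h v hv
      rw [hH]
      apply h
      rintro g ⟨j, hj, rfl⟩
      rw [hHF] at hv
      simp only [Set.mem_iInter] at hv
      have := hv j (by exact_mod_cast hj)
      rwa [hH] at this
  have flatIff : ∀ G, IsFlat G ↔
      ∀ i, (i ∈ G ↔ a i ∈ Submodule.span k (a '' (G : Set (Fin n)))) := fun G => by
    rw [hFlat]
    exact forall_congr' fun i => by rw [hHsub]
  set cl : Finset (Fin n) → Finset (Fin n) := fun S =>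
    Finset.univ.filter (fun j => a j ∈ Submodule.span k (a '' (S : Set (Fin n)))) with hcl
  have memcl : ∀ S j, j ∈ cl S ↔ a j ∈ Submodule.span k (a '' (S : Set (Fin n))) := by
    intro S j
    simp [hcl]
  have spmono : ∀ S T : Finset (Fin n), S ⊆ T →
      Submodule.span k (a '' (S : Set (Fin n))) ≤ Submodule.span k (a '' (T : Set (Fin n))) :=
    fun S T h => Submodule.span_mono (Set.image_mono (by exact_mod_cast h))
  have hsub : ∀ S, S ⊆ cl S := fun S j hj =>
    (memcl S j).mpr (Submodule.subset_span ⟨j, by exact_mod_cast hj, rfl⟩)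
  have spcl : ∀ S, Submodule.span k (a '' ((cl S : Finset (Fin n)) : Set (Fin n)))
      = Submodule.span k (a '' (S : Set (Fin n))) := by
    intro S
    apply le_antisymm
    · rw [Submodule.span_le]
      rintro x ⟨j, hj, rfl⟩
      exact (memcl S j).mp (by exact_mod_cast hj)
    · exact spmono _ _ (hsub S)
  have hflatcl : ∀ S, IsFlat (cl S) := by
    intro S
    rw [flatIff]
    intro i
    rw [memcl, spcl]
  have hmin : ∀ S G, IsFlat G → S ⊆ G → cl S ⊆ G := by
    intro S G hG hSG j hj
    rw [memcl] at hj
    exact ((flatIff G).mp hG j).mpr (spmono _ _ hSG hj)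
  have hrkmono : ∀ S T, S ⊆ T → rk S ≤ rk T := by
    intro S T h
    rw [hrk, hrk]
    exact Submodule.finrank_mono (spmono S T h)
  have hrkstrict : ∀ G G', IsFlat G → IsFlat G' → G ⊂ G' → rk G < rk G' := by
    intro G G' hG hG' hss
    obtain ⟨i, hi1, hi2⟩ := Finset.exists_of_ssubset hss
    rw [hrk, hrk]
    apply Submodule.finrank_lt_finrank_of_lt
    refine lt_of_le_of_ne (spmono _ _ hss.subset) fun h => ?_
    have hai : a i ∈ Submodule.span k (a '' (G' : Set (Fin n))) :=
      Submodule.subset_span ⟨i, by exact_mod_cast hi1, rfl⟩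
    rw [← h] at hai
    exact hi2 (((flatIff G).mp hG i).mpr hai)
  have him : ∀ (i : Fin n) (S : Finset (Fin n)),
      a '' ((insert i S : Finset (Fin n)) : Set (Fin n))
        = insert (a i) (a '' (S : Set (Fin n))) := by
    intro i S
    rw [Finset.coe_insert, Set.image_insert_eq]
  have hrkins : ∀ (i : Fin n) (S : Finset (Fin n)), rk (cl (insert i S)) ≤ rk S + 1 := by
    intro i S
    rw [hrk, hrk, spcl, him, Submodule.span_insert]
    have h1 : Module.finrank k (Submodule.span k {a i}) = 1 := finrank_span_singleton (ha i)
    have h2 := Submodule.finrank_add_le_finrank_add_finrank (Submodule.span k {a i})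
      (Submodule.span k (a '' (S : Set (Fin n))))
    omega
  have hexch : ∀ (i j : Fin n) (G : Finset (Fin n)), IsFlat G → j ∈ cl (insert i G) →
      j ∉ G → i ∈ cl (insert j G) := by
    intro i j G hG hj hjG
    rw [memcl, him] at hj ⊢
    apply mem_span_insert_exchange hj
    intro hmem
    exact hjG (((flatIff G).mp hG j).mpr hmem)
  have hle : rk F ≤ rk F' := hrkmono F F' hFF'
  exact moebius_sign IsFlat cl rk ν hsub hflatcl hmin hrkmono hrkstrict hrkins hexch hν₁ hν₂
    (rk F' - rk F) F F' hF hF' hFF' (by omega)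
end

section
/- Let 𝔽_q be a finite field with q elements, ψ : 𝔽_q → ℂ a nontrivial additive character (a homomorphism from (𝔽_q,+) to ℂ^× which is not identically 1), m ≥ 1 an integer, and β₁,…,β_m ∈ 𝔽_q such that Σ_{j=1}^m β_j = 0 and Σ_{j∈J} β_j ≠ 0 for every nonempty proper subset J ⊊ {1,…,m}. Then Σ_{α} ψ(Σ_{j=1}^m α_j β_j) = (−1)^{m−1} (m−1)! · q, where the sum runs over all tuples α = (α₁,…,α_m) ∈ 𝔽_q^m with pairwise distinct coordinates. -/
open scoped Classical

section Aux

variable {K : Type*} [Field K] [Fintype K]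

lemma psi_sum_zero (ψ : K → ℂ) (hψadd : ∀ x y, ψ (x + y) = ψ x * ψ y)
    (hψnt : ∃ x, ψ x ≠ 1) : ∑ a : K, ψ a = 0 := by
  obtain ⟨x, hx⟩ := hψnt
  have h : ∑ a : K, ψ a = (∑ a : K, ψ a) * ψ x := by
    conv_lhs => rw [← Fintype.sum_equiv (Equiv.addRight x)
      (fun a => ψ (a + x)) ψ (fun a => rfl)]
    simp_rw [hψadd]
    rw [Finset.sum_mul]
  have h2 : (∑ a : K, ψ a) * (ψ x - 1) = 0 := by
    rw [mul_sub, mul_one, ← h, sub_self]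
  rcases mul_eq_zero.mp h2 with h3 | h3
  · exact h3
  · exact absurd (by linear_combination h3) hx

lemma psi_mul_sum_zero (ψ : K → ℂ) (hψadd : ∀ x y, ψ (x + y) = ψ x * ψ y)
    (hψnt : ∃ x, ψ x ≠ 1) {b : K} (hb : b ≠ 0) : ∑ a : K, ψ (a * b) = 0 := by
  rw [Fintype.sum_equiv (Equiv.mulRight₀ b hb) (fun a => ψ (a * b)) ψ (fun a => rfl)]
  exact psi_sum_zero ψ hψadd hψnt

lemma aux_main (ψ : K → ℂ) (hψadd : ∀ x y, ψ (x + y) = ψ x * ψ y) (hψ0 : ψ 0 = 1)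
    (hψnt : ∃ x, ψ x ≠ 1) :
    ∀ m : ℕ, 1 ≤ m → ∀ β : Fin m → K, (∑ j, β j = 0) →
    (∀ J : Finset (Fin m), J.Nonempty → J ≠ Finset.univ → ∑ j ∈ J, β j ≠ 0) →
    ∑ α ∈ Finset.univ.filter (fun α : Fin m → K => Function.Injective α),
        ψ (∑ j, α j * β j)
      = (-1 : ℂ) ^ (m - 1) * (Nat.factorial (m - 1) : ℂ) * (Fintype.card K : ℂ) := by
  intro m hm
  induction m, hm using Nat.le_induction with
  | base =>
    intro β hβsum hβ
    have hβ0 : β 0 = 0 := by simpa [Fin.sum_univ_one] using hβsum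
    have hfil : Finset.univ.filter (fun α : Fin 1 → K => Function.Injective α)
        = Finset.univ := by
      apply Finset.filter_true_of_mem
      intro α _
      exact Function.injective_of_subsingleton α
    rw [hfil]
    simp [Fin.sum_univ_one, hβ0, hψ0, Finset.sum_const, Finset.card_univ]
  | succ m hm ih =>
    intro β hβsum hβ
    have h2 : (1 : Fin (m + 1)) ≠ 0 := by
      have : (1 : Fin (m + 1)).val = 1 := by
        simp [Fin.val_one, Nat.mod_eq_of_lt (by omega : 1 < m + 1)]
      intro h
      rw [h] at this
      simp at this
    have hβ0 : β 0 ≠ 0 := by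
      have := hβ {0} ⟨0, Finset.mem_singleton_self 0⟩ (by
        intro h
        have h1 : (1 : Fin (m + 1)) ∈ ({0} : Finset (Fin (m + 1))) := h ▸ Finset.mem_univ 1
        exact h2 (Finset.mem_singleton.mp h1))
      simpa using this
    -- the modified coefficient tuples
    set B : Fin m → Fin m → K :=
      fun i j => β j.succ + if j = i then β 0 else 0 with hB
    have hBsum : ∀ i, ∑ j, B i j = 0 := by
      intro i
      rw [hB]
      rw [Finset.sum_add_distrib, Finset.sum_ite_eq' Finset.univ i (fun _ => β 0)]
      simp only [Finset.mem_univ, if_true]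
      rw [add_comm, ← Fin.sum_univ_succ β]
      exact hβsum
    have hBsub : ∀ i, ∀ J : Finset (Fin m), J.Nonempty → J ≠ Finset.univ →
        ∑ j ∈ J, B i j ≠ 0 := by
      intro i J hJne hJuniv
      obtain ⟨k, hk⟩ : ∃ k, k ∉ J := by
        by_contra h
        push_neg at h
        exact hJuniv (Finset.eq_univ_iff_forall.mpr h)
      have hsumJ : ∑ j ∈ J, B i j
          = (∑ j ∈ J.image Fin.succ, β j) + (if i ∈ J then β 0 else 0) := by
        rw [hB]
        rw [Finset.sum_add_distrib, Finset.sum_ite_eq' J i (fun _ => β 0)]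
        rw [Finset.sum_image (fun a _ b _ h => Fin.succ_injective m h)]
      by_cases hi : i ∈ J
      · rw [hsumJ, if_pos hi]
        have h0img : (0 : Fin (m + 1)) ∉ J.image Fin.succ := by
          simp only [Finset.mem_image]
          rintro ⟨a, _, ha⟩
          exact Fin.succ_ne_zero a ha
        have : (∑ j ∈ J.image Fin.succ, β j) + β 0
            = ∑ j ∈ insert 0 (J.image Fin.succ), β j := by
          rw [Finset.sum_insert h0img, add_comm]
        rw [this]
        apply hβ
        · exact ⟨0, Finset.mem_insert_self 0 _⟩
        · intro h
          have hk' : k.succ ∈ insert (0 : Fin (m + 1)) (J.image Fin.succ) :=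
            h ▸ Finset.mem_univ _
          rcases Finset.mem_insert.mp hk' with h1 | h1
          · exact Fin.succ_ne_zero k h1
          · obtain ⟨a, ha, hak⟩ := Finset.mem_image.mp h1
            exact hk ((Fin.succ_injective m hak) ▸ ha)
      · rw [hsumJ, if_neg hi, add_zero]
        apply hβ
        · obtain ⟨a, ha⟩ := hJne
          exact ⟨a.succ, Finset.mem_image_of_mem _ ha⟩
        · intro h
          have h0 : (0 : Fin (m + 1)) ∈ J.image Fin.succ := h ▸ Finset.mem_univ _
          obtain ⟨a, _, ha⟩ := Finset.mem_image.mp h0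
          exact Fin.succ_ne_zero a ha
    -- inner sum formula for cons
    have hcons : ∀ (a : K) (α' : Fin m → K),
        ∑ j, (Fin.cons a α' : Fin (m + 1) → K) j * β j
          = a * β 0 + ∑ j, α' j * β j.succ := by
      intro a α'
      rw [Fin.sum_univ_succ]
      simp
    -- the total double sum is zero
    have hzero : ∑ α' ∈ Finset.univ.filter
          (fun α' : Fin m → K => Function.Injective α'),
        ∑ a : K, ψ (∑ j, (Fin.cons a α' : Fin (m + 1) → K) j * β j) = 0 := by
      apply Finset.sum_eq_zero
      intro α' _
      have hterm : ∀ a : K, ψ (∑ j, (Fin.cons a α' : Fin (m + 1) → K) j * β j)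
          = ψ (a * β 0) * ψ (∑ j, α' j * β j.succ) := by
        intro a
        rw [hcons, hψadd]
      simp_rw [hterm]
      rw [← Finset.sum_mul, psi_mul_sum_zero ψ hψadd hψnt hβ0, zero_mul]
    -- decompose the inner sum for each injective α'
    have hdecomp : ∀ α' : Fin m → K, Function.Injective α' →
        ∑ a : K, ψ (∑ j, (Fin.cons a α' : Fin (m + 1) → K) j * β j)
        = (∑ a ∈ (Finset.univ.image α')ᶜ,
            ψ (∑ j, (Fin.cons a α' : Fin (m + 1) → K) j * β j))
          + ∑ i : Fin m, ψ (∑ j, α' j * B i j) := by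
      intro α' hinj
      rw [← Finset.sum_compl_add_sum (Finset.univ.image α')]
      congr 1
      rw [Finset.sum_image (fun a _ b _ h => hinj h)]
      apply Finset.sum_congr rfl
      intro i _
      congr 1
      rw [hcons, hB]
      simp_rw [mul_add, mul_ite, mul_zero]
      rw [Finset.sum_add_distrib,
        Finset.sum_ite_eq' Finset.univ i (fun j => α' j * β 0)]
      simp only [Finset.mem_univ, if_true]
      ring
    -- reindexing equivalence
    let e : K × (Fin m → K) ≃ (Fin (m + 1) → K) :=
      { toFun := fun p => Fin.cons p.1 p.2
        invFun := fun α => (α 0, Fin.tail α)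
        left_inv := fun p => by simp
        right_inv := fun α => by simp [Fin.cons_self_tail] }
    have step : ∑ α ∈ Finset.univ.filter
          (fun α : Fin (m + 1) → K => Function.Injective α),
          ψ (∑ j, α j * β j)
        = ∑ p : K × (Fin m → K),
            if Function.Injective (Fin.cons p.1 p.2 : Fin (m + 1) → K) then
              ψ (∑ j, (Fin.cons p.1 p.2 : Fin (m + 1) → K) j * β j) else 0 := by
      rw [Finset.sum_filter]
      exact (Fintype.sum_equiv e _ _ (fun p => rfl)).symm
    -- identify the first part with the target sum
    have hfirst : ∑ α' ∈ Finset.univ.filter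
          (fun α' : Fin m → K => Function.Injective α'),
        ∑ a ∈ (Finset.univ.image α')ᶜ,
          ψ (∑ j, (Fin.cons a α' : Fin (m + 1) → K) j * β j)
        = ∑ α ∈ Finset.univ.filter
            (fun α : Fin (m + 1) → K => Function.Injective α),
          ψ (∑ j, α j * β j) := by
      rw [step]
      simp only [Fintype.sum_prod_type]
      rw [Finset.sum_comm, Finset.sum_filter]
      apply Finset.sum_congr rfl
      intro α' _
      by_cases hinj : Function.Injective α'
      · rw [if_pos hinj, ← Finset.sum_filter]
        apply Finset.sum_congr
        · ext a
          simp only [Finset.mem_filter, Finset.mem_univ, true_and, Finset.mem_compl,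
            Fin.cons_injective_iff, Set.mem_range]
          constructor
          · intro h
            refine ⟨?_, hinj⟩
            rintro ⟨i, hi⟩
            exact h (Finset.mem_image.mpr ⟨i, Finset.mem_univ i, hi⟩)
          · rintro ⟨h1, -⟩ hmem
            obtain ⟨i, -, hi⟩ := Finset.mem_image.mp hmem
            exact h1 ⟨i, hi⟩
        · intro a _
          rfl
      · rw [if_neg hinj]
        symm
        apply Finset.sum_eq_zero
        intro a _
        rw [if_neg]
        rw [Fin.cons_injective_iff]
        rintro ⟨-, h⟩
        exact hinj h
    -- the second part via induction hypothesis
    have hsecond : ∀ i : Fin m,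
        ∑ α' ∈ Finset.univ.filter
          (fun α' : Fin m → K => Function.Injective α'),
          ψ (∑ j, α' j * B i j)
        = (-1 : ℂ) ^ (m - 1) * (Nat.factorial (m - 1) : ℂ) * (Fintype.card K : ℂ) :=
      fun i => ih (B i) (hBsum i) (hBsub i)
    -- put it together
    have hsplit : (∑ α ∈ Finset.univ.filter
            (fun α : Fin (m + 1) → K => Function.Injective α),
            ψ (∑ j, α j * β j))
          + (m : ℂ) * ((-1 : ℂ) ^ (m - 1) * (Nat.factorial (m - 1) : ℂ)
              * (Fintype.card K : ℂ)) = 0 := by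
      rw [← hzero]
      rw [Finset.sum_congr rfl (fun α' hα' =>
        hdecomp α' ((Finset.mem_filter.mp hα').2))]
      rw [Finset.sum_add_distrib, hfirst]
      congr 1
      rw [Finset.sum_comm]
      rw [Finset.sum_congr rfl (fun i _ => hsecond i)]
      rw [Finset.sum_const, Finset.card_univ, Fintype.card_fin, nsmul_eq_mul]
    obtain ⟨k, rfl⟩ := Nat.exists_eq_add_of_le hm
    have e1 : 1 + k + 1 - 1 = k + 1 := by omega
    have e2 : 1 + k - 1 = k := by omega
    have hfac : ((1 + k + 1 - 1).factorial : ℂ)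
        = ((1 + k : ℕ) : ℂ) * ((1 + k - 1).factorial : ℂ) := by
      rw [e1, e2, Nat.factorial_succ]
      push_cast
      ring
    have hpow : (-1 : ℂ) ^ (1 + k + 1 - 1) = -((-1 : ℂ) ^ (1 + k - 1)) := by
      rw [e1, e2, pow_succ]
      ring
    have hS := eq_neg_of_add_eq_zero_left hsplit
    rw [hS, hpow, hfac]
    ring

end Aux

theorem stmt_4 {K : Type*} [Field K] [Fintype K]
    (ψ : K → ℂ) (hψadd : ∀ x y, ψ (x + y) = ψ x * ψ y) (hψ0 : ψ 0 = 1)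
    (hψnt : ∃ x, ψ x ≠ 1)
    (m : ℕ) (hm : 1 ≤ m) (β : Fin m → K)
    (hβsum : ∑ j, β j = 0)
    (hβ : ∀ J : Finset (Fin m), J.Nonempty → J ≠ Finset.univ → ∑ j ∈ J, β j ≠ 0) :
    ∑ α ∈ Finset.univ.filter (fun α : Fin m → K => Function.Injective α),
        ψ (∑ j, α j * β j)
      = (-1 : ℂ) ^ (m - 1) * (Nat.factorial (m - 1) : ℂ) * (Fintype.card K : ℂ) := by
  exact aux_main ψ hψadd hψ0 hψnt m hm β hβsum hβ
end

section
/- Let 𝒜 be an essential central hyperplane arrangement in 𝔽_q^m (essential means span{a₁,…,aₙ} = (𝔽_qᵐ)*), ψ : 𝔽_q → ℂ a nontrivial additive character, and ξ ∈ (𝔽_qᵐ)* a linear functional such that for every flat F ≠ ∞ the restriction of ξ to H_F is not identically zero. For each flat F set H°_F = H_F ∖ ⋃_{i∉F} Hᵢ. Then for every flat F ∈ L(𝒜) one has Σ_{x ∈ H°_F} ψ(ξ(x)) = ν(F,∞), where ∞ = {1,…,n} is the maximal flat. -/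
open scoped Classical

theorem stmt_5 {K : Type*} [Field K] [Fintype K] (m n : ℕ) (hm : 1 ≤ m) (hn : 1 ≤ n)
    (a : Fin n → ((Fin m → K) →ₗ[K] K)) (ha : ∀ i, a i ≠ 0)
    (hess : Submodule.span K (Set.range a) = ⊤)
    (H : Fin n → Set (Fin m → K)) (hH : ∀ i, H i = {v | a i v = 0})
    (HF : Finset (Fin n) → Set (Fin m → K)) (hHF : ∀ F, HF F = ⋂ i ∈ F, H i)
    (IsFlat : Finset (Fin n) → Prop)
    (hFlat : ∀ F, IsFlat F ↔ ∀ i, (i ∈ F ↔ HF F ⊆ H i))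
    (ν : Finset (Fin n) → Finset (Fin n) → ℤ)
    (hν₁ : ∀ F, IsFlat F → ν F F = 1)
    (hν₂ : ∀ F F', IsFlat F → IsFlat F' → F ⊂ F' →
      ∑ G ∈ Finset.univ.filter (fun G => IsFlat G ∧ F ⊆ G ∧ G ⊆ F'), ν F G = 0)
    (ψ : K → ℂ) (hψadd : ∀ x y, ψ (x + y) = ψ x * ψ y) (hψ0 : ψ 0 = 1)
    (hψnt : ∃ x, ψ x ≠ 1)
    (ξ : (Fin m → K) →ₗ[K] K)
    (hξ : ∀ F, IsFlat F → F ≠ Finset.univ → ∃ x ∈ HF F, ξ x ≠ 0)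
    (F : Finset (Fin n)) (hF : IsFlat F) :
    ∑ x ∈ Finset.univ.filter (fun x : Fin m → K => x ∈ HF F ∧ ∀ i ∉ F, x ∉ H i),
        ψ (ξ x)
      = (ν F Finset.univ : ℂ) := by
  classical
  have memH : ∀ (i : Fin n) (x : Fin m → K), x ∈ H i ↔ a i x = 0 := by
    intro i x; rw [hH]; rfl
  have memHF : ∀ (G : Finset (Fin n)) (x : Fin m → K), x ∈ HF G ↔ ∀ i ∈ G, a i x = 0 := by
    intro G x; rw [hHF]; simp [memH]
  set flatOf : (Fin m → K) → Finset (Fin n) :=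
    fun x => Finset.univ.filter (fun i => a i x = 0) with hflatOf
  have mem_flatOf : ∀ (x : Fin m → K) (i : Fin n), i ∈ flatOf x ↔ a i x = 0 := by
    intro x i; simp [hflatOf]
  have memHF' : ∀ (G : Finset (Fin n)) (x : Fin m → K), x ∈ HF G ↔ G ⊆ flatOf x := by
    intro G x
    rw [memHF]
    constructor
    · intro h i hi; rw [mem_flatOf]; exact h i hi
    · intro h i hi; exact (mem_flatOf x i).1 (h hi)
  have self_mem : ∀ x : Fin m → K, x ∈ HF (flatOf x) := by
    intro x; rw [memHF']
  have flatOf_flat : ∀ x : Fin m → K, IsFlat (flatOf x) := by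
    intro x
    rw [hFlat]
    intro i
    constructor
    · intro hi
      rw [hHF]
      intro v hv
      simp only [Set.mem_iInter] at hv
      exact hv i hi
    · intro hsub
      rw [mem_flatOf, ← memH]
      exact hsub (self_mem x)
  have cond_iff : ∀ (G : Finset (Fin n)) (x : Fin m → K),
      (x ∈ HF G ∧ ∀ i ∉ G, x ∉ H i) ↔ flatOf x = G := by
    intro G x
    constructor
    · rintro ⟨h1, h2⟩
      apply Finset.Subset.antisymm
      · intro i hi
        by_contra hiG
        exact h2 i hiG ((memH i x).2 ((mem_flatOf x i).1 hi))
      · exact (memHF' G x).1 h1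
    · rintro rfl
      refine ⟨self_mem x, ?_⟩
      intro i hi hmem
      exact hi ((mem_flatOf x i).2 ((memH i x).1 hmem))
  -- key: essentiality
  have key : ∀ x : Fin m → K, (∀ i, a i x = 0) → x = 0 := by
    intro x hx
    have hall : ∀ φ : (Fin m → K) →ₗ[K] K, φ x = 0 := by
      intro φ
      have hφ : φ ∈ Submodule.span K (Set.range a) := by rw [hess]; exact Submodule.mem_top
      induction hφ using Submodule.span_induction with
      | mem φ hφ => obtain ⟨i, rfl⟩ := hφ; exact hx i
      | zero => simp
      | add φ₁ φ₂ _ _ h1 h2 => simp [h1, h2]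
      | smul c φ _ h => simp [h]
    funext j
    simpa using hall (LinearMap.proj j)
  -- IsFlat univ
  have flat_univ : IsFlat (Finset.univ : Finset (Fin n)) := by
    rw [hFlat]
    intro i
    simp only [Finset.mem_univ, true_iff]
    intro x hx
    rw [memH]
    exact (memHF _ x).1 hx i (Finset.mem_univ i)
  -- definitions of f and S
  set f : Finset (Fin n) → ℂ :=
    fun G => ∑ x ∈ Finset.univ.filter (fun x : Fin m → K => flatOf x = G), ψ (ξ x) with hf
  set S : Finset (Fin n) → ℂ :=
    fun G => ∑ x ∈ Finset.univ.filter (fun x : Fin m → K => G ⊆ flatOf x), ψ (ξ x) with hS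
  set T : Finset (Fin n) → Finset (Finset (Fin n)) :=
    fun G => Finset.univ.filter (fun F' => IsFlat F' ∧ G ⊆ F') with hT
  -- partition
  have S_part : ∀ G : Finset (Fin n), S G = ∑ F' ∈ T G, f F' := by
    intro G
    simp only [hS, hf, hT]
    rw [← Finset.sum_fiberwise_of_maps_to (g := flatOf)
      (t := Finset.univ.filter (fun F' => IsFlat F' ∧ G ⊆ F')) ?hmap]
    case hmap =>
      intro x hx
      simp only [Finset.mem_filter, Finset.mem_univ, true_and] at hx ⊢
      exact ⟨flatOf_flat x, hx⟩
    apply Finset.sum_congr rfl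
    intro F' hF'
    simp only [Finset.mem_filter, Finset.mem_univ, true_and] at hF'
    congr 1
    rw [Finset.filter_filter]
    apply Finset.filter_congr
    intro x _
    constructor
    · rintro ⟨_, h⟩; exact h
    · rintro rfl; exact ⟨hF'.2, rfl⟩
  -- S univ = 1
  have S_univ : S (Finset.univ : Finset (Fin n)) = 1 := by
    simp only [hS]
    have hset : Finset.univ.filter (fun x : Fin m → K => Finset.univ ⊆ flatOf x)
        = {(0 : Fin m → K)} := by
      ext x
      simp only [Finset.mem_filter, Finset.mem_univ, true_and, Finset.mem_singleton]
      constructor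
      · intro h
        exact key x (fun i => (mem_flatOf x i).1 (h (Finset.mem_univ i)))
      · rintro rfl
        intro i _
        rw [mem_flatOf]
        simp
    rw [hset]
    simp [hψ0]
  -- S vanishes on proper flats
  have S_zero : ∀ G : Finset (Fin n), IsFlat G → G ≠ Finset.univ → S G = 0 := by
    intro G hGflat hGne
    obtain ⟨x₀, hx₀mem, hx₀⟩ := hξ G hGflat hGne
    obtain ⟨c, hc⟩ := hψnt
    set y : Fin m → K := (c * (ξ x₀)⁻¹) • x₀ with hy
    have hξy : ξ y = c := by
      rw [hy, map_smul, smul_eq_mul]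
      field_simp
    have hay : ∀ i ∈ G, a i y = 0 := by
      intro i hi
      rw [hy, map_smul]
      rw [memHF] at hx₀mem
      simp [hx₀mem i hi]
    have hmemy : ∀ x : Fin m → K, G ⊆ flatOf x ↔ G ⊆ flatOf (x + y) := by
      intro x
      constructor
      · intro h i hi
        rw [mem_flatOf, map_add, (mem_flatOf x i).1 (h hi), hay i hi, add_zero]
      · intro h i hi
        have := (mem_flatOf _ i).1 (h hi)
        rw [map_add, hay i hi, add_zero] at this
        rw [mem_flatOf]; exact this
    set s : Finset (Fin m → K) := Finset.univ.filter (fun x => G ⊆ flatOf x) with hsdef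
    have hbij : ∑ x ∈ s, ψ (ξ (x + y)) = ∑ x ∈ s, ψ (ξ x) := by
      apply Finset.sum_nbij' (i := fun x => x + y) (j := fun x => x - y)
      · intro x hx
        simp only [hsdef, Finset.mem_filter, Finset.mem_univ, true_and] at hx ⊢
        exact (hmemy x).1 hx
      · intro x hx
        simp only [hsdef, Finset.mem_filter, Finset.mem_univ, true_and] at hx ⊢
        rw [hmemy]
        simpa using hx
      · intro x _; simp
      · intro x _; simp
      · intro x _; rfl
    have hshift : S G = ψ c * S G := by
      have h1 : ∑ x ∈ s, ψ (ξ (x + y)) = ψ c * S G := by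
        simp only [hS, ← hsdef, Finset.mul_sum]
        apply Finset.sum_congr rfl
        intro x _
        rw [map_add, hξy, hψadd, mul_comm]
      have h2 : S G = ∑ x ∈ s, ψ (ξ x) := by simp only [hS, ← hsdef]
      exact h2.trans (hbij.symm.trans h1)
    have h1 : (1 - ψ c) * S G = 0 := by linear_combination hshift
    rcases mul_eq_zero.1 h1 with h | h
    · exact ((hc (by linear_combination -h)).elim)
    · exact h
  -- goal LHS equals f F
  have hLHS : ∑ x ∈ Finset.univ.filter
      (fun x : Fin m → K => x ∈ HF F ∧ ∀ i ∉ F, x ∉ H i), ψ (ξ x) = f F := by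
    simp only [hf]
    congr 1
    apply Finset.filter_congr
    intro x _
    exact cond_iff F x
  rw [hLHS]
  -- the double sum
  have hA1 : ∑ G ∈ T F, (ν F G : ℂ) * S G = (ν F Finset.univ : ℂ) := by
    rw [Finset.sum_eq_single Finset.univ]
    · rw [S_univ, mul_one]
    · intro G hG hGne
      simp only [hT, Finset.mem_filter, Finset.mem_univ, true_and] at hG
      rw [S_zero G hG.1 hGne, mul_zero]
    · intro h
      exfalso
      apply h
      simp only [hT, Finset.mem_filter, Finset.mem_univ, true_and]
      exact ⟨flat_univ, Finset.subset_univ F⟩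
  have hA2 : ∑ G ∈ T F, (ν F G : ℂ) * S G = f F := by
    have step1 : ∑ G ∈ T F, (ν F G : ℂ) * S G
        = ∑ G ∈ T F, ∑ F' ∈ T G, (ν F G : ℂ) * f F' := by
      apply Finset.sum_congr rfl
      intro G _
      rw [S_part G, Finset.mul_sum]
    rw [step1]
    rw [Finset.sum_comm' (t' := T F)
      (s' := fun F' => Finset.univ.filter (fun G => IsFlat G ∧ F ⊆ G ∧ G ⊆ F'))]
    · have step2 : ∀ F' ∈ T F,
          ∑ G ∈ Finset.univ.filter (fun G => IsFlat G ∧ F ⊆ G ∧ G ⊆ F'),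
            (ν F G : ℂ) * f F' = (if F' = F then 1 else 0) * f F' := by
        intro F' hF'
        simp only [hT, Finset.mem_filter, Finset.mem_univ, true_and] at hF'
        rw [← Finset.sum_mul]
        congr 1
        by_cases hEq : F' = F
        · have hone : Finset.univ.filter (fun G => IsFlat G ∧ F ⊆ G ∧ G ⊆ F') = {F} := by
            ext G
            simp only [Finset.mem_filter, Finset.mem_univ, true_and, Finset.mem_singleton, hEq]
            constructor
            · rintro ⟨_, h1, h2⟩; exact Finset.Subset.antisymm h2 h1
            · rintro rfl; exact ⟨hF, Finset.Subset.refl _, Finset.Subset.refl _⟩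
          rw [hone, Finset.sum_singleton, if_pos hEq, hν₁ F hF]
          norm_num
        · rw [if_neg hEq]
          have hss : F ⊂ F' := Finset.ssubset_iff_subset_ne.2 ⟨hF'.2, fun h => hEq h.symm⟩
          have := hν₂ F F' hF hF'.1 hss
          push_cast [← this]
          norm_cast
      rw [Finset.sum_congr rfl step2]
      rw [Finset.sum_eq_single F]
      · rw [if_pos rfl, one_mul]
      · intro F' _ hne; rw [if_neg hne, zero_mul]
      · intro h
        exfalso
        apply h
        simp only [hT, Finset.mem_filter, Finset.mem_univ, true_and]
        exact ⟨hF, Finset.Subset.refl F⟩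
    · intro G F'
      simp only [hT, Finset.mem_filter, Finset.mem_univ, true_and]
      constructor
      · rintro ⟨⟨h1, h2⟩, h3, h4⟩
        exact ⟨⟨h1, h2, h4⟩, h3, Finset.Subset.trans h2 h4⟩
      · rintro ⟨⟨h1, h2, h3⟩, h4, h5⟩
        exact ⟨⟨h1, h2⟩, h4, h3⟩
  rw [← hA2, hA1]
end

section
/- Let p be a prime and α ≥ 1 an integer, and work in the finite ring ℤ/p^αℤ. Then the number of pairs (z,w) ∈ (ℤ/p^αℤ)² with z·w = 0 equals (α+1)p^α − α p^{α−1}; and for λ ∈ ℤ/p^αℤ of the form λ = p^β u with u a unit and 0 ≤ β ≤ α−1, the number of pairs (z,w) ∈ (ℤ/p^αℤ)² with z·w = λ equals (β+1)(p−1)p^{α−1}. -/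
open Finset

lemma aux_count_dvd (d N : ℕ) (hd : 0 < d) (hdN : d ∣ N) :
    ((Finset.range N).filter (fun m => d ∣ m)).card = N / d := by
  have : (Finset.range N).filter (fun m => d ∣ m) = (Finset.range (N / d)).image (fun k => d * k) := by
    ext m
    simp only [Finset.mem_filter, Finset.mem_range, Finset.mem_image]
    constructor
    · rintro ⟨hm, k, rfl⟩
      exact ⟨k, Nat.lt_div_iff_mul_lt' hdN k |>.mpr (by omega), rfl⟩
    · rintro ⟨k, hk, rfl⟩
      refine ⟨?_, ⟨k, rfl⟩⟩
      calc d * k < d * (N / d) := by exact (Nat.mul_lt_mul_left hd).mpr hk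
        _ = N := Nat.mul_div_cancel' hdN
  rw [this, Finset.card_image_of_injective _ (mul_right_injective₀ hd.ne')]
  exact Finset.card_range _

lemma aux_ker_card (p α i : ℕ) (hp : p.Prime) (hi : i ≤ α) :
    Nat.card {w : ZMod (p ^ α) // (p : ZMod (p ^ α)) ^ i * w = 0} = p ^ i := by
  haveI : NeZero (p ^ α) := ⟨pow_ne_zero _ hp.pos.ne'⟩
  haveI : NeZero (p ^ i) := ⟨pow_ne_zero _ hp.pos.ne'⟩
  have key : ∀ w : ZMod (p ^ α), ((p : ZMod (p ^ α)) ^ i * w = 0) ↔ p ^ (α - i) ∣ w.val := by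
    intro w
    have h1 : (p : ZMod (p ^ α)) ^ i * w = ((p ^ i * w.val : ℕ) : ZMod (p ^ α)) := by
      push_cast [ZMod.natCast_val, ZMod.cast_id]
      ring
    rw [h1, ZMod.natCast_eq_zero_iff]
    constructor
    · rintro ⟨k, hk⟩
      have hk2 : p ^ i * w.val = p ^ i * (p ^ (α - i) * k) := by
        rw [hk, ← mul_assoc, ← pow_add, Nat.add_sub_cancel' hi]
      exact ⟨k, Nat.eq_of_mul_eq_mul_left (pow_pos hp.pos _) hk2⟩
    · rintro ⟨k, hk⟩
      exact ⟨k, by rw [hk, ← mul_assoc, ← pow_add, Nat.add_sub_cancel' hi]⟩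
  have e : ZMod (p ^ i) ≃ {w : ZMod (p ^ α) // (p : ZMod (p ^ α)) ^ i * w = 0} := by
    refine Equiv.ofBijective (fun t => ⟨((p ^ (α - i) * t.val : ℕ) : ZMod (p ^ α)), ?_⟩) ⟨?_, ?_⟩
    · rw [key, ZMod.val_cast_of_lt]
      · exact ⟨t.val, rfl⟩
      · calc p ^ (α - i) * t.val < p ^ (α - i) * p ^ i :=
            (Nat.mul_lt_mul_left (pow_pos hp.pos _)).mpr (ZMod.val_lt t)
          _ = p ^ α := by rw [← pow_add, Nat.sub_add_cancel hi]
    · intro t t' h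
      simp only [Subtype.mk.injEq] at h
      have hlt : ∀ s : ZMod (p ^ i), p ^ (α - i) * s.val < p ^ α := by
        intro s
        calc p ^ (α - i) * s.val < p ^ (α - i) * p ^ i :=
            (Nat.mul_lt_mul_left (pow_pos hp.pos _)).mpr (ZMod.val_lt s)
          _ = p ^ α := by rw [← pow_add, Nat.sub_add_cancel hi]
      have := congrArg ZMod.val h
      rw [ZMod.val_cast_of_lt (hlt t), ZMod.val_cast_of_lt (hlt t')] at this
      have hv : t.val = t'.val := Nat.eq_of_mul_eq_mul_left (pow_pos hp.pos _) this
      exact ZMod.val_injective _ hv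
    · rintro ⟨w, hw⟩
      rw [key] at hw
      obtain ⟨k, hk⟩ := hw
      have hklt : k < p ^ i := by
        by_contra hge
        push_neg at hge
        have : p ^ α ≤ w.val := by
          calc p ^ α = p ^ (α - i) * p ^ i := by rw [← pow_add, Nat.sub_add_cancel hi]
            _ ≤ p ^ (α - i) * k := Nat.mul_le_mul_left _ hge
            _ = w.val := hk.symm
        exact absurd (ZMod.val_lt w) (by omega)
      refine ⟨(k : ZMod (p ^ i)), ?_⟩
      simp only [Subtype.mk.injEq]
      rw [ZMod.val_cast_of_lt hklt, ← hk, ZMod.natCast_val, ZMod.cast_id]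
  rw [Nat.card_congr e.symm, Nat.card_zmod]

lemma aux_fiber_eq (n : ℕ) (z lam w₀ : ZMod n) (h : z * w₀ = lam) :
    Nat.card {w : ZMod n // z * w = lam} = Nat.card {w : ZMod n // z * w = 0} := by
  refine Nat.card_congr ⟨fun w => ⟨w.1 - w₀, by rw [mul_sub, w.2, h, sub_self]⟩,
    fun w => ⟨w.1 + w₀, by rw [mul_add, w.2, h, zero_add]⟩, ?_, ?_⟩
  · rintro ⟨w, hw⟩; simp
  · rintro ⟨w, hw⟩; simp

lemma aux_unit_inv (n : ℕ) (z u lam : ZMod n) (hu : IsUnit u) :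
    Nat.card {w : ZMod n // (z * u) * w = lam} = Nat.card {w : ZMod n // z * w = lam} := by
  obtain ⟨v, rfl⟩ := hu
  refine Nat.card_congr ⟨fun w => ⟨(v : ZMod n) * w.1, by rw [← mul_assoc]; exact w.2⟩,
    fun w => ⟨((v⁻¹ : (ZMod n)ˣ) : ZMod n) * w.1, ?_⟩, ?_, ?_⟩
  · rw [show (z * v) * (((v⁻¹ : (ZMod n)ˣ) : ZMod n) * w.1)
        = z * ((v * ((v⁻¹ : (ZMod n)ˣ) : ZMod n)) * w.1) by ring,
      Units.mul_inv, one_mul]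
    exact w.2
  · rintro ⟨w, hw⟩
    simp
  · rintro ⟨w, hw⟩
    simp

lemma aux_ne_zero (p α β : ℕ) (hp : p.Prime) (hβ : β < α) (u : ZMod (p ^ α)) (hu : IsUnit u) :
    (p : ZMod (p ^ α)) ^ β * u ≠ 0 := by
  intro h
  obtain ⟨v, rfl⟩ := hu
  have h2 : (p : ZMod (p ^ α)) ^ β = 0 := by
    have := congrArg (· * ((v⁻¹ : (ZMod (p ^ α))ˣ) : ZMod (p ^ α))) h
    simpa [mul_assoc] using this
  rw [show ((p : ZMod (p ^ α)) ^ β) = ((p ^ β : ℕ) : ZMod (p ^ α)) by push_cast; ring,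
    ZMod.natCast_eq_zero_iff] at h2
  have := (Nat.pow_dvd_pow_iff_le_right hp.one_lt).mp h2
  omega

lemma aux_empty (p α β : ℕ) (hp : p.Prime) (hβ : β < α) (u z : ZMod (p ^ α)) (hu : IsUnit u)
    (hz : (p : ZMod (p ^ α)) ^ (β + 1) ∣ z) :
    Nat.card {w : ZMod (p ^ α) // z * w = (p : ZMod (p ^ α)) ^ β * u} = 0 := by
  rw [Nat.card_eq_zero]
  left
  constructor
  rintro ⟨w, hw⟩
  obtain ⟨y, rfl⟩ := hz
  have hpα : (p : ZMod (p ^ α)) ^ α = 0 := by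
    rw [show ((p : ZMod (p ^ α)) ^ α) = ((p ^ α : ℕ) : ZMod (p ^ α)) by push_cast; ring,
      ZMod.natCast_self]
  have := congrArg (fun x => (p : ZMod (p ^ α)) ^ (α - 1 - β) * x) hw
  rw [show (p : ZMod (p ^ α)) ^ (α - 1 - β) * ((p : ZMod (p ^ α)) ^ (β + 1) * y * w)
      = ((p : ZMod (p ^ α)) ^ (α - 1 - β) * (p : ZMod (p ^ α)) ^ (β + 1)) * (y * w) by ring,
    ← pow_add, show α - 1 - β + (β + 1) = α by omega, hpα, zero_mul,
    show (p : ZMod (p ^ α)) ^ (α - 1 - β) * ((p : ZMod (p ^ α)) ^ β * u)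
      = ((p : ZMod (p ^ α)) ^ (α - 1 - β) * (p : ZMod (p ^ α)) ^ β) * u by ring,
    ← pow_add, show α - 1 - β + β = α - 1 by omega] at this
  exact aux_ne_zero p α (α - 1) hp (by omega) u hu this.symm

noncomputable def auxV (p α : ℕ) (z : ZMod (p ^ α)) : ℕ :=
  if z = 0 then α else padicValNat p z.val

lemma aux_rep (p α : ℕ) (hp : p.Prime) (z : ZMod (p ^ α)) (hz : z ≠ 0) :
    auxV p α z < α ∧ ∃ u : ZMod (p ^ α), IsUnit u ∧ z = (p : ZMod (p ^ α)) ^ (auxV p α z) * u := by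
  haveI : NeZero (p ^ α) := ⟨pow_ne_zero _ hp.pos.ne'⟩
  haveI : Fact p.Prime := ⟨hp⟩
  have hval : z.val ≠ 0 := fun h => hz ((ZMod.val_eq_zero z).mp h)
  set i := padicValNat p z.val with hi
  have hvz : auxV p α z = i := by simp [auxV, hz, hi]
  have hdvd : p ^ i ∣ z.val := pow_padicValNat_dvd
  obtain ⟨m, hm⟩ := hdvd
  have hpm : ¬ p ∣ m := by
    intro ⟨k, hk⟩
    have : p ^ (i + 1) ∣ z.val := ⟨k, by rw [hm, hk]; ring⟩
    rw [padicValNat_dvd_iff] at this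
    omega
  have hiα : i < α := by
    have h1 : p ^ i ≤ z.val := Nat.le_of_dvd (Nat.pos_of_ne_zero hval) ⟨m, hm⟩
    have h2 : z.val < p ^ α := ZMod.val_lt z
    exact (Nat.pow_lt_pow_iff_right hp.one_lt).mp (lt_of_le_of_lt h1 h2)
  refine ⟨by omega, (m : ZMod (p ^ α)), ?_, ?_⟩
  · rw [ZMod.isUnit_iff_coprime]
    exact Nat.Coprime.pow_right α (Nat.coprime_comm.mp (hp.coprime_iff_not_dvd.mpr hpm))
  · rw [hvz]
    conv_lhs => rw [← ZMod.natCast_zmod_val z]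
    rw [hm]
    push_cast
    ring

lemma aux_class_card (p α i : ℕ) [NeZero (p ^ α)] (hp : p.Prime) (hi : i < α) :
    (Finset.univ.filter (fun z : ZMod (p ^ α) => auxV p α z = i)).card
      = p ^ (α - i) - p ^ (α - i - 1) := by
  haveI : Fact p.Prime := ⟨hp⟩
  have step1 : (Finset.univ.filter (fun z : ZMod (p ^ α) => auxV p α z = i)).card
      = ((Finset.range (p ^ α)).filter (fun m => p ^ i ∣ m ∧ ¬ p ^ (i + 1) ∣ m)).card := by
    apply Finset.card_bij (fun z _ => z.val)
    · intro z hz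
      simp only [Finset.mem_filter, Finset.mem_univ, true_and] at hz
      have hz0 : z ≠ 0 := by
        intro h
        rw [h] at hz
        simp [auxV] at hz
        omega
      have hval : z.val ≠ 0 := fun h => hz0 ((ZMod.val_eq_zero z).mp h)
      simp only [auxV, hz0, if_false] at hz
      simp only [Finset.mem_filter, Finset.mem_range]
      refine ⟨ZMod.val_lt z, ?_, ?_⟩
      · rw [padicValNat_dvd_iff]; omega
      · rw [padicValNat_dvd_iff]; omega
    · intro z _ z' _ h
      exact ZMod.val_injective _ h
    · intro m hm
      simp only [Finset.mem_filter, Finset.mem_range] at hm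
      obtain ⟨hmlt, hd1, hd2⟩ := hm
      have hm0 : m ≠ 0 := by rintro rfl; exact hd2 (dvd_zero _)
      refine ⟨(m : ZMod (p ^ α)), ?_, ZMod.val_cast_of_lt hmlt⟩
      simp only [Finset.mem_filter, Finset.mem_univ, true_and]
      have hz0 : (m : ZMod (p ^ α)) ≠ 0 := by
        rw [Ne, ZMod.natCast_eq_zero_iff]
        intro hdd
        exact hm0 (Nat.eq_zero_of_dvd_of_lt hdd hmlt)
      simp only [auxV, hz0, if_false, ZMod.val_cast_of_lt hmlt]
      rw [padicValNat_dvd_iff] at hd1 hd2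
      omega
  rw [step1]
  have hsub : (Finset.range (p ^ α)).filter (fun m => p ^ (i+1) ∣ m)
      ⊆ (Finset.range (p ^ α)).filter (fun m => p ^ i ∣ m) := by
    intro m hm
    simp only [Finset.mem_filter] at *
    exact ⟨hm.1, dvd_trans (pow_dvd_pow p (Nat.le_succ i)) hm.2⟩
  have hsd : (Finset.range (p ^ α)).filter (fun m => p ^ i ∣ m ∧ ¬ p ^ (i + 1) ∣ m)
      = (Finset.range (p ^ α)).filter (fun m => p ^ i ∣ m)
        \ (Finset.range (p ^ α)).filter (fun m => p ^ (i+1) ∣ m) := by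
    ext m
    simp only [Finset.mem_filter, Finset.mem_sdiff, Finset.mem_range]
    tauto
  rw [hsd, Finset.card_sdiff_of_subset hsub,
    aux_count_dvd (p ^ i) (p ^ α) (pow_pos hp.pos _) (pow_dvd_pow p (by omega)),
    aux_count_dvd (p ^ (i+1)) (p ^ α) (pow_pos hp.pos _) (pow_dvd_pow p (by omega)),
    Nat.pow_div (by omega) hp.pos, Nat.pow_div (by omega) hp.pos]
  rfl

lemma aux_class_top (p α : ℕ) [NeZero (p ^ α)] (hp : p.Prime) :
    (Finset.univ.filter (fun z : ZMod (p ^ α) => auxV p α z = α)) = {0} := by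
  ext z
  simp only [Finset.mem_filter, Finset.mem_univ, true_and, Finset.mem_singleton]
  constructor
  · intro h
    by_contra hz
    have := (aux_rep p α hp z hz).1
    omega
  · rintro rfl
    simp [auxV]

lemma aux_main_s8 (p α : ℕ) [NeZero (p ^ α)] (hp : p.Prime) (lam : ZMod (p ^ α)) :
    Nat.card {zw : ZMod (p ^ α) × ZMod (p ^ α) // zw.1 * zw.2 = lam}
      = ∑ i ∈ Finset.range (α + 1), ∑ z ∈ Finset.univ.filter (fun z : ZMod (p ^ α) => auxV p α z = i),
          Nat.card {w : ZMod (p ^ α) // z * w = lam} := by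
  haveI : Fact p.Prime := ⟨hp⟩
  classical
  have e := Equiv.subtypeProdEquivSigmaSubtype (fun z w : ZMod (p ^ α) => z * w = lam)
  rw [Nat.card_congr e, Nat.card_eq_fintype_card, Fintype.card_sigma]
  have : ∀ z : ZMod (p ^ α), Fintype.card {w : ZMod (p ^ α) // z * w = lam}
      = Nat.card {w : ZMod (p ^ α) // z * w = lam} := fun z => (Nat.card_eq_fintype_card).symm
  simp_rw [this]
  rw [← Finset.sum_fiberwise_of_maps_to (g := auxV p α) (t := Finset.range (α + 1))]
  intro z _
  simp only [Finset.mem_range]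
  by_cases hz : z = 0
  · simp [auxV, hz]
  · have := (aux_rep p α hp z hz).1
    omega

lemma aux_inner (p α i : ℕ) [NeZero (p ^ α)] (hp : p.Prime) (hi : i < α) (lam : ZMod (p ^ α)) :
    ∑ z ∈ Finset.univ.filter (fun z : ZMod (p ^ α) => auxV p α z = i),
        Nat.card {w : ZMod (p ^ α) // z * w = lam}
      = (p ^ (α - i) - p ^ (α - i - 1)) * Nat.card {w : ZMod (p ^ α) // (p : ZMod (p ^ α)) ^ i * w = lam} := by
  rw [Finset.sum_congr rfl (fun z hz => ?_), Finset.sum_const, smul_eq_mul,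
    aux_class_card p α i hp hi]
  simp only [Finset.mem_filter, Finset.mem_univ, true_and] at hz
  have hz0 : z ≠ 0 := by
    intro h
    rw [h] at hz
    simp [auxV] at hz
    omega
  obtain ⟨_, u, hu, hrep⟩ := aux_rep p α hp z hz0
  rw [hz] at hrep
  rw [hrep]
  exact aux_unit_inv _ _ _ _ hu

theorem stmt_8 (p : ℕ) (hp : p.Prime) (α : ℕ) (hα : 1 ≤ α) :
    (Nat.card {zw : ZMod (p ^ α) × ZMod (p ^ α) // zw.1 * zw.2 = 0} : ℤ)
        = (α + 1) * (p : ℤ) ^ α - α * (p : ℤ) ^ (α - 1) ∧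
    ∀ (lam : ZMod (p ^ α)) (β : ℕ) (u : ZMod (p ^ α)), IsUnit u → β ≤ α - 1 →
      lam = (p : ZMod (p ^ α)) ^ β * u →
      (Nat.card {zw : ZMod (p ^ α) × ZMod (p ^ α) // zw.1 * zw.2 = lam} : ℤ)
        = (β + 1) * ((p : ℤ) - 1) * (p : ℤ) ^ (α - 1) := by
  haveI : NeZero (p ^ α) := ⟨pow_ne_zero _ hp.pos.ne'⟩
  have hterm : ∀ i, i < α → ((p ^ (α - i) - p ^ (α - i - 1) : ℕ) : ℤ) * (p : ℤ) ^ i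
      = (p : ℤ) ^ α - (p : ℤ) ^ (α - 1) := by
    intro i hi
    have hle : p ^ (α - i - 1) ≤ p ^ (α - i) := Nat.pow_le_pow_right hp.pos (by omega)
    rw [Nat.cast_sub hle]
    push_cast
    rw [sub_mul, ← pow_add, ← pow_add, show α - i + i = α by omega,
      show α - i - 1 + i = α - 1 by omega]
  constructor
  · rw [aux_main_s8 p α hp 0, Finset.sum_range_succ, aux_class_top p α hp]
    have hztop : ∑ z ∈ ({0} : Finset (ZMod (p ^ α))), Nat.card {w : ZMod (p ^ α) // z * w = 0}
        = p ^ α := by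
      rw [Finset.sum_singleton]
      have : Nat.card {w : ZMod (p ^ α) // (0 : ZMod (p ^ α)) * w = 0} = Nat.card (ZMod (p ^ α)) :=
        Nat.card_congr (Equiv.subtypeUnivEquiv (fun w => by rw [zero_mul]))
      rw [this, Nat.card_zmod]
    rw [hztop]
    have hin : ∀ i ∈ Finset.range α,
        ∑ z ∈ Finset.univ.filter (fun z : ZMod (p ^ α) => auxV p α z = i),
          Nat.card {w : ZMod (p ^ α) // z * w = (0 : ZMod (p ^ α))}
        = (p ^ (α - i) - p ^ (α - i - 1)) * p ^ i := by
      intro i hi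
      simp only [Finset.mem_range] at hi
      rw [aux_inner p α i hp hi 0, aux_ker_card p α i hp (by omega)]
    rw [Finset.sum_congr rfl hin]
    push_cast [Nat.cast_sum]
    rw [Finset.sum_congr rfl (fun i hi => hterm i (Finset.mem_range.mp hi)),
      Finset.sum_const, Finset.card_range, nsmul_eq_mul]
    ring
  · intro lam β u hu hβ hlam
    have hβα : β < α := by omega
    rw [hlam, aux_main_s8 p α hp _]
    have hsplit : ∑ i ∈ Finset.range (α + 1),
          ∑ z ∈ Finset.univ.filter (fun z : ZMod (p ^ α) => auxV p α z = i),
            Nat.card {w : ZMod (p ^ α) // z * w = (p : ZMod (p ^ α)) ^ β * u}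
        = ∑ i ∈ Finset.range (β + 1),
          ∑ z ∈ Finset.univ.filter (fun z : ZMod (p ^ α) => auxV p α z = i),
            Nat.card {w : ZMod (p ^ α) // z * w = (p : ZMod (p ^ α)) ^ β * u} := by
      refine (Finset.sum_subset (Finset.range_subset_range.mpr (by omega)) ?_).symm
      intro i hi hni
      simp only [Finset.mem_range] at hi hni
      apply Finset.sum_eq_zero
      intro z hz
      simp only [Finset.mem_filter, Finset.mem_univ, true_and] at hz
      apply aux_empty p α β hp hβα u z hu
      by_cases hz0 : z = 0
      · rw [hz0]; exact dvd_zero _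
      · obtain ⟨hlt, u', hu', hrep⟩ := aux_rep p α hp z hz0
        rw [hz] at hrep hlt
        refine ⟨(p : ZMod (p ^ α)) ^ (i - (β + 1)) * u', ?_⟩
        rw [hrep, ← mul_assoc, ← pow_add, show β + 1 + (i - (β + 1)) = i by omega]
    rw [hsplit]
    have hin : ∀ i ∈ Finset.range (β + 1),
        ∑ z ∈ Finset.univ.filter (fun z : ZMod (p ^ α) => auxV p α z = i),
          Nat.card {w : ZMod (p ^ α) // z * w = (p : ZMod (p ^ α)) ^ β * u}
        = (p ^ (α - i) - p ^ (α - i - 1)) * p ^ i := by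
      intro i hi
      simp only [Finset.mem_range] at hi
      have hiα : i < α := by omega
      rw [aux_inner p α i hp hiα _]
      have hfib : Nat.card {w : ZMod (p ^ α) // (p : ZMod (p ^ α)) ^ i * w = (p : ZMod (p ^ α)) ^ β * u}
          = Nat.card {w : ZMod (p ^ α) // (p : ZMod (p ^ α)) ^ i * w = 0} := by
        apply aux_fiber_eq _ _ _ ((p : ZMod (p ^ α)) ^ (β - i) * u)
        rw [← mul_assoc, ← pow_add, show i + (β - i) = β by omega]
      rw [hfib, aux_ker_card p α i hp (by omega)]
    rw [Finset.sum_congr rfl hin]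
    push_cast [Nat.cast_sum]
    rw [Finset.sum_congr rfl (fun i hi => hterm i (by simp only [Finset.mem_range] at hi; omega)),
      Finset.sum_const, Finset.card_range, nsmul_eq_mul]
    have hpα : (p : ℤ) ^ α = (p : ℤ) ^ (α - 1) * p := by
      rw [← pow_succ]
      congr 1
      omega
    rw [hpα]
    push_cast
    ring
end

section
/- Let p be a prime and m ≥ 1 an integer. For each α ≥ 1 let B_α denote the number of tuples (x,y) ∈ (ℤ/p^αℤ)^{m+1} × (ℤ/p^αℤ)^{m+1} satisfying x_j y_j = x_{j+1} y_{j+1} for all 1 ≤ j ≤ m. Then the sequence p^{−α(m+2)} B_α converges as α → ∞, with limit (1 − p^{−1})^{m+2} · Σ_{β=0}^∞ (β+1)^{m+1} p^{−β} (a convergent series of real numbers). -/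
open Filter Finset

section Aux

lemma multiples_image (n d : ℕ) (hd : 0 < d) (hdn : d ∣ n) :
    (Finset.range n).filter (fun j => d ∣ j) = (Finset.range (n / d)).image (fun k => d * k) := by
  ext j
  simp only [mem_filter, mem_range, mem_image]
  constructor
  · rintro ⟨hj, k, rfl⟩
    exact ⟨k, Nat.lt_div_iff_mul_lt' hdn _ |>.mpr (by omega), rfl⟩
  · rintro ⟨k, hk, rfl⟩
    rw [Nat.lt_div_iff_mul_lt' hdn] at hk
    exact ⟨by omega, k, rfl⟩

lemma card_multiples_range (n d : ℕ) (hd : 0 < d) (hdn : d ∣ n) :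
    ((Finset.range n).filter (fun j => d ∣ j)).card = n / d := by
  rw [multiples_image n d hd hdn,
    Finset.card_image_of_injective _ (fun a b h => by simpa [Nat.mul_left_cancel_iff hd] using h),
    Finset.card_range]

lemma card_dvd_val (n d : ℕ) (hn : 0 < n) (hd : 0 < d) (hdn : d ∣ n) :
    Nat.card {b : ZMod n // d ∣ b.val} = n / d := by
  haveI : NeZero n := ⟨hn.ne'⟩
  rw [← card_multiples_range n d hd hdn, ← Fintype.card_coe, ← Nat.card_eq_fintype_card]
  apply Nat.card_congr
  refine ⟨fun b => ⟨b.1.val, by simp [mem_filter, b.2, ZMod.val_lt]⟩,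
    fun j => ⟨((j : ℕ) : ZMod n), ?_⟩, fun b => ?_, fun j => ?_⟩
  · have hj := j.2
    simp only [mem_filter, mem_range] at hj
    rw [ZMod.val_cast_of_lt hj.1]
    exact hj.2
  · simp [ZMod.natCast_rightInverse b.1]
  · have hj := j.2
    simp only [mem_filter, mem_range] at hj
    exact Subtype.ext (by simp [ZMod.val_cast_of_lt hj.1])

lemma mul_eq_zero_iff' (n : ℕ) (hn : 0 < n) (a b : ZMod n) :
    a * b = 0 ↔ (n / Nat.gcd a.val n) ∣ b.val := by
  haveI : NeZero n := ⟨hn.ne'⟩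
  set g := Nat.gcd a.val n with hg
  have hg0 : 0 < g := Nat.gcd_pos_of_pos_right _ hn
  obtain ⟨a', ha'⟩ := Nat.gcd_dvd_left a.val n
  obtain ⟨n', hn'⟩ := Nat.gcd_dvd_right a.val n
  rw [← hg] at ha' hn'
  have hcop : Nat.Coprime a' n' := by
    have := Nat.coprime_div_gcd_div_gcd (m := a.val) (n := n) hg0
    rwa [← hg, ha', hn', Nat.mul_div_cancel_left _ hg0, Nat.mul_div_cancel_left _ hg0] at this
  have h1 : a * b = 0 ↔ n ∣ a.val * b.val := by
    rw [← ZMod.natCast_eq_zero_iff]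
    push_cast
    rw [ZMod.natCast_val, ZMod.natCast_val, ZMod.cast_id, ZMod.cast_id]
  have hng : n / g = n' := by rw [hn', Nat.mul_div_cancel_left _ hg0]
  rw [h1, hng]
  constructor
  · intro h
    have h2 : n' ∣ a' * b.val := by
      rcases h with ⟨t, ht⟩
      refine ⟨t, ?_⟩
      have h3 : g * (a' * b.val) = g * (n' * t) := by
        rw [← mul_assoc, ← ha', ht, hn', mul_assoc]
      exact Nat.eq_of_mul_eq_mul_left hg0 h3
    exact hcop.symm.dvd_of_dvd_mul_left h2
  · rintro ⟨t, ht⟩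
    refine ⟨a' * t, ?_⟩
    calc a.val * b.val = a.val * (n' * t) := by rw [ht]
    _ = (g * a') * (n' * t) := by rw [← ha']
    _ = (g * n') * (a' * t) := by ring
    _ = n * (a' * t) := by rw [← hn']

lemma fiber_card (n : ℕ) (hn : 0 < n) (a c : ZMod n) :
    Nat.card {b : ZMod n // a * b = c} =
      if Nat.gcd a.val n ∣ c.val then Nat.gcd a.val n else 0 := by
  haveI : NeZero n := ⟨hn.ne'⟩
  set g := Nat.gcd a.val n with hg
  have hg0 : 0 < g := Nat.gcd_pos_of_pos_right _ hn
  have hgn : g ∣ n := Nat.gcd_dvd_right _ _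
  split_ifs with hdvd
  · obtain ⟨e, he⟩ := hdvd
    have key : ((a.val * (Nat.gcdA a.val n * e) - c.val : ℤ) : ZMod n) = 0 := by
      rw [ZMod.intCast_zmod_eq_zero_iff_dvd]
      refine ⟨-(Nat.gcdB a.val n) * e, ?_⟩
      have hbez := Nat.gcd_eq_gcd_ab a.val n
      have hce : (c.val : ℤ) = (g : ℤ) * e := by exact_mod_cast he
      rw [hce]
      linear_combination (-(e : ℤ)) * hbez
    set b0 : ZMod n := ((Nat.gcdA a.val n * e : ℤ) : ZMod n) with hb0
    have hab0 : a * b0 = c := by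
      have := key
      push_cast at this
      rw [ZMod.natCast_val, ZMod.natCast_val, ZMod.cast_id, ZMod.cast_id, sub_eq_zero] at this
      rw [hb0]
      push_cast
      exact this
    have e1 : {b : ZMod n // a * b = c} ≃ {b : ZMod n // a * b = 0} :=
      ⟨fun b => ⟨b.1 - b0, by rw [mul_sub, b.2, hab0, sub_self]⟩,
       fun b => ⟨b.1 + b0, by rw [mul_add, b.2, hab0, zero_add]⟩,
       fun b => by simp, fun b => by simp⟩
    rw [Nat.card_congr e1,
      Nat.card_congr (Equiv.subtypeEquivRight (fun b => mul_eq_zero_iff' n hn a b)),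
      card_dvd_val n (n / g) hn (Nat.div_pos (Nat.le_of_dvd hn hgn) hg0) (Nat.div_dvd_of_dvd hgn),
      Nat.div_div_self hgn hn.ne']
  · rw [Nat.card_eq_zero]
    left
    constructor
    rintro ⟨b, hb⟩
    apply hdvd
    have hv : (a * b).val = a.val * b.val % n := ZMod.val_mul a b
    rw [hb] at hv
    rw [hv]
    rw [Nat.dvd_mod_iff hgn]
    exact Dvd.dvd.mul_right (Nat.gcd_dvd_left _ _) _

lemma card_multiples_Ico (n d : ℕ) (hn : 0 < n) (hd : 0 < d) (hdn : d ∣ n) :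
    ((Finset.Ico 1 n).filter (fun j => d ∣ j)).card = n / d - 1 := by
  have h : (Finset.range n).filter (fun j => d ∣ j)
      = insert 0 ((Finset.Ico 1 n).filter (fun j => d ∣ j)) := by
    ext j
    simp only [mem_filter, mem_range, mem_insert, mem_Ico]
    constructor
    · rintro ⟨h1, h2⟩
      rcases Nat.eq_zero_or_pos j with rfl | hj
      · exact Or.inl rfl
      · exact Or.inr ⟨⟨hj, h1⟩, h2⟩
    · rintro (rfl | ⟨⟨h1, h2⟩, h3⟩)
      · exact ⟨hn, dvd_zero d⟩
      · exact ⟨h2, h3⟩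
  have h0 : (0 : ℕ) ∉ (Finset.Ico 1 n).filter (fun j => d ∣ j) := by simp
  have := card_multiples_range n d hd hdn
  rw [h, Finset.card_insert_of_notMem h0] at this
  omega

lemma card_exact_val (p : ℕ) (hp : p.Prime) (α i : ℕ) (hi : i < α) :
    ((Finset.Ico 1 (p ^ α)).filter
      (fun j => j.factorization p = i)).card = p ^ (α - 1 - i) * (p - 1) := by
  have hppos : 0 < p := hp.pos
  have hn : 0 < p ^ α := pow_pos hppos α
  have hsub : (Finset.Ico 1 (p ^ α)).filter (fun j => (j.factorization p) = i)
      = ((Finset.Ico 1 (p ^ α)).filter (fun j => p ^ i ∣ j))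
        \ ((Finset.Ico 1 (p ^ α)).filter (fun j => p ^ (i + 1) ∣ j)) := by
    ext j
    simp only [mem_filter, Finset.mem_sdiff, mem_Ico]
    constructor
    · rintro ⟨hj, rfl⟩
      have hj0 : j ≠ 0 := by omega
      refine ⟨⟨hj, Nat.ordProj_dvd j p⟩, ?_⟩
      rintro ⟨-, hdvd⟩
      have := (hp.pow_dvd_iff_le_factorization hj0).mp hdvd
      omega
    · rintro ⟨⟨hj, hdvd⟩, hnot⟩
      have hj0 : j ≠ 0 := by omega
      have h1 := (hp.pow_dvd_iff_le_factorization hj0).mp hdvd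
      have h2 : ¬ (i + 1 ≤ j.factorization p) := by
        intro hle
        exact hnot ⟨hj, (hp.pow_dvd_iff_le_factorization hj0).mpr hle⟩
      exact ⟨hj, by omega⟩
  rw [hsub, Finset.card_sdiff_of_subset]
  · rw [card_multiples_Ico _ _ hn (pow_pos hppos _) (pow_dvd_pow p hi.le),
      card_multiples_Ico _ _ hn (pow_pos hppos _) (pow_dvd_pow p hi),
      Nat.pow_div hi.le hppos, Nat.pow_div hi hppos]
    have h1 : α - i = (α - 1 - i) + 1 := by omega
    have h2 : α - i.succ = α - 1 - i := by omega
    rw [h1, h2, pow_succ]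
    have hA1 : 1 ≤ p ^ (α - 1 - i) := Nat.one_le_pow _ _ hppos
    generalize hA : p ^ (α - 1 - i) = A at hA1 ⊢
    obtain ⟨q, rfl⟩ : ∃ q, p = q + 1 := ⟨p - 1, by omega⟩
    simp only [Nat.add_sub_cancel, Nat.mul_succ]
    generalize A * q = B
    omega
  · intro j hj
    simp only [mem_filter, mem_Ico] at *
    exact ⟨hj.1, dvd_trans (pow_dvd_pow p (Nat.le_succ i)) hj.2⟩

lemma sum_partition (p : ℕ) (hp : p.Prime) (α : ℕ) (h : ℕ → ℕ) :
    ∑ j ∈ Finset.Ico 1 (p ^ α), h (j.factorization p)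
      = ∑ i ∈ Finset.range α, (p ^ (α - 1 - i) * (p - 1)) * h i := by
  have hmaps : ∀ j ∈ Finset.Ico 1 (p ^ α), j.factorization p ∈ Finset.range α := by
    intro j hj
    simp only [mem_Ico] at hj
    have hj0 : j ≠ 0 := by omega
    have h1 : p ^ (j.factorization p) ≤ j := Nat.ordProj_le p hj0
    have h2 : p ^ (j.factorization p) < p ^ α := lt_of_le_of_lt h1 hj.2
    simp only [mem_range]
    exact (Nat.pow_lt_pow_iff_right hp.one_lt).mp h2
  rw [← Finset.sum_fiberwise_of_maps_to' hmaps (fun i => h i)]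
  apply Finset.sum_congr rfl
  intro i hi
  simp only [mem_range] at hi
  rw [Finset.sum_congr rfl (fun j hj => ?_), Finset.sum_const, card_exact_val p hp α i hi,
    smul_eq_mul]
  rfl

lemma gcd_prime_pow (p : ℕ) (hp : p.Prime) (α k : ℕ) (hk : k ≠ 0) (hkα : k < p ^ α) :
    Nat.gcd k (p ^ α) = p ^ (k.factorization p) := by
  obtain ⟨j, hj, hgcd⟩ := (Nat.dvd_prime_pow hp).mp (Nat.gcd_dvd_right k (p ^ α))
  have h1 : j ≤ k.factorization p := by
    apply (hp.pow_dvd_iff_le_factorization hk).mp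
    rw [← hgcd]
    exact Nat.gcd_dvd_left _ _
  have hvlt : k.factorization p < α := by
    have := Nat.ordProj_le p hk
    have h2 : p ^ (k.factorization p) < p ^ α := lt_of_le_of_lt this hkα
    exact (Nat.pow_lt_pow_iff_right hp.one_lt).mp h2
  have h2 : k.factorization p ≤ j := by
    apply (Nat.pow_dvd_pow_iff_le_right hp.one_lt).mp
    rw [← hgcd]
    exact Nat.dvd_gcd (Nat.ordProj_dvd k p) (pow_dvd_pow p hvlt.le)
  rw [hgcd]
  congr 1
  omega

lemma N_eq_sum (n : ℕ) (hn : 0 < n) (c : ZMod n) :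
    Nat.card {ab : ZMod n × ZMod n // ab.1 * ab.2 = c}
      = ∑ j ∈ Finset.range n, (if Nat.gcd j n ∣ c.val then Nat.gcd j n else 0) := by
  haveI : NeZero n := ⟨hn.ne'⟩
  have e : {ab : ZMod n × ZMod n // ab.1 * ab.2 = c}
      ≃ Σ a : ZMod n, {b : ZMod n // a * b = c} :=
    ⟨fun x => ⟨x.1.1, x.1.2, x.2⟩, fun y => ⟨(y.1, y.2.1), y.2.2⟩,
     fun x => rfl, fun y => rfl⟩
  rw [Nat.card_congr e]
  rw [Nat.card_eq_fintype_card, Fintype.card_sigma]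
  have : ∀ a : ZMod n, Fintype.card {b : ZMod n // a * b = c}
      = if Nat.gcd a.val n ∣ c.val then Nat.gcd a.val n else 0 := by
    intro a
    rw [← Nat.card_eq_fintype_card, fiber_card n hn a c]
  rw [Finset.sum_congr rfl (fun a _ => this a)]
  refine Finset.sum_nbij' (fun (a : ZMod n) => a.val) (fun j => ((j : ℕ) : ZMod n)) ?_ ?_ ?_ ?_ ?_
  · intro a _
    simp only [mem_range]
    exact ZMod.val_lt a
  · intro j hj
    exact mem_univ _
  · intro a _
    exact ZMod.natCast_rightInverse a
  · intro j hj
    simp only [mem_range] at hj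
    exact ZMod.val_cast_of_lt hj
  · intro a _
    rfl

lemma range_insert (n : ℕ) (hn : 0 < n) :
    Finset.range n = insert 0 (Finset.Ico 1 n) := by
  ext j; simp only [mem_range, mem_insert, mem_Ico]; omega

lemma pow_term (p : ℕ) (hp : 0 < p) (α i : ℕ) (hi : i < α) :
    p ^ (α - 1 - i) * (p - 1) * p ^ i = p ^ (α - 1) * (p - 1) := by
  rw [mul_right_comm, ← pow_add]
  congr 2
  omega

lemma N_val (p α : ℕ) (hp : p.Prime) (c : ZMod (p ^ α)) :
    Nat.card {ab : ZMod (p ^ α) × ZMod (p ^ α) // ab.1 * ab.2 = c}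
      = if c = 0 then p ^ α + α * (p ^ (α - 1) * (p - 1))
        else (c.val.factorization p + 1) * (p ^ (α - 1) * (p - 1)) := by
  have hppos : 0 < p := hp.pos
  have hn : 0 < p ^ α := pow_pos hppos α
  haveI : NeZero (p ^ α) := ⟨hn.ne'⟩
  rw [N_eq_sum _ hn c, range_insert _ hn, Finset.sum_insert (by simp)]
  have hIco : ∑ j ∈ Finset.Ico 1 (p ^ α),
      (if Nat.gcd j (p ^ α) ∣ c.val then Nat.gcd j (p ^ α) else 0)
      = ∑ i ∈ Finset.range α,
        (p ^ (α - 1 - i) * (p - 1)) * (if p ^ i ∣ c.val then p ^ i else 0) := by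
    rw [← sum_partition p hp α (fun i => if p ^ i ∣ c.val then p ^ i else 0)]
    apply Finset.sum_congr rfl
    intro j hj
    simp only [mem_Ico] at hj
    rw [gcd_prime_pow p hp α j (by omega) hj.2]
  rw [hIco, Nat.gcd_zero_left]
  by_cases hc : c = 0
  · subst hc
    rw [if_pos rfl]
    simp only [ZMod.val_zero, dvd_zero, if_pos]
    congr 1
    calc ∑ i ∈ Finset.range α, p ^ (α - 1 - i) * (p - 1) * p ^ i
        = ∑ i ∈ Finset.range α, p ^ (α - 1) * (p - 1) :=
          Finset.sum_congr rfl (fun i hi => pow_term p hppos α i (by simpa using hi))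
      _ = α * (p ^ (α - 1) * (p - 1)) := by rw [Finset.sum_const, card_range, smul_eq_mul]
  · rw [if_neg hc]
    have hcval : c.val ≠ 0 := fun h => hc (by rwa [← ZMod.val_eq_zero])
    have hclt : c.val < p ^ α := ZMod.val_lt c
    set β := c.val.factorization p with hβ
    have hβlt : β < α := by
      have h1 : p ^ β ≤ c.val := Nat.ordProj_le p hcval
      exact (Nat.pow_lt_pow_iff_right hp.one_lt).mp (lt_of_le_of_lt h1 hclt)
    have h0 : ¬ (p ^ α ∣ c.val) := fun h => by
      have := Nat.le_of_dvd (Nat.pos_of_ne_zero hcval) h; omega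
    rw [if_neg h0, zero_add]
    have hterm : ∀ i ∈ Finset.range α,
        (p ^ (α - 1 - i) * (p - 1)) * (if p ^ i ∣ c.val then p ^ i else 0)
          = if i ≤ β then p ^ (α - 1) * (p - 1) else 0 := by
      intro i hi
      simp only [mem_range] at hi
      rw [mul_ite, mul_zero]
      congr 1
      · rw [eq_iff_iff]
        exact hp.pow_dvd_iff_le_factorization hcval
      · exact pow_term p hppos α i hi
    rw [Finset.sum_congr rfl hterm, ← Finset.sum_filter]
    have hfilter : (Finset.range α).filter (fun i => i ≤ β) = Finset.range (β + 1) := by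
      ext i; simp only [mem_filter, mem_range]; omega
    rw [hfilter, Finset.sum_const, card_range, smul_eq_mul]

lemma B_val (p α m : ℕ) (hp : p.Prime) :
    Nat.card {xy : (Fin (m + 1) → ZMod (p ^ α)) × (Fin (m + 1) → ZMod (p ^ α)) //
        ∀ j : Fin m, xy.1 j.castSucc * xy.2 j.castSucc = xy.1 j.succ * xy.2 j.succ}
      = (p ^ α + α * (p ^ (α - 1) * (p - 1))) ^ (m + 1)
        + ∑ β ∈ Finset.range α,
            (p ^ (α - 1 - β) * (p - 1)) * ((β + 1) * (p ^ (α - 1) * (p - 1))) ^ (m + 1) := by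
  have hppos : 0 < p := hp.pos
  have hn : 0 < p ^ α := pow_pos hppos α
  haveI : NeZero (p ^ α) := ⟨hn.ne'⟩
  set n := p ^ α with hn'
  set S := {xy : (Fin (m + 1) → ZMod n) × (Fin (m + 1) → ZMod n) //
      ∀ j : Fin m, xy.1 j.castSucc * xy.2 j.castSucc = xy.1 j.succ * xy.2 j.succ} with hS
  have key : ∀ (s : S) (i : Fin (m + 1)), s.1.1 i * s.1.2 i = s.1.1 0 * s.1.2 0 := by
    rintro ⟨⟨x, y⟩, hxy⟩ i
    induction i using Fin.induction with
    | zero => rfl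
    | succ j ih => exact (hxy j).symm.trans ih
  have e1 : S ≃ Σ c : ZMod n, {s : S // s.1.1 0 * s.1.2 0 = c} :=
    (Equiv.sigmaFiberEquiv (fun s : S => s.1.1 0 * s.1.2 0)).symm
  have e2 : ∀ c : ZMod n, {s : S // s.1.1 0 * s.1.2 0 = c}
      ≃ (Fin (m + 1) → {ab : ZMod n × ZMod n // ab.1 * ab.2 = c}) := by
    intro c
    refine ⟨fun s i => ⟨(s.1.1.1 i, s.1.1.2 i), (key s.1 i).trans s.2⟩,
      fun g => ⟨⟨⟨fun i => (g i).1.1, fun i => (g i).1.2⟩,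
        fun j => by rw [(g j.castSucc).2, (g j.succ).2]⟩, (g 0).2⟩,
      fun s => rfl, fun g => rfl⟩
  have hcard : Nat.card S = ∑ c : ZMod n,
      (Nat.card {ab : ZMod n × ZMod n // ab.1 * ab.2 = c}) ^ (m + 1) := by
    rw [Nat.card_congr e1, Nat.card_eq_fintype_card, Fintype.card_sigma]
    apply Finset.sum_congr rfl
    intro c _
    rw [Fintype.card_congr (e2 c), Fintype.card_fun, Fintype.card_fin,
      Nat.card_eq_fintype_card]
  rw [hcard]
  have hsplit : ∑ c : ZMod n, (Nat.card {ab : ZMod n × ZMod n // ab.1 * ab.2 = c}) ^ (m + 1)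
      = (Nat.card {ab : ZMod n × ZMod n // ab.1 * ab.2 = (0 : ZMod n)}) ^ (m + 1)
        + ∑ c ∈ Finset.univ.erase (0 : ZMod n),
            (Nat.card {ab : ZMod n × ZMod n // ab.1 * ab.2 = c}) ^ (m + 1) := by
    rw [← Finset.add_sum_erase _ _ (mem_univ (0 : ZMod n))]
  rw [hsplit]
  congr 1
  · rw [N_val p α hp 0, if_pos rfl]
  · have hbij : ∑ c ∈ Finset.univ.erase (0 : ZMod n),
        (Nat.card {ab : ZMod n × ZMod n // ab.1 * ab.2 = c}) ^ (m + 1)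
        = ∑ j ∈ Finset.Ico 1 n,
            ((j.factorization p + 1) * (p ^ (α - 1) * (p - 1))) ^ (m + 1) := by
      refine Finset.sum_nbij' (fun (c : ZMod n) => c.val) (fun j => ((j : ℕ) : ZMod n))
        ?_ ?_ ?_ ?_ ?_
      · intro c hc
        simp only [mem_erase, mem_univ, and_true] at hc
        simp only [mem_Ico]
        exact ⟨Nat.one_le_iff_ne_zero.mpr (fun h => hc (by rwa [← ZMod.val_eq_zero])),
          ZMod.val_lt c⟩
      · intro j hj
        simp only [mem_Ico] at hj
        simp only [mem_erase, mem_univ, and_true]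
        intro h
        rw [← ZMod.val_eq_zero, ZMod.val_cast_of_lt hj.2] at h
        omega
      · intro c _
        exact ZMod.natCast_rightInverse c
      · intro j hj
        simp only [mem_Ico] at hj
        exact ZMod.val_cast_of_lt hj.2
      · intro c hc
        simp only [mem_erase, mem_univ, and_true] at hc
        rw [N_val p α hp c, if_neg hc]
    rw [hbij, sum_partition p hp α (fun β => ((β + 1) * (p ^ (α - 1) * (p - 1))) ^ (m + 1))]

lemma aux_A (q a : ℝ) (hq : q ≠ 0) (m α : ℕ) (hα : 1 ≤ α) :
    (q ^ (α * (m + 2)))⁻¹ * (q ^ α + a * (q ^ (α - 1) * (q - 1))) ^ (m + 1)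
      = (a * (1 - q⁻¹) + 1) ^ (m + 1) * (q ^ α)⁻¹ := by
  obtain ⟨k, rfl⟩ : ∃ k, α = k + 1 := ⟨α - 1, by omega⟩
  simp only [Nat.add_sub_cancel]
  have hfac : q ^ (k + 1) + a * (q ^ k * (q - 1)) = q ^ (k + 1) * (a * (1 - q⁻¹) + 1) := by
    field_simp
    ring
  rw [hfac, pow_mul, mul_pow]
  field_simp
  ring

lemma aux_term (q b : ℝ) (hq : q ≠ 0) (m α β : ℕ) (hβ : β < α) :
    (q ^ (α * (m + 2)))⁻¹ *
        (q ^ (α - 1 - β) * (q - 1) * ((b * (q ^ (α - 1) * (q - 1))) ^ (m + 1)))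
      = (1 - q⁻¹) ^ (m + 2) * (b ^ (m + 1) * (q ^ β)⁻¹) := by
  obtain ⟨k, rfl⟩ : ∃ k, α = k + β + 1 := ⟨α - 1 - β, by omega⟩
  have e1 : k + β + 1 - 1 - β = k := by omega
  have e2 : k + β + 1 - 1 = k + β := by omega
  have h : (1 : ℝ) - q⁻¹ = (q - 1) * q⁻¹ := by field_simp
  rw [e1, e2, h]
  simp only [mul_pow, pow_mul, pow_add, inv_pow]
  field_simp

end Aux

theorem stmt_9 (p : ℕ) (hp : p.Prime) (m : ℕ) (hm : 1 ≤ m) :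
    Summable (fun β : ℕ => ((β : ℝ) + 1) ^ (m + 1) * (p : ℝ) ^ (-(β : ℤ))) ∧
    Tendsto (fun α : ℕ => (p : ℝ) ^ (-((α * (m + 2) : ℕ) : ℤ)) *
        (Nat.card {xy : (Fin (m + 1) → ZMod (p ^ α)) × (Fin (m + 1) → ZMod (p ^ α)) //
          ∀ j : Fin m, xy.1 j.castSucc * xy.2 j.castSucc = xy.1 j.succ * xy.2 j.succ} : ℝ))
      atTop
      (nhds ((1 - (p : ℝ)⁻¹) ^ (m + 2) *
        ∑' β : ℕ, ((β : ℝ) + 1) ^ (m + 1) * (p : ℝ) ^ (-(β : ℤ)))) := by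
  have hp1 : (1 : ℝ) < p := by exact_mod_cast hp.one_lt
  have hq0 : (p : ℝ) ≠ 0 := by linarith
  have hsummable : Summable (fun β : ℕ => ((β : ℝ) + 1) ^ (m + 1) * (p : ℝ) ^ (-(β : ℤ))) := by
    have hr : ‖(p : ℝ)⁻¹‖ < 1 := by
      rw [Real.norm_eq_abs, abs_inv, abs_of_pos (by linarith)]
      rw [inv_lt_one_iff₀]
      right; exact hp1
    have h1 : Summable (fun n : ℕ => (n : ℝ) ^ (m + 1) * (p : ℝ)⁻¹ ^ n) :=
      summable_pow_mul_geometric_of_norm_lt_one (m + 1) hr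
    have h2 : Summable (fun n : ℕ => ((n + 1 : ℕ) : ℝ) ^ (m + 1) * (p : ℝ)⁻¹ ^ (n + 1)) :=
      h1.comp_injective (add_left_injective 1)
    have h3 := h2.mul_left ((p : ℝ))
    apply h3.congr
    intro n
    rw [zpow_neg, zpow_natCast]
    push_cast
    rw [pow_succ]
    field_simp
    rw [div_pow, one_pow, pow_succ]; field_simp
  refine ⟨hsummable, ?_⟩
  have hinv_nonneg : (0 : ℝ) ≤ 1 - (p : ℝ)⁻¹ := by
    have : (p : ℝ)⁻¹ ≤ 1 := by
      rw [inv_le_one_iff₀]; right; linarith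
    linarith
  have hinv_le : (1 : ℝ) - (p : ℝ)⁻¹ ≤ 1 := by
    have : (0 : ℝ) < (p : ℝ)⁻¹ := by positivity
    linarith
  -- tail tendsto 0
  have htail : Tendsto (fun α : ℕ => ((α : ℝ) * (1 - (p : ℝ)⁻¹) + 1) ^ (m + 1)
      * (p : ℝ) ^ (-(α : ℤ))) atTop (nhds 0) := by
    apply Summable.tendsto_atTop_zero
    apply Summable.of_nonneg_of_le (fun α => by positivity) (fun α => ?_) hsummable
    have hzp : (0 : ℝ) ≤ (p : ℝ) ^ (-(α : ℤ)) := by positivity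
    apply mul_le_mul_of_nonneg_right _ hzp
    apply pow_le_pow_left₀ (by positivity)
    nlinarith [Nat.cast_nonneg (α := ℝ) α]
  have hhead : Tendsto (fun α : ℕ => (1 - (p : ℝ)⁻¹) ^ (m + 2) *
      ∑ β ∈ Finset.range α, ((β : ℝ) + 1) ^ (m + 1) * (p : ℝ) ^ (-(β : ℤ))) atTop
      (nhds ((1 - (p : ℝ)⁻¹) ^ (m + 2) *
        ∑' β : ℕ, ((β : ℝ) + 1) ^ (m + 1) * (p : ℝ) ^ (-(β : ℤ)))) :=
    (hsummable.hasSum.tendsto_sum_nat).const_mul _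
  have hcomb := hhead.add htail
  rw [add_zero] at hcomb
  apply Tendsto.congr' _ hcomb
  filter_upwards [eventually_ge_atTop 1] with α hα
  rw [B_val p α m hp]
  have hps : 1 ≤ p := hp.one_le
  simp only [zpow_neg, zpow_natCast]
  push_cast [Nat.cast_sub hps]
  rw [mul_add, Finset.mul_sum, Finset.mul_sum]
  have hrw : ∀ β ∈ Finset.range α,
      ((p : ℝ) ^ (α * (m + 2)))⁻¹ *
        ((p : ℝ) ^ (α - 1 - β) * ((p : ℝ) - 1) *
          (((β : ℝ) + 1) * ((p : ℝ) ^ (α - 1) * ((p : ℝ) - 1))) ^ (m + 1))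
      = (1 - (p : ℝ)⁻¹) ^ (m + 2) * (((β : ℝ) + 1) ^ (m + 1) * ((p : ℝ) ^ β)⁻¹) := by
    intro β hβ
    simp only [Finset.mem_range] at hβ
    exact aux_term (p : ℝ) ((β : ℝ) + 1) hq0 m α β hβ
  rw [Finset.sum_congr rfl hrw]
  rw [aux_A (p : ℝ) (α : ℝ) hq0 m α hα]
  exact add_comm _ _
end

section
/- Let p be a prime, n, m ≥ 1 integers, f₁,…,f_m ∈ ℤ_p[x₁,…,x_n] polynomials with p-adic integer coefficients, and let μ be the Haar measure on ℤ_p^n normalized so that μ(ℤ_p^n) = 1. Write ‖f(x)‖ = max_{1≤j≤m} ‖f_j(x)‖_p, and for each integer α ≥ 0 let B_α denote the number of points y ∈ (ℤ/p^αℤ)^n with f̄_j(y) = 0 for all j, where f̄_j is the reduction of f_j modulo p^α (so B₀ = 1). Then for every real number s > 0 one has ∫_{ℤ_p^n} ‖f(x)‖^s dμ(x) = Σ_{α=0}^∞ p^{−αs} ( B_α p^{−αn} − B_{α+1} p^{−(α+1)n} ), where the series on the right converges. -/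
open MeasureTheory
open scoped ENNReal NNReal

section AuxStmt11

variable {p : ℕ} [Fact p.Prime] {n : ℕ}

lemma aux11_fiber_eq_ball (α : ℕ) (c : ZMod (p ^ α)) :
    {z : ℤ_[p] | PadicInt.toZModPow α z = c}
      = Metric.closedBall ((c.val : ℕ) : ℤ_[p]) ((p : ℝ) ^ (-(α : ℤ))) := by
  ext z
  have h0 : PadicInt.toZModPow α ((c.val : ℕ) : ℤ_[p]) = c := by
    rw [map_natCast]; exact ZMod.natCast_zmod_val c
  simp only [Set.mem_setOf_eq, Metric.mem_closedBall, dist_eq_norm]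
  rw [PadicInt.norm_le_pow_iff_mem_span_pow, ← PadicInt.ker_toZModPow, RingHom.mem_ker,
    map_sub, h0, sub_eq_zero]

lemma aux11_norm_le_iff (α : ℕ) (z : ℤ_[p]) :
    ‖z‖ ≤ (p : ℝ) ^ (-(α : ℤ)) ↔ PadicInt.toZModPow α z = 0 := by
  rw [PadicInt.norm_le_pow_iff_mem_span_pow, ← PadicInt.ker_toZModPow, RingHom.mem_ker]

variable [MeasurableSpace ℤ_[p]] [BorelSpace ℤ_[p]]

/-- The fiber of the reduction map mod `p^α` on `ℤ_[p]^n` over a point `c`. -/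
def aux11F (α : ℕ) (c : Fin n → ZMod (p ^ α)) : Set (Fin n → ℤ_[p]) :=
  {x | ∀ i, PadicInt.toZModPow α (x i) = c i}

lemma aux11F_meas (α : ℕ) (c : Fin n → ZMod (p ^ α)) : MeasurableSet (aux11F α c) := by
  have h : aux11F α c = Set.pi Set.univ (fun i => {z | PadicInt.toZModPow α z = c i}) := by
    ext x; simp [aux11F, Set.mem_pi]
  rw [h]
  exact MeasurableSet.univ_pi fun i => by
    rw [aux11_fiber_eq_ball]; exact measurableSet_closedBall

lemma aux11F_disjoint (α : ℕ) :
    Pairwise (Function.onFun Disjoint fun c : Fin n → ZMod (p ^ α) => aux11F α c) := by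
  intro c c' hcc
  refine Set.disjoint_left.2 fun x hx hx' => hcc (funext fun i => ?_)
  rw [← hx i, ← hx' i]

lemma aux11F_measure (μ : Measure (Fin n → ℤ_[p])) [μ.IsAddLeftInvariant]
    (hμ : μ Set.univ = 1) (α : ℕ) (c : Fin n → ZMod (p ^ α)) :
    μ (aux11F α c) = ((p ^ (α * n) : ℕ) : ℝ≥0∞)⁻¹ := by
  have hconst : ∀ c' : Fin n → ZMod (p ^ α), μ (aux11F α c') = μ (aux11F α 0) := by
    intro c'
    have ha : ∀ i, PadicInt.toZModPow α (((c' i).val : ℕ) : ℤ_[p]) = c' i := fun i => by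
      rw [map_natCast]; exact ZMod.natCast_zmod_val _
    have hpre : ((fun i => (((c' i).val : ℕ) : ℤ_[p])) + ·) ⁻¹' (aux11F α c') = aux11F α 0 := by
      ext x
      show (∀ i, PadicInt.toZModPow α ((((c' i).val : ℕ) : ℤ_[p]) + x i) = c' i)
        ↔ (∀ i, PadicInt.toZModPow α (x i) = (0 : Fin n → ZMod (p ^ α)) i)
      refine forall_congr' fun i => ?_
      rw [map_add, ha i, show (0 : Fin n → ZMod (p ^ α)) i = 0 from rfl, add_eq_left]
    calc μ (aux11F α c') = μ (((fun i => (((c' i).val : ℕ) : ℤ_[p])) + ·) ⁻¹' (aux11F α c')) :=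
          (measure_preimage_add μ _ _).symm
      _ = μ (aux11F α 0) := by rw [hpre]
  haveI : NeZero (p ^ α) := ⟨pow_ne_zero α (Fact.out : p.Prime).ne_zero⟩
  have hcard : Fintype.card (Fin n → ZMod (p ^ α)) = p ^ (α * n) := by
    rw [Fintype.card_fun, ZMod.card, Fintype.card_fin, ← pow_mul]
  have hunion : (⋃ c' : Fin n → ZMod (p ^ α), aux11F α c') = Set.univ :=
    Set.eq_univ_of_forall fun x =>
      Set.mem_iUnion.2 ⟨fun i => PadicInt.toZModPow α (x i), fun i => rfl⟩
  have h1 : ((p ^ (α * n) : ℕ) : ℝ≥0∞) * μ (aux11F α 0) = 1 := by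
    calc ((p ^ (α * n) : ℕ) : ℝ≥0∞) * μ (aux11F α 0)
        = ∑' _ : Fin n → ZMod (p ^ α), μ (aux11F α 0) := by
          rw [tsum_fintype, Finset.sum_const, Finset.card_univ, hcard, nsmul_eq_mul]
      _ = ∑' c' : Fin n → ZMod (p ^ α), μ (aux11F α c') := tsum_congr fun c' => (hconst c').symm
      _ = μ (⋃ c' : Fin n → ZMod (p ^ α), aux11F α c') :=
          (measure_iUnion (aux11F_disjoint α) (fun c' => aux11F_meas α c')).symm
      _ = 1 := by rw [hunion, hμ]
  have hk0 : ((p ^ (α * n) : ℕ) : ℝ≥0∞) ≠ 0 := by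
    simp [pow_ne_zero, (Fact.out : p.Prime).ne_zero]
  have hkt : ((p ^ (α * n) : ℕ) : ℝ≥0∞) ≠ ⊤ := ENNReal.natCast_ne_top _
  rw [hconst c]
  calc μ (aux11F α 0)
      = (((p ^ (α * n) : ℕ) : ℝ≥0∞)⁻¹ * ((p ^ (α * n) : ℕ) : ℝ≥0∞)) * μ (aux11F α 0) := by
        rw [ENNReal.inv_mul_cancel hk0 hkt, one_mul]
    _ = ((p ^ (α * n) : ℕ) : ℝ≥0∞)⁻¹ * (((p ^ (α * n) : ℕ) : ℝ≥0∞) * μ (aux11F α 0)) :=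
        mul_assoc _ _ _
    _ = ((p ^ (α * n) : ℕ) : ℝ≥0∞)⁻¹ := by rw [h1, mul_one]

lemma aux11_eval_compat (α : ℕ) (x : Fin n → ℤ_[p]) (q : MvPolynomial (Fin n) ℤ_[p]) :
    PadicInt.toZModPow α (MvPolynomial.eval x q)
      = MvPolynomial.eval (fun i => PadicInt.toZModPow α (x i))
          (MvPolynomial.map (PadicInt.toZModPow α) q) := by
  rw [MvPolynomial.eval_map]
  have h := MvPolynomial.eval₂_comp_left (PadicInt.toZModPow α) (RingHom.id ℤ_[p]) x q
  rw [RingHom.comp_id] at h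
  exact h

lemma aux11S (μ : Measure (Fin n → ℤ_[p])) [μ.IsAddLeftInvariant]
    (hμ : μ Set.univ = 1) {m : ℕ} (f : Fin m → MvPolynomial (Fin n) ℤ_[p]) (α : ℕ) :
    MeasurableSet {x : Fin n → ℤ_[p] | ∀ j, ‖MvPolynomial.eval x (f j)‖ ≤ (p : ℝ) ^ (-(α : ℤ))} ∧
    μ {x : Fin n → ℤ_[p] | ∀ j, ‖MvPolynomial.eval x (f j)‖ ≤ (p : ℝ) ^ (-(α : ℤ))}
      = (Nat.card {y : Fin n → ZMod (p ^ α) //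
          ∀ j, MvPolynomial.eval y (MvPolynomial.map (PadicInt.toZModPow α) (f j)) = 0} : ℝ≥0∞)
        * ((p ^ (α * n) : ℕ) : ℝ≥0∞)⁻¹ := by
  classical
  set Z : Finset (Fin n → ZMod (p ^ α)) :=
    Finset.univ.filter
      (fun y => ∀ j, MvPolynomial.eval y (MvPolynomial.map (PadicInt.toZModPow α) (f j)) = 0)
    with hZ
  have hSeq : {x : Fin n → ℤ_[p] | ∀ j, ‖MvPolynomial.eval x (f j)‖ ≤ (p : ℝ) ^ (-(α : ℤ))}
      = ⋃ c ∈ Z, aux11F α c := by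
    ext x
    simp only [Set.mem_setOf_eq, Set.mem_iUnion, hZ, Finset.mem_filter, Finset.mem_univ, true_and]
    constructor
    · intro hx
      refine ⟨fun i => PadicInt.toZModPow α (x i), ⟨fun j => ?_, fun i => rfl⟩⟩
      rw [← aux11_eval_compat, ← aux11_norm_le_iff]
      exact hx j
    · rintro ⟨c, hc, hxc⟩ j
      rw [aux11_norm_le_iff, aux11_eval_compat, show (fun i => PadicInt.toZModPow α (x i)) = c
        from funext hxc]
      exact hc j
  have hcardZ : (Nat.card {y : Fin n → ZMod (p ^ α) //
      ∀ j, MvPolynomial.eval y (MvPolynomial.map (PadicInt.toZModPow α) (f j)) = 0}) = Z.card := by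
    rw [Nat.card_eq_fintype_card, hZ]
    convert Fintype.card_subtype _
  constructor
  · rw [hSeq]
    exact Z.measurableSet_biUnion (fun c _ => aux11F_meas α c)
  · rw [hSeq, measure_biUnion_finset ((aux11F_disjoint α).set_pairwise _)
      (fun c _ => aux11F_meas α c)]
    rw [Finset.sum_congr rfl (fun c _ => aux11F_measure μ hμ α c), Finset.sum_const,
      nsmul_eq_mul, hcardZ]

end AuxStmt11

theorem stmt_11 (p : ℕ) [Fact p.Prime] (n m : ℕ) (hn : 1 ≤ n) (hm : 1 ≤ m)
    (f : Fin m → MvPolynomial (Fin n) ℤ_[p])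
    [MeasurableSpace ℤ_[p]] [BorelSpace ℤ_[p]]
    (μ : Measure (Fin n → ℤ_[p])) [μ.IsAddLeftInvariant]
    (hμ : μ Set.univ = 1)
    (B : ℕ → ℕ)
    (hB : ∀ α : ℕ, B α = Nat.card {y : Fin n → ZMod (p ^ α) //
      ∀ j, MvPolynomial.eval y (MvPolynomial.map (PadicInt.toZModPow α) (f j)) = 0})
    (s : ℝ) (hs : 0 < s) :
    Summable (fun α : ℕ => (p : ℝ) ^ (-(α : ℝ) * s) *
        ((B α : ℝ) * (p : ℝ) ^ (-((α * n : ℕ) : ℤ))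
          - (B (α + 1) : ℝ) * (p : ℝ) ^ (-(((α + 1) * n : ℕ) : ℤ)))) ∧
    ∫ x, (⨆ j, ‖MvPolynomial.eval x (f j)‖) ^ s ∂μ
      = ∑' α : ℕ, (p : ℝ) ^ (-(α : ℝ) * s) *
          ((B α : ℝ) * (p : ℝ) ^ (-((α * n : ℕ) : ℤ))
            - (B (α + 1) : ℝ) * (p : ℝ) ^ (-(((α + 1) * n : ℕ) : ℤ))) := by
  classical
  have hp1 : (1 : ℝ) < p := by exact_mod_cast (Fact.out : p.Prime).one_lt
  have hp0 : (0 : ℝ) < p := lt_trans one_pos hp1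
  haveI : IsFiniteMeasure μ := ⟨by rw [hμ]; exact ENNReal.one_lt_top⟩
  haveI : Nonempty (Fin m) := ⟨⟨0, hm⟩⟩
  -- the sets S α and A α
  let S : ℕ → Set (Fin n → ℤ_[p]) :=
    fun α => {x | ∀ j, ‖MvPolynomial.eval x (f j)‖ ≤ (p : ℝ) ^ (-(α : ℤ))}
  let A : ℕ → Set (Fin n → ℤ_[p]) := fun α => S α \ S (α + 1)
  have hmeas : ∀ α, MeasurableSet (S α) := fun α => (aux11S μ hμ f α).1
  have hμS : ∀ α, μ (S α) = (B α : ℝ≥0∞) * ((p ^ (α * n) : ℕ) : ℝ≥0∞)⁻¹ := fun α => by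
    rw [hB α]; exact_mod_cast (aux11S μ hμ f α).2
  have hmono : ∀ α, S (α + 1) ⊆ S α := fun α x hx j =>
    le_trans (hx j) (zpow_le_zpow_right₀ hp1.le (by omega))
  have hAmeas : ∀ α, MeasurableSet (A α) := fun α => (hmeas α).diff (hmeas (α + 1))
  -- real-valued measures
  let a : ℕ → ℝ := fun α => (B α : ℝ) * (p : ℝ) ^ (-((α * n : ℕ) : ℤ))
  have htoReal : ∀ α, (μ (S α)).toReal = a α := by
    intro α
    rw [hμS α, ENNReal.toReal_mul, ENNReal.toReal_inv, ENNReal.toReal_natCast, ENNReal.toReal_natCast]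
    show (B α : ℝ) * ((p ^ (α * n) : ℕ) : ℝ)⁻¹ = (B α : ℝ) * (p : ℝ) ^ (-((α * n : ℕ) : ℤ))
    rw [zpow_neg, zpow_natCast]
    push_cast
    ring
  have hμA : ∀ α, (μ (A α)).toReal = a α - a (α + 1) := by
    intro α
    show (μ (S α \ S (α + 1))).toReal = _
    rw [measure_diff (hmono α) (hmeas (α + 1)).nullMeasurableSet (measure_ne_top μ _),
      ENNReal.toReal_sub_of_le (measure_mono (hmono α)) (measure_ne_top μ _),
      htoReal, htoReal]
  -- the indicator functions
  let c : ℕ → ℝ := fun α => (p : ℝ) ^ (-(α : ℝ) * s)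
  have hc_nonneg : ∀ α, 0 ≤ c α := fun α => Real.rpow_nonneg hp0.le _
  have hcr : ∀ α, c α = ((p : ℝ) ^ (-s)) ^ α := by
    intro α
    show (p : ℝ) ^ (-(α : ℝ) * s) = _
    rw [← Real.rpow_natCast ((p : ℝ) ^ (-s)) α, ← Real.rpow_mul hp0.le]
    congr 1
    ring
  let h : ℕ → (Fin n → ℤ_[p]) → ℝ := fun α => (A α).indicator (fun _ => c α)
  -- pointwise identity
  have hpt : ∀ x, (⨆ j, ‖MvPolynomial.eval x (f j)‖) ^ s = ∑' α, h α x := by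
    intro x
    have hbdd : BddAbove (Set.range fun j => ‖MvPolynomial.eval x (f j)‖) :=
      Set.Finite.bddAbove (Set.finite_range _)
    have hmemS : ∀ α, x ∈ S α ↔ (⨆ j, ‖MvPolynomial.eval x (f j)‖) ≤ (p : ℝ) ^ (-(α : ℤ)) :=
      fun α => (ciSup_le_iff hbdd).symm
    by_cases hNzero : (⨆ j, ‖MvPolynomial.eval x (f j)‖) = 0
    · have hxall : ∀ α, x ∈ S α := fun α => (hmemS α).2 (by rw [hNzero]; positivity)
      have hzero : ∀ α, h α x = 0 := fun α =>
        Set.indicator_of_notMem (fun hxA => hxA.2 (hxall (α + 1))) _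
      rw [hNzero, Real.zero_rpow hs.ne', tsum_congr hzero, tsum_zero]
    · obtain ⟨j0, hj0⟩ :=
        exists_eq_ciSup_of_finite (f := fun j => ‖MvPolynomial.eval x (f j)‖)
      have hz : MvPolynomial.eval x (f j0) ≠ 0 := by
        intro h0
        apply hNzero
        rw [← hj0, h0, norm_zero]
      set k : ℕ := (MvPolynomial.eval x (f j0)).valuation with hk
      have hNval : (⨆ j, ‖MvPolynomial.eval x (f j)‖) = (p : ℝ) ^ (-(k : ℤ)) := by
        rw [← hj0, PadicInt.norm_eq_zpow_neg_valuation hz]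
      have hSiff : ∀ α, x ∈ S α ↔ α ≤ k := by
        intro α
        rw [hmemS α, hNval, zpow_le_zpow_iff_right₀ hp1, neg_le_neg_iff, Nat.cast_le]
      have hxA : ∀ α, x ∈ A α ↔ α = k := by
        intro α
        show x ∈ S α \ S (α + 1) ↔ α = k
        rw [Set.mem_diff, hSiff, hSiff]
        omega
      rw [hNval, tsum_eq_single k
        (fun α hα => Set.indicator_of_notMem (fun hx' => hα ((hxA α).1 hx')) _)]
      rw [Set.indicator_of_mem ((hxA k).2 rfl)]
      show ((p : ℝ) ^ (-(k : ℤ))) ^ s = (p : ℝ) ^ (-(k : ℝ) * s)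
      rw [← Real.rpow_intCast (p : ℝ) (-(k : ℤ)), ← Real.rpow_mul hp0.le]
      congr 1
      push_cast
      ring
  -- geometric bound
  have hr : (p : ℝ) ^ (-s) < 1 := Real.rpow_lt_one_of_one_lt_of_neg hp1 (neg_lt_zero.2 hs)
  have hd_nonneg : ∀ α, 0 ≤ a α - a (α + 1) := fun α => (hμA α) ▸ ENNReal.toReal_nonneg
  have hd_le : ∀ α, a α - a (α + 1) ≤ 1 := by
    intro α
    rw [← hμA α]
    have h1 : μ (A α) ≤ 1 := by rw [← hμ]; exact measure_mono (Set.subset_univ _)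
    calc (μ (A α)).toReal ≤ (1 : ℝ≥0∞).toReal := ENNReal.toReal_mono ENNReal.one_ne_top h1
      _ = 1 := ENNReal.toReal_one
  -- summability
  have hsummable : Summable (fun α => c α * (a α - a (α + 1))) := by
    refine Summable.of_nonneg_of_le (fun α => mul_nonneg (hc_nonneg α) (hd_nonneg α))
      (fun α => ?_) (summable_geometric_of_lt_one (Real.rpow_nonneg hp0.le _) hr)
    calc c α * (a α - a (α + 1)) ≤ c α * 1 :=
          mul_le_mul_of_nonneg_left (hd_le α) (hc_nonneg α)
      _ = ((p : ℝ) ^ (-s)) ^ α := by rw [mul_one, hcr α]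
  -- integrals of the pieces
  have hint : ∀ α, ∫ x, h α x ∂μ = c α * (a α - a (α + 1)) := by
    intro α
    rw [show (∫ x, h α x ∂μ) = ∫ x, (A α).indicator (fun _ => c α) x ∂μ from rfl,
      integral_indicator_const (c α) (hAmeas α), measureReal_def, hμA α, smul_eq_mul, mul_comm]
  -- measurability and the lintegral bound
  have hintmeas : ∀ α, AEStronglyMeasurable (h α) μ := fun α =>
    ((measurable_const (a := c α)).indicator (hAmeas α)).aestronglyMeasurable
  have hlint : ∑' α, ∫⁻ x, ‖h α x‖₊ ∂μ ≠ ⊤ := by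
    have hb : ∀ α, ∫⁻ x, ‖h α x‖₊ ∂μ ≤ ENNReal.ofReal ((p : ℝ) ^ (-s)) ^ α := by
      intro α
      have hpb : ∀ y, (‖h α y‖₊ : ℝ≥0∞) ≤ ENNReal.ofReal ((p : ℝ) ^ (-s)) ^ α := by
        intro y
        rw [← ENNReal.ofReal_pow (Real.rpow_nonneg hp0.le _)]
        by_cases hy : y ∈ A α
        · rw [show h α y = c α from Set.indicator_of_mem hy _,
            ← enorm_eq_nnnorm, Real.enorm_eq_ofReal (hc_nonneg α)]
          exact le_of_eq (by rw [hcr α])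
        · rw [show h α y = 0 from Set.indicator_of_notMem hy _]
          simp
      calc ∫⁻ y, ‖h α y‖₊ ∂μ ≤ ∫⁻ _, ENNReal.ofReal ((p : ℝ) ^ (-s)) ^ α ∂μ :=
            lintegral_mono hpb
        _ = ENNReal.ofReal ((p : ℝ) ^ (-s)) ^ α * μ Set.univ := lintegral_const _
        _ = ENNReal.ofReal ((p : ℝ) ^ (-s)) ^ α := by rw [hμ, mul_one]
    refine ne_top_of_le_ne_top ?_ (ENNReal.tsum_le_tsum hb)
    rw [ENNReal.tsum_geometric]
    exact ENNReal.inv_ne_top.2 (tsub_pos_of_lt (ENNReal.ofReal_lt_one.2 hr)).ne'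
  -- conclusion
  refine ⟨hsummable, ?_⟩
  calc ∫ x, (⨆ j, ‖MvPolynomial.eval x (f j)‖) ^ s ∂μ
      = ∫ x, ∑' α, h α x ∂μ := integral_congr_ae (Filter.Eventually.of_forall hpt)
    _ = ∑' α, ∫ x, h α x ∂μ := integral_tsum hintmeas hlint
    _ = ∑' α : ℕ, (p : ℝ) ^ (-(α : ℝ) * s) *
          ((B α : ℝ) * (p : ℝ) ^ (-((α * n : ℕ) : ℤ))
            - (B (α + 1) : ℝ) * (p : ℝ) ^ (-(((α + 1) * n : ℕ) : ℤ))) :=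
        tsum_congr fun α => hint α
end

section
/- Let p be a prime and n ≥ 1 an integer, and let μ be the Haar measure on ℤ_p^n × ℤ_p^n normalized to total mass 1. Then for every real number s > 0, ∫_{ℤ_p^n × ℤ_p^n} ‖ Σ_{i=1}^n x_i y_i ‖_p^s dμ(x,y) = (p−1)(p^n−1)p^{2s} / ((p^{s+1}−1)(p^{s+n}−1)), where p^{2s}, p^{s+1}, p^{s+n} denote real powers of p. -/
open MeasureTheory
open scoped ENNReal NNReal

namespace Stmt12Aux

section Unique

variable {G : Type*} [AddCommGroup G] [TopologicalSpace G] [IsTopologicalAddGroup G]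
  [CompactSpace G] [LocallyCompactSpace G] [MeasurableSpace G] [BorelSpace G]

lemma haarLike (μ : Measure G) [μ.IsAddLeftInvariant] [IsProbabilityMeasure μ] :
    μ.IsAddHaarMeasure := by
  have : μ.IsOpenPosMeasure :=
    MeasureTheory.isOpenPosMeasure_of_addLeftInvariant_of_compact Set.univ isCompact_univ
      (by simp)
  exact ⟨⟩

lemma inv_prob_unique (μ ν : Measure G) [μ.IsAddLeftInvariant] [ν.IsAddLeftInvariant]
    [IsProbabilityMeasure μ] [IsProbabilityMeasure ν] : μ = ν := by
  have h1 := haarLike μ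
  have h2 := haarLike ν
  exact Measure.isAddHaarMeasure_eq_of_isProbabilityMeasure μ ν

end Unique

section Fiber

variable {G : Type*} [AddCommGroup G] [MeasurableSpace G] [MeasurableAdd G]

lemma fiber_measure (μ : Measure G) [μ.IsAddLeftInvariant] [IsProbabilityMeasure μ]
    {F : Type*} [AddCommGroup F] [Fintype F]
    (φ : G →+ F) (hsurj : Function.Surjective φ)
    (hmeas : ∀ b : F, MeasurableSet (φ ⁻¹' {b})) (b : F) :
    μ (φ ⁻¹' {b}) = (Fintype.card F : ℝ≥0∞)⁻¹ := by
  have key : ∀ c : F, μ (φ ⁻¹' {c}) = μ (φ ⁻¹' {0}) := by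
    intro c
    obtain ⟨g, hg⟩ := hsurj c
    have h : φ ⁻¹' {c} = (fun x => (-g) + x) ⁻¹' (φ ⁻¹' {0}) := by
      ext x
      simp only [Set.mem_preimage, Set.mem_singleton_iff, map_add, map_neg, hg]
      constructor
      · intro h; rw [h]; abel
      · intro h
        have h2 : c = φ x := by
          have := congrArg (fun z => c + z) h
          simpa [add_assoc] using this.symm
        exact h2.symm
    rw [h, measure_preimage_add]
  have hsum : ∑ c : F, μ (φ ⁻¹' {c}) = 1 := by
    rw [← tsum_fintype (L := SummationFilter.unconditional _), ← measure_iUnion _ hmeas]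
    · have : ⋃ c : F, φ ⁻¹' {c} = Set.univ := by
        ext x; simp
      rw [this, measure_univ]
    · intro c c' hcc'
      simp only [Function.onFun, Set.disjoint_left]
      intro x hx hx'
      exact hcc' (by simp_all)
  rw [key b]
  have hsum' : (Fintype.card F : ℝ≥0∞) * μ (φ ⁻¹' {0}) = 1 := by
    rw [← hsum]
    simp [key, Finset.sum_const, nsmul_eq_mul]
  have hcard : (Fintype.card F : ℝ≥0∞) ≠ 0 := by
    simp [Fintype.card_ne_zero]
  have hcardtop : (Fintype.card F : ℝ≥0∞) ≠ ⊤ := by simp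
  exact ENNReal.eq_inv_of_mul_eq_one_left (by rw [mul_comm]; exact hsum')

end Fiber
section Padic

variable {p : ℕ} [Fact p.Prime] [MeasurableSpace ℤ_[p]] [BorelSpace ℤ_[p]]

lemma single_fiber (k : ℕ) (c : ZMod (p^k)) :
    {t : ℤ_[p] | PadicInt.toZModPow k t = c}
      = Metric.closedBall ((c.val : ℤ_[p])) ((p:ℝ)^(-(k:ℤ))) := by
  have : NeZero (p^k) := ⟨pow_ne_zero k (Nat.Prime.ne_zero Fact.out)⟩
  have h0 : PadicInt.toZModPow k ((c.val : ℤ_[p])) = c := by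
    rw [map_natCast]
    exact ZMod.natCast_rightInverse c
  ext t
  rw [Set.mem_setOf_eq, Metric.mem_closedBall, dist_eq_norm,
    PadicInt.norm_le_pow_iff_mem_span_pow, ← PadicInt.ker_toZModPow, RingHom.mem_ker,
    map_sub, h0, sub_eq_zero]

noncomputable def phi (n k : ℕ) : (Fin n → ℤ_[p]) →+ (Fin n → ZMod (p^k)) where
  toFun x i := PadicInt.toZModPow k (x i)
  map_zero' := by funext i; simp
  map_add' x y := by funext i; simp

lemma phi_surjective (n k : ℕ) : Function.Surjective (phi (p := p) n k) := by
  have : NeZero (p^k) := ⟨pow_ne_zero k (Nat.Prime.ne_zero Fact.out)⟩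
  intro b
  refine ⟨fun i => ((b i).val : ℤ_[p]), ?_⟩
  funext i
  show PadicInt.toZModPow k _ = b i
  rw [map_natCast]
  exact ZMod.natCast_rightInverse _

lemma phi_fiber_measurable (n k : ℕ) (b : Fin n → ZMod (p^k)) :
    MeasurableSet ((phi (p := p) n k) ⁻¹' {b}) := by
  have h : (phi (p := p) n k) ⁻¹' {b}
      = Set.pi Set.univ (fun i => {t : ℤ_[p] | PadicInt.toZModPow k t = b i}) := by
    ext x
    simp [phi, funext_iff, Set.mem_pi]
  rw [h]
  exact MeasurableSet.univ_pi fun i => by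
    rw [single_fiber]; exact measurableSet_closedBall

lemma ball_eq_fiber (n k : ℕ) :
    {x : Fin n → ℤ_[p] | ∀ i, ‖x i‖ ≤ (p:ℝ)^(-(k:ℤ))} = (phi (p:=p) n k) ⁻¹' {0} := by
  ext x
  simp only [Set.mem_setOf_eq, Set.mem_preimage, Set.mem_singleton_iff, funext_iff]
  refine forall_congr' fun i => ?_
  rw [PadicInt.norm_le_pow_iff_mem_span_pow, ← PadicInt.ker_toZModPow, RingHom.mem_ker]
  exact Iff.rfl

lemma ball_measure (n k : ℕ) (ν : Measure (Fin n → ℤ_[p])) [ν.IsAddLeftInvariant]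
    [IsProbabilityMeasure ν] :
    ν {x : Fin n → ℤ_[p] | ∀ i, ‖x i‖ ≤ (p:ℝ)^(-(k:ℤ))} = (((p:ℝ≥0∞))^n)⁻¹ ^ k := by
  have : NeZero (p^k) := ⟨pow_ne_zero k (Nat.Prime.ne_zero Fact.out)⟩
  rw [ball_eq_fiber, fiber_measure ν (phi n k) (phi_surjective n k) (phi_fiber_measurable n k)]
  have hc : (Fintype.card (Fin n → ZMod (p^k)) : ℝ≥0∞) = ((p:ℝ≥0∞)^n) ^ k := by
    rw [Fintype.card_fun, ZMod.card, Fintype.card_fin]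
    push_cast
    rw [← pow_mul, ← pow_mul, Nat.mul_comm]
  rw [hc, ← ENNReal.inv_pow]

end Padic
section Shell

variable {p : ℕ} [Fact p.Prime] [MeasurableSpace ℤ_[p]] [BorelSpace ℤ_[p]]

lemma rpow_calc (p : ℕ) (hp0 : (0:ℝ) < p) (k : ℕ) (s : ℝ) :
    ((p:ℝ)^(-(k:ℤ))) ^ s = ((p:ℝ) ^ (-s)) ^ k := by
  rw [← Real.rpow_intCast (p:ℝ) (-(k:ℤ)), ← Real.rpow_natCast ((p:ℝ)^(-s)) k,
    ← Real.rpow_mul hp0.le, ← Real.rpow_mul hp0.le]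
  congr 1
  push_cast
  ring

lemma norm_eq_of_shell {n k : ℕ} (hp1 : 1 < (p:ℝ)) {x : Fin n → ℤ_[p]}
    (h1 : ∀ i, ‖x i‖ ≤ (p:ℝ)^(-(k:ℤ))) (h2 : ¬ ∀ i, ‖x i‖ ≤ (p:ℝ)^(-((k+1:ℕ):ℤ))) :
    ‖x‖ = (p:ℝ)^(-(k:ℤ)) := by
  push_neg at h2
  obtain ⟨i, hi⟩ := h2
  have hxi : x i ≠ 0 := by
    intro h
    rw [h, norm_zero] at hi
    exact absurd (by positivity) (not_lt.mpr hi.le)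
  have hv : ‖x i‖ = (p:ℝ) ^ (-((x i).valuation:ℤ)) := PadicInt.norm_eq_zpow_neg_valuation hxi
  have hle : -((x i).valuation:ℤ) ≤ -(k:ℤ) := by
    rw [← zpow_le_zpow_iff_right₀ hp1, ← hv]
    exact h1 i
  have hlt : (-((k+1:ℕ):ℤ)) < -((x i).valuation:ℤ) := by
    rw [← zpow_lt_zpow_iff_right₀ hp1, ← hv]
    exact hi
  have hval : -((x i).valuation:ℤ) = -(k:ℤ) := by
    push_cast at hlt
    omega
  have hxik : ‖x i‖ = (p:ℝ)^(-(k:ℤ)) := by rw [hv, hval]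
  refine le_antisymm ((pi_norm_le_iff_of_nonneg (by positivity)).mpr h1) ?_
  rw [← hxik]
  exact norm_le_pi_norm x i

lemma shell_lintegral (n : ℕ) (hn : 1 ≤ n) (ν : Measure (Fin n → ℤ_[p]))
    [ν.IsAddLeftInvariant] [IsProbabilityMeasure ν] (s : ℝ) (hs : 0 < s) :
    ∫⁻ x, ENNReal.ofReal (‖x‖ ^ s) ∂ν
      = (1 - ((p:ℝ≥0∞) ^ n)⁻¹)
          * (1 - ENNReal.ofReal ((p:ℝ) ^ (-s)) * ((p:ℝ≥0∞) ^ n)⁻¹)⁻¹ := by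
  have hp : 1 < p := (Fact.out : p.Prime).one_lt
  have hp1 : 1 < (p:ℝ) := by exact_mod_cast hp
  set a : ℝ≥0∞ := ((p:ℝ≥0∞) ^ n)⁻¹ with ha
  set T : ℝ≥0∞ := ENNReal.ofReal ((p:ℝ) ^ (-s)) with hT
  set A : ℕ → Set (Fin n → ℤ_[p]) := fun k => {x | ∀ i, ‖x i‖ ≤ (p:ℝ)^(-(k:ℤ))} with hA
  have hmeasA : ∀ k, MeasurableSet (A k) := fun k => by
    rw [hA]
    show MeasurableSet {x : Fin n → ℤ_[p] | ∀ i, ‖x i‖ ≤ (p:ℝ)^(-(k:ℤ))}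
    rw [ball_eq_fiber]
    exact phi_fiber_measurable n k 0
  have hνA : ∀ k, ν (A k) = a ^ k := fun k => ball_measure n k ν
  have hmono : ∀ k, A (k+1) ⊆ A k := by
    intro k x hx i
    refine le_trans (hx i) ?_
    rw [zpow_le_zpow_iff_right₀ hp1]
    push_cast
    omega
  have hanti : Antitone A := antitone_nat_of_succ_le hmono
  set D : ℕ → Set (Fin n → ℤ_[p]) := fun k => A k \ A (k+1) with hD
  have hmeasD : ∀ k, MeasurableSet (D k) := fun k => (hmeasA k).diff (hmeasA (k+1))
  have hdisj : Pairwise (Function.onFun Disjoint D) := by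
    have key : ∀ j k, j < k → Disjoint (D j) (D k) := by
      intro j k h
      refine Set.disjoint_left.mpr fun x hxj hxk => ?_
      exact hxj.2 (hanti (by omega : j + 1 ≤ k) hxk.1)
    intro j k hjk
    rcases lt_or_gt_of_ne hjk with h | h
    · exact key j k h
    · exact (key k j h).symm
  have hA0 : A 0 = Set.univ := by
    ext x
    simp only [hA, Set.mem_setOf_eq, Set.mem_univ, iff_true]
    intro i
    simpa using PadicInt.norm_le_one (x i)
  have hcover : Set.univ = (⋃ k, D k) ∪ (⋂ k, A k) := by
    ext x
    simp only [Set.mem_univ, true_iff, Set.mem_union, Set.mem_iUnion, Set.mem_iInter]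
    by_cases hx : ∀ k, x ∈ A k
    · right; exact hx
    · left
      push_neg at hx
      have hk := Nat.find_spec hx
      have hk0 : Nat.find hx ≠ 0 := by
        intro h
        rw [h, hA0] at hk
        exact hk (Set.mem_univ x)
      have hlt : Nat.find hx - 1 < Nat.find hx := by omega
      refine ⟨Nat.find hx - 1, not_not.mp (Nat.find_min hx hlt), ?_⟩
      have heq : Nat.find hx - 1 + 1 = Nat.find hx := by omega
      rw [heq]
      exact hk
  have ha1 : a < 1 := by
    rw [ha, ENNReal.inv_lt_one]
    exact one_lt_pow₀ (by exact_mod_cast hp) (by omega)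
  have hZ : ν (⋂ k, A k) = 0 := by
    have hle : ∀ k, ν (⋂ k, A k) ≤ a ^ k := fun k =>
      le_trans (measure_mono (Set.iInter_subset A k)) (le_of_eq (hνA k))
    have htend := ENNReal.tendsto_pow_atTop_nhds_zero_of_lt_one ha1
    exact le_antisymm (le_of_tendsto_of_tendsto' tendsto_const_nhds htend hle) zero_le
  have hTa : T * a < 1 := by
    calc T * a ≤ 1 * a := by
          refine mul_le_mul_left ?_ a
          rw [hT]
          refine ENNReal.ofReal_le_one.mpr ?_
          rw [← Real.rpow_zero (p:ℝ)]
          exact Real.rpow_le_rpow_of_exponent_le hp1.le (by linarith)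
      _ = a := one_mul a
      _ < 1 := ha1
  have hval : ∀ k, ∫⁻ x in D k, ENNReal.ofReal (‖x‖ ^ s) ∂ν = T^k * (a^k - a^(k+1)) := by
    intro k
    have hfx : ∀ᵐ x ∂ν, x ∈ D k → ENNReal.ofReal (‖x‖ ^ s) = T^k := by
      refine Filter.Eventually.of_forall fun x hx => ?_
      have hnx : ‖x‖ = (p:ℝ)^(-(k:ℤ)) := norm_eq_of_shell hp1 hx.1 hx.2
      rw [hnx, rpow_calc p (by positivity) k s, hT,
        ENNReal.ofReal_pow (by positivity)]
    rw [setLIntegral_congr_fun_ae (hmeasD k) hfx, setLIntegral_const]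
    congr 1
    rw [hD]
    show ν (A k \ A (k+1)) = a ^ k - a ^ (k+1)
    rw [measure_diff (hmono k) (hmeasA (k+1)).nullMeasurableSet (measure_ne_top ν _),
      hνA, hνA]
  calc ∫⁻ x, ENNReal.ofReal (‖x‖ ^ s) ∂ν
      = ∫⁻ x in Set.univ, ENNReal.ofReal (‖x‖ ^ s) ∂ν := (setLIntegral_univ _).symm
    _ = ∫⁻ x in (⋃ k, D k) ∪ (⋂ k, A k), ENNReal.ofReal (‖x‖ ^ s) ∂ν := by rw [← hcover]
    _ = (∫⁻ x in (⋃ k, D k), ENNReal.ofReal (‖x‖ ^ s) ∂ν)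
          + ∫⁻ x in (⋂ k, A k), ENNReal.ofReal (‖x‖ ^ s) ∂ν := by
        refine lintegral_union (MeasurableSet.iInter fun k => hmeasA k) ?_
        refine Set.disjoint_left.mpr fun x hx hx' => ?_
        obtain ⟨k, hk⟩ := Set.mem_iUnion.mp hx
        exact hk.2 (Set.mem_iInter.mp hx' (k+1))
    _ = ∫⁻ x in (⋃ k, D k), ENNReal.ofReal (‖x‖ ^ s) ∂ν := by
        rw [setLIntegral_measure_zero _ _ hZ, add_zero]
    _ = ∑' k, ∫⁻ x in D k, ENNReal.ofReal (‖x‖ ^ s) ∂ν := lintegral_iUnion hmeasD hdisj _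
    _ = ∑' k, T^k * (a^k - a^(k+1)) := by simp only [hval]
    _ = ∑' k, (T*a)^k * (1 - a) := by
        congr 1
        funext k
        have hane : a ^ k ≠ ⊤ := by
          refine ENNReal.pow_ne_top ?_
          simp only [ha, ne_eq, ENNReal.inv_eq_top]
          simp [(Fact.out : p.Prime).ne_zero, pow_eq_zero_iff]
        have h1 : a^k - a^(k+1) = a^k * (1 - a) := by
          rw [ENNReal.mul_sub fun _ _ => hane, mul_one, pow_succ]
        rw [h1, mul_pow, ← mul_assoc]
    _ = (1 - T*a)⁻¹ * (1 - a) := by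
        rw [ENNReal.tsum_mul_right, ENNReal.tsum_geometric]
    _ = (1 - a) * (1 - T*a)⁻¹ := mul_comm _ _

end Shell
section Inner

variable {p : ℕ} [Fact p.Prime] [MeasurableSpace ℤ_[p]] [BorelSpace ℤ_[p]]

noncomputable def L {n : ℕ} (u : Fin n → ℤ_[p]) : (Fin n → ℤ_[p]) →+ ℤ_[p] where
  toFun y := ∑ i, u i * y i
  map_zero' := by simp
  map_add' a b := by simp [mul_add, Finset.sum_add_distrib]

lemma L_continuous {n : ℕ} (u : Fin n → ℤ_[p]) : Continuous (L u) := by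
  show Continuous fun y : Fin n → ℤ_[p] => ∑ i, u i * y i
  exact continuous_finset_sum _ fun i _ => continuous_const.mul (continuous_apply i)

lemma L_surjective {n : ℕ} (u : Fin n → ℤ_[p]) (i0 : Fin n) (hu : IsUnit (u i0)) :
    Function.Surjective (L u) := by
  intro t
  obtain ⟨w, hw⟩ := hu
  refine ⟨fun j => if j = i0 then ↑w⁻¹ * t else 0, ?_⟩
  show ∑ i, u i * _ = t
  rw [Finset.sum_eq_single i0]
  · rw [if_pos rfl, ← hw, Units.mul_inv_cancel_left]
  · intro b _ hb
    simp [hb]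
  · intro h
    exact absurd (Finset.mem_univ i0) h

lemma inner_lintegral (n : ℕ) (hn : 1 ≤ n) (ν : Measure (Fin n → ℤ_[p]))
    [ν.IsAddLeftInvariant] [IsProbabilityMeasure ν]
    (lam : Measure ℤ_[p]) [lam.IsAddLeftInvariant] [IsProbabilityMeasure lam]
    (s : ℝ) (hs : 0 < s) (x : Fin n → ℤ_[p]) :
    ∫⁻ y, ENNReal.ofReal (‖∑ i, x i * y i‖ ^ s) ∂ν
      = ENNReal.ofReal (‖x‖ ^ s) * ∫⁻ t, ENNReal.ofReal (‖t‖ ^ s) ∂lam := by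
  have hne : Nonempty (Fin n) := ⟨⟨0, by omega⟩⟩
  have hg : Measurable fun t : ℤ_[p] => ENNReal.ofReal (‖t‖ ^ s) := by
    have hcont : Continuous fun t : ℤ_[p] => ‖t‖ ^ s :=
      continuous_norm.rpow_const fun t => Or.inr hs.le
    exact (ENNReal.continuous_ofReal.comp hcont).measurable
  by_cases hx : x = 0
  · subst hx
    simp only [Pi.zero_apply, zero_mul, Finset.sum_const_zero, norm_zero,
      Real.zero_rpow hs.ne', ENNReal.ofReal_zero, lintegral_zero, zero_mul]
  obtain ⟨i0, -, hi0⟩ := Finset.exists_mem_eq_sup Finset.univ Finset.univ_nonempty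
      (fun i => ‖x i‖₊)
  have hnormx : ‖x‖ = ‖x i0‖ := by
    rw [Pi.norm_def, hi0, coe_nnnorm]
  have hxi0 : x i0 ≠ 0 := by
    intro h
    have h2 : ‖x‖ = 0 := by rw [hnormx, h, norm_zero]
    exact hx (norm_eq_zero.mp h2)
  set m : ℕ := (x i0).valuation with hm
  have hvnn : 0 ≤ (x i0).valuation := Nat.zero_le _
  have hvm : ((x i0).valuation : ℤ) = (m:ℤ) := rfl
  have hxnorm : ‖x i0‖ = (p:ℝ) ^ (-(m:ℤ)) := by
    rw [PadicInt.norm_eq_zpow_neg_valuation hxi0]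
  have hdvd : ∀ i, ∃ c, x i = (p:ℤ_[p])^m * c := by
    intro i
    have hle : ‖x i‖ ≤ (p:ℝ)^(-(m:ℤ)) := by
      rw [← hxnorm, ← hnormx]
      exact norm_le_pi_norm x i
    have hmem := (PadicInt.norm_le_pow_iff_mem_span_pow (x i) m).mp hle
    rw [Ideal.mem_span_singleton] at hmem
    obtain ⟨c, hc⟩ := hmem
    exact ⟨c, hc⟩
  choose u hu using hdvd
  have hnorm_rel : ∀ y : Fin n → ℤ_[p], ‖∑ i, x i * y i‖ = ‖x‖ * ‖∑ i, u i * y i‖ := by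
    intro y
    have hLrel : (∑ i, x i * y i) = (p:ℤ_[p])^m * ∑ i, u i * y i := by
      rw [Finset.mul_sum]
      exact Finset.sum_congr rfl fun i _ => by rw [hu i, mul_assoc]
    rw [hLrel, norm_mul, PadicInt.norm_p_pow, hnormx, hxnorm]
  have hui0 : IsUnit (u i0) := by
    rw [PadicInt.isUnit_iff]
    have h1 : ‖x i0‖ = ‖(p:ℤ_[p])^m‖ * ‖u i0‖ := by rw [← norm_mul, ← hu i0]
    rw [hxnorm, PadicInt.norm_p_pow] at h1
    have hppos : (0:ℝ) < (p:ℝ)^(-(m:ℤ)) := by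
      have : (0:ℝ) < (p:ℝ) := by exact_mod_cast (Fact.out : p.Prime).pos
      positivity
    have h2 : (p:ℝ)^(-(m:ℤ)) * 1 = (p:ℝ)^(-(m:ℤ)) * ‖u i0‖ := by
      rw [mul_one]; exact h1
    exact (mul_left_cancel₀ hppos.ne' h2).symm
  have hmeasL : Measurable (L u) := (L_continuous u).measurable
  have h1 : (Measure.map (⇑(L u)) ν).IsAddLeftInvariant :=
    MeasureTheory.isAddLeftInvariant_map (L u).toAddHom hmeasL (L_surjective u i0 hui0)
  have h2 : IsProbabilityMeasure (Measure.map (⇑(L u)) ν) :=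
    Measure.isProbabilityMeasure_map hmeasL.aemeasurable
  have hmap : Measure.map (⇑(L u)) ν = lam := inv_prob_unique _ _
  calc ∫⁻ y, ENNReal.ofReal (‖∑ i, x i * y i‖ ^ s) ∂ν
      = ∫⁻ y, ENNReal.ofReal (‖x‖ ^ s) * ENNReal.ofReal (‖(L u) y‖ ^ s) ∂ν := by
        refine lintegral_congr fun y => ?_
        rw [show (L u) y = ∑ i, u i * y i from rfl, hnorm_rel y,
          Real.mul_rpow (norm_nonneg _) (norm_nonneg _),
          ENNReal.ofReal_mul (by positivity)]
    _ = ENNReal.ofReal (‖x‖ ^ s) * ∫⁻ y, ENNReal.ofReal (‖(L u) y‖ ^ s) ∂ν :=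
        lintegral_const_mul _ (hg.comp hmeasL)
    _ = ENNReal.ofReal (‖x‖ ^ s) * ∫⁻ t, ENNReal.ofReal (‖t‖ ^ s) ∂lam := by
        rw [← hmap, lintegral_map hg hmeasL]

end Inner
section J

variable {p : ℕ} [Fact p.Prime] [MeasurableSpace ℤ_[p]] [BorelSpace ℤ_[p]]

lemma J_lintegral (lam : Measure ℤ_[p]) [lam.IsAddLeftInvariant] [IsProbabilityMeasure lam]
    (s : ℝ) (hs : 0 < s) :
    ∫⁻ t, ENNReal.ofReal (‖t‖ ^ s) ∂lam
      = (1 - ((p:ℝ≥0∞) ^ 1)⁻¹)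
          * (1 - ENNReal.ofReal ((p:ℝ) ^ (-s)) * ((p:ℝ≥0∞) ^ 1)⁻¹)⁻¹ := by
  set c : ℤ_[p] →+ (Fin 1 → ℤ_[p]) :=
    { toFun := fun t _ => t, map_zero' := rfl, map_add' := fun a b => rfl } with hc
  have hccont : Continuous c := continuous_pi fun i => continuous_id
  have hcm : Measurable c := hccont.measurable
  have hsurj : Function.Surjective c := fun x => ⟨x 0, by
    funext i
    show x 0 = x i
    congr 1
    exact (Fin.eq_zero i).symm⟩
  have h1 : (Measure.map (⇑c) lam).IsAddLeftInvariant :=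
    MeasureTheory.isAddLeftInvariant_map c.toAddHom hcm hsurj
  have h2 : IsProbabilityMeasure (Measure.map (⇑c) lam) :=
    Measure.isProbabilityMeasure_map hcm.aemeasurable
  have hkey := shell_lintegral 1 le_rfl (Measure.map (⇑c) lam) s hs
  have hg : Measurable fun x : Fin 1 → ℤ_[p] => ENNReal.ofReal (‖x‖ ^ s) := by
    have hcont : Continuous fun x : Fin 1 → ℤ_[p] => ‖x‖ ^ s :=
      continuous_norm.rpow_const fun t => Or.inr hs.le
    exact (ENNReal.continuous_ofReal.comp hcont).measurable
  rw [lintegral_map hg hcm] at hkey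
  rw [← hkey]
  refine lintegral_congr fun t => ?_
  congr 2
  show ‖t‖ = ‖(fun _ : Fin 1 => t)‖
  rw [pi_norm_const]

lemma toReal_factor (m : ℕ) (hp1 : 1 < (p:ℝ)) (s : ℝ) (hs : 0 < s) :
    ((1 - ((p:ℝ≥0∞) ^ m)⁻¹)
        * (1 - ENNReal.ofReal ((p:ℝ) ^ (-s)) * ((p:ℝ≥0∞) ^ m)⁻¹)⁻¹).toReal
      = (1 - ((p:ℝ) ^ m)⁻¹) * (1 - (p:ℝ) ^ (-s) * ((p:ℝ) ^ m)⁻¹)⁻¹ := by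
  have hp0 : (0:ℝ) < p := lt_trans one_pos hp1
  have hAfin : ((p:ℝ≥0∞) ^ m)⁻¹ ≠ ⊤ := by
    simp [ENNReal.inv_eq_top, pow_eq_zero_iff, hp0.ne']
    intro h
    exact absurd h (by exact_mod_cast hp0.ne')
  have hA1 : ((p:ℝ≥0∞) ^ m)⁻¹ ≤ 1 := by
    rw [ENNReal.inv_le_one]
    exact one_le_pow₀ (by exact_mod_cast hp1.le)
  have hT1 : ENNReal.ofReal ((p:ℝ) ^ (-s)) ≤ 1 := by
    refine ENNReal.ofReal_le_one.mpr ?_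
    rw [← Real.rpow_zero (p:ℝ)]
    exact Real.rpow_le_rpow_of_exponent_le hp1.le (by linarith)
  have hTA1 : ENNReal.ofReal ((p:ℝ) ^ (-s)) * ((p:ℝ≥0∞) ^ m)⁻¹ ≤ 1 := by
    calc ENNReal.ofReal ((p:ℝ) ^ (-s)) * ((p:ℝ≥0∞) ^ m)⁻¹
        ≤ 1 * 1 := mul_le_mul' hT1 hA1
      _ = 1 := one_mul 1
  rw [ENNReal.toReal_mul]
  rw [ENNReal.toReal_sub_of_le hA1 ENNReal.one_ne_top]
  rw [ENNReal.toReal_inv (1 - ENNReal.ofReal ((p:ℝ) ^ (-s)) * ((p:ℝ≥0∞) ^ m)⁻¹)]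
  rw [ENNReal.toReal_sub_of_le hTA1 ENNReal.one_ne_top]
  rw [ENNReal.toReal_mul, ENNReal.toReal_ofReal (Real.rpow_nonneg hp0.le _)]
  simp [ENNReal.toReal_pow, ENNReal.toReal_inv]

end J
end Stmt12Aux
theorem stmt_12 (p : ℕ) [Fact p.Prime] (n : ℕ) (hn : 1 ≤ n)
    [MeasurableSpace ℤ_[p]] [BorelSpace ℤ_[p]]
    (μ : Measure ((Fin n → ℤ_[p]) × (Fin n → ℤ_[p]))) [μ.IsAddLeftInvariant]
    (hμ : μ Set.univ = 1)
    (s : ℝ) (hs : 0 < s) :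
    ∫ v, ‖∑ i, v.1 i * v.2 i‖ ^ s ∂μ
      = ((p : ℝ) - 1) * ((p : ℝ) ^ n - 1) * (p : ℝ) ^ (2 * s)
        / (((p : ℝ) ^ (s + 1) - 1) * ((p : ℝ) ^ (s + (n : ℝ)) - 1)) := by
  have hprime : p.Prime := Fact.out
  have hp1 : (1:ℝ) < p := by exact_mod_cast hprime.one_lt
  have hp0 : (0:ℝ) < p := lt_trans one_pos hp1
  have hμprob : IsProbabilityMeasure μ := ⟨hμ⟩
  set ν : Measure (Fin n → ℤ_[p]) :=
    Measure.addHaarMeasure ⟨⟨Set.univ, isCompact_univ⟩, by simpa using Set.univ_nonempty⟩ with hν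
  have hν2 : IsProbabilityMeasure ν := ⟨Measure.addHaarMeasure_self⟩
  set lam : Measure ℤ_[p] :=
    Measure.addHaarMeasure ⟨⟨Set.univ, isCompact_univ⟩, by simpa using Set.univ_nonempty⟩ with hlam
  have hlam2 : IsProbabilityMeasure lam := ⟨Measure.addHaarMeasure_self⟩
  have hμeq : μ = ν.prod ν := Stmt12Aux.inv_prob_unique μ (ν.prod ν)
  have hF : Continuous fun v : (Fin n → ℤ_[p]) × (Fin n → ℤ_[p]) => ‖∑ i, v.1 i * v.2 i‖ ^ s := by
    apply Continuous.rpow_const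
    · apply Continuous.norm
      exact continuous_finset_sum _ fun i _ =>
        ((continuous_apply i).comp continuous_fst).mul ((continuous_apply i).comp continuous_snd)
    · exact fun v => Or.inr hs.le
  rw [integral_eq_lintegral_of_nonneg_ae
    (Filter.Eventually.of_forall fun v => Real.rpow_nonneg (norm_nonneg _) s)
    hF.aestronglyMeasurable, hμeq]
  set J : ℝ≥0∞ := ∫⁻ t, ENNReal.ofReal (‖t‖ ^ s) ∂lam with hJ
  have hgmeas : Measurable fun x : Fin n → ℤ_[p] => ENNReal.ofReal (‖x‖ ^ s) := by
    have hcont : Continuous fun x : Fin n → ℤ_[p] => ‖x‖ ^ s :=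
      continuous_norm.rpow_const fun t => Or.inr hs.le
    exact (ENNReal.continuous_ofReal.comp hcont).measurable
  have key : (∫⁻ v, ENNReal.ofReal (‖∑ i, v.1 i * v.2 i‖ ^ s) ∂(ν.prod ν))
      = ((1 - ((p:ℝ≥0∞) ^ n)⁻¹)
          * (1 - ENNReal.ofReal ((p:ℝ) ^ (-s)) * ((p:ℝ≥0∞) ^ n)⁻¹)⁻¹) * J := by
    have hFm : Measurable fun v : (Fin n → ℤ_[p]) × (Fin n → ℤ_[p]) =>
        ENNReal.ofReal (‖∑ i, v.1 i * v.2 i‖ ^ s) :=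
      ENNReal.continuous_ofReal.measurable.comp hF.measurable
    rw [lintegral_prod _ hFm.aemeasurable]
    calc ∫⁻ x, ∫⁻ y, ENNReal.ofReal (‖∑ i, (x,y).1 i * (x,y).2 i‖ ^ s) ∂ν ∂ν
        = ∫⁻ x, ENNReal.ofReal (‖x‖ ^ s) * J ∂ν :=
          lintegral_congr fun x => Stmt12Aux.inner_lintegral n hn ν lam s hs x
      _ = (∫⁻ x, ENNReal.ofReal (‖x‖ ^ s) ∂ν) * J := lintegral_mul_const _ hgmeas
      _ = ((1 - ((p:ℝ≥0∞) ^ n)⁻¹)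
            * (1 - ENNReal.ofReal ((p:ℝ) ^ (-s)) * ((p:ℝ≥0∞) ^ n)⁻¹)⁻¹) * J := by
          rw [Stmt12Aux.shell_lintegral n hn ν s hs]
  rw [key, hJ, Stmt12Aux.J_lintegral lam s hs, ENNReal.toReal_mul,
    Stmt12Aux.toReal_factor n hp1 s hs, Stmt12Aux.toReal_factor 1 hp1 s hs]
  -- real algebra
  have hXgt : 1 < (p:ℝ) ^ s := (Real.one_lt_rpow_iff_of_pos hp0).mpr (Or.inl ⟨hp1, hs⟩)
  have hX0 : (0:ℝ) < (p:ℝ) ^ s := lt_trans one_pos hXgt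
  have hPn : (1:ℝ) < (p:ℝ) ^ n := one_lt_pow₀ hp1 (by omega)
  have hPn0 : (0:ℝ) < (p:ℝ) ^ n := lt_trans one_pos hPn
  have hneg : (p:ℝ) ^ (-s) = ((p:ℝ)^s)⁻¹ := Real.rpow_neg hp0.le s
  have h2s : (p:ℝ) ^ (2*s) = (p:ℝ)^s * (p:ℝ)^s := by
    rw [two_mul, Real.rpow_add hp0]
  have hs1 : (p:ℝ) ^ (s+1) = (p:ℝ)^s * p := by rw [Real.rpow_add hp0, Real.rpow_one]
  have hsn : (p:ℝ) ^ (s+(n:ℝ)) = (p:ℝ)^s * (p:ℝ)^n := by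
    rw [Real.rpow_add hp0, Real.rpow_natCast]
  rw [hneg, h2s, hs1, hsn]
  have hd1 : 1 - ((p:ℝ)^s)⁻¹ * ((p:ℝ)^n)⁻¹ ≠ 0 := by
    have h : ((p:ℝ)^s)⁻¹ * ((p:ℝ)^n)⁻¹ < 1 := by
      rw [← mul_inv]
      have h1 : (1:ℝ) < (p:ℝ)^s * (p:ℝ)^n := by nlinarith
      rw [inv_lt_one₀ (by positivity)]
      exact h1
    nlinarith
  have hd2 : 1 - ((p:ℝ)^s)⁻¹ * ((p:ℝ)^1)⁻¹ ≠ 0 := by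
    have h : ((p:ℝ)^s)⁻¹ * ((p:ℝ)^1)⁻¹ < 1 := by
      rw [← mul_inv]
      have h1 : (1:ℝ) < (p:ℝ)^s * (p:ℝ)^1 := by
        rw [pow_one]; nlinarith
      rw [inv_lt_one₀ (by positivity)]
      exact h1
    nlinarith
  have he1 : (p:ℝ)^s * (p:ℝ) - 1 ≠ 0 := by nlinarith
  have he2 : (p:ℝ)^s * (p:ℝ)^n - 1 ≠ 0 := by nlinarith
  have hXne : ((p:ℝ)^s) ≠ 0 := hX0.ne'
  have hPne : ((p:ℝ)) ≠ 0 := hp0.ne'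
  have hPnne : ((p:ℝ)^n) ≠ 0 := hPn0.ne'
  field_simp
end

section
/- Let Γ = (I,E,s,t) be a quiver with finite vertex set I and finite edge set E, p a prime, α ≥ 1 an integer, and R = ℤ/p^αℤ. Let x : E → R be a 1-dimensional representation of Γ over R. For 1 ≤ k ≤ α, let c_k denote the number of equivalence classes of the equivalence relation on I generated by the pairs {(s(e), t(e)) : e ∈ E, x(e) ∉ p^k R}. Then the number of automorphisms of x, i.e. the cardinality of {g : I → R^× : (g(t(e)) − g(s(e))) · x(e) = 0 for all e ∈ E}, equals (p−1)^{c_α} · p^{Σ_{k=1}^{α−1} c_k}. -/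
section ZModHelpers

variable {p : ℕ}

private lemma natCast_val_self {n : ℕ} [NeZero n] (a : ZMod n) :
    ((a.val : ℕ) : ZMod n) = a := by
  rw [ZMod.natCast_val, ZMod.cast_id]

private def pi1 (p γ : ℕ) : ZMod (p ^ (γ + 1)) →+* ZMod p :=
  ZMod.castHom (dvd_pow_self p (Nat.succ_ne_zero γ)) _

private def pim (p γ : ℕ) : ZMod (p ^ (γ + 1)) →+* ZMod (p ^ γ) :=
  ZMod.castHom (pow_dvd_pow p (Nat.le_succ γ)) _

private def pmul (p γ : ℕ) (w : ZMod (p ^ γ)) : ZMod (p ^ (γ + 1)) :=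
  ((p * w.val : ℕ) : ZMod (p ^ (γ + 1)))

private lemma not_exists_top {β : ℕ} (a : ZMod (p ^ β)) :
    (¬ ∃ z : ZMod (p ^ β), a = (p : ZMod (p ^ β)) ^ β * z) ↔ a ≠ 0 := by
  have h0 : (p : ZMod (p ^ β)) ^ β = 0 := by
    have : ((p ^ β : ℕ) : ZMod (p ^ β)) = 0 := ZMod.natCast_self _
    rwa [Nat.cast_pow] at this
  simp [h0]

variable (hp : p.Prime) (γ : ℕ)
include hp

private lemma pi1_val (a : ZMod (p ^ (γ + 1))) :
    pi1 p γ a = ((a.val : ℕ) : ZMod p) := by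
  haveI : NeZero (p ^ (γ + 1)) := ⟨pow_ne_zero _ hp.ne_zero⟩
  conv_lhs => rw [← natCast_val_self a]
  rw [map_natCast]

private lemma pim_val (a : ZMod (p ^ (γ + 1))) :
    pim p γ a = ((a.val : ℕ) : ZMod (p ^ γ)) := by
  haveI : NeZero (p ^ (γ + 1)) := ⟨pow_ne_zero _ hp.ne_zero⟩
  conv_lhs => rw [← natCast_val_self a]
  rw [map_natCast]

private lemma isUnit_iff_pi1 (a : ZMod (p ^ (γ + 1))) :
    IsUnit a ↔ pi1 p γ a ≠ 0 := by
  haveI : NeZero (p ^ (γ + 1)) := ⟨pow_ne_zero _ hp.ne_zero⟩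
  rw [pi1_val hp, Ne, ZMod.natCast_eq_zero_iff]
  conv_lhs => rw [← natCast_val_self a]
  rw [ZMod.isUnit_iff_coprime, Nat.coprime_pow_right_iff (Nat.succ_pos γ),
    Nat.coprime_comm, hp.coprime_iff_not_dvd]

private lemma pi1_eq_zero_of_mul {a c : ZMod (p ^ (γ + 1))} (h : a * c = 0) (hc : c ≠ 0) :
    pi1 p γ a = 0 := by
  by_contra hn
  exact hc (((isUnit_iff_pi1 hp γ a).2 hn).mul_right_eq_zero.mp h)

private lemma exists_iff_dvd_val {β : ℕ} (k : ℕ) (hk : k ≤ β) (a : ZMod (p ^ β)) :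
    (∃ z : ZMod (p ^ β), a = (p : ZMod (p ^ β)) ^ k * z) ↔ p ^ k ∣ a.val := by
  haveI : NeZero (p ^ β) := ⟨pow_ne_zero _ hp.ne_zero⟩
  have hcast : (p : ZMod (p ^ β)) ^ k = ((p ^ k : ℕ) : ZMod (p ^ β)) := by push_cast; ring
  constructor
  · rintro ⟨z, rfl⟩
    rw [hcast, ← natCast_val_self z, ← Nat.cast_mul, ZMod.val_natCast]
    exact (Nat.dvd_mod_iff (pow_dvd_pow p hk)).mpr ⟨z.val, rfl⟩
  · rintro ⟨w, hw⟩
    refine ⟨(w : ZMod (p ^ β)), ?_⟩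
    rw [hcast, ← Nat.cast_mul, ← hw, natCast_val_self]

private lemma p_mul_eq_zero_iff (u : ZMod (p ^ (γ + 1))) :
    (p : ZMod (p ^ (γ + 1))) * u = 0 ↔ pim p γ u = 0 := by
  haveI : NeZero (p ^ (γ + 1)) := ⟨pow_ne_zero _ hp.ne_zero⟩
  rw [pim_val hp]
  conv_lhs => rw [← natCast_val_self u, ← Nat.cast_mul]
  rw [ZMod.natCast_eq_zero_iff, ZMod.natCast_eq_zero_iff]
  have key : ∀ v : ℕ, (p ^ (γ + 1) ∣ p * v ↔ p ^ γ ∣ v) := by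
    intro v
    rw [Nat.pow_succ']
    exact Nat.mul_dvd_mul_iff_left hp.pos
  exact key u.val

omit hp in
private lemma pmul_def (w : ZMod (p ^ γ)) :
    pmul p γ w = (p : ZMod (p ^ (γ + 1))) * ((w.val : ℕ) : ZMod (p ^ (γ + 1))) := by
  rw [pmul, Nat.cast_mul]

private lemma pim_natCast_val (w : ZMod (p ^ γ)) :
    pim p γ ((w.val : ℕ) : ZMod (p ^ (γ + 1))) = w := by
  haveI : NeZero (p ^ γ) := ⟨pow_ne_zero _ hp.ne_zero⟩
  rw [map_natCast, natCast_val_self]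

private lemma pmul_div {d : ZMod (p ^ (γ + 1))} (hd : pi1 p γ d = 0) :
    pmul p γ (((d.val / p : ℕ)) : ZMod (p ^ γ)) = d := by
  haveI : NeZero (p ^ (γ + 1)) := ⟨pow_ne_zero _ hp.ne_zero⟩
  have hdvd : p ∣ d.val := by
    rw [pi1_val hp, ZMod.natCast_eq_zero_iff] at hd; exact hd
  have hlt : d.val / p < p ^ γ :=
    Nat.div_lt_of_lt_mul (by rw [← Nat.pow_succ']; exact ZMod.val_lt d)
  rw [pmul, ZMod.val_cast_of_lt hlt, Nat.mul_div_cancel' hdvd, natCast_val_self]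

private lemma div_pmul (w : ZMod (p ^ γ)) :
    (((pmul p γ w).val / p : ℕ) : ZMod (p ^ γ)) = w := by
  haveI : NeZero (p ^ γ) := ⟨pow_ne_zero _ hp.ne_zero⟩
  have hlt : p * w.val < p ^ (γ + 1) := by
    rw [Nat.pow_succ']
    exact mul_lt_mul_of_pos_left (ZMod.val_lt w) hp.pos
  rw [pmul, ZMod.val_cast_of_lt hlt, Nat.mul_div_cancel_left _ hp.pos, natCast_val_self]

omit hp in
private lemma pi1_pmul (w : ZMod (p ^ γ)) : pi1 p γ (pmul p γ w) = 0 := by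
  rw [pmul_def, map_mul, map_natCast, ZMod.natCast_self, zero_mul]

private lemma pmul_sub_mul_eq_zero_iff (w1 w2 : ZMod (p ^ γ)) (c : ZMod (p ^ (γ + 1))) :
    (pmul p γ w1 - pmul p γ w2) * c = 0 ↔ (w1 - w2) * pim p γ c = 0 := by
  rw [pmul_def, pmul_def, ← mul_sub, mul_assoc, p_mul_eq_zero_iff hp, map_mul, map_sub,
    pim_natCast_val hp, pim_natCast_val hp]

end ZModHelpers

section QuiverPart

variable {I E : Type*} (s t : E → I) {p : ℕ}

private def qrel (s t : E → I) (p k n : ℕ) (x : E → ZMod n) : I → I → Prop :=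
  fun i j => ∃ e : E, (¬ ∃ z : ZMod n, x e = (p : ZMod n) ^ k * z) ∧ s e = i ∧ t e = j

private abbrev Asol (s t : E → I) (n : ℕ) (x : E → ZMod n) : Type _ :=
  {y : I → ZMod n // ∀ e : E, (y (t e) - y (s e)) * x e = 0}

private def sig (p γ : ℕ) (a : ZMod (p ^ (γ + 1))) : ZMod (p ^ (γ + 1)) :=
  (((pi1 p γ a).val : ℕ) : ZMod (p ^ (γ + 1)))

private def wlow (p γ : ℕ) (a : ZMod (p ^ (γ + 1))) : ZMod (p ^ γ) :=
  (((a - sig p γ a).val / p : ℕ) : ZMod (p ^ γ))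

variable (hp : p.Prime)
include hp

private lemma pi1_sig (γ : ℕ) (a : ZMod (p ^ (γ + 1))) :
    pi1 p γ (sig p γ a) = pi1 p γ a := by
  haveI : NeZero p := ⟨hp.ne_zero⟩
  rw [sig, map_natCast, natCast_val_self]

private lemma pmul_wlow (γ : ℕ) (a : ZMod (p ^ (γ + 1))) :
    pmul p γ (wlow p γ a) = a - sig p γ a := by
  apply pmul_div hp
  rw [map_sub, pi1_sig hp, sub_self]

private lemma sig_add_pmul (γ : ℕ) (b : ZMod p) (w : ZMod (p ^ γ)) :
    sig p γ (((b.val : ℕ) : ZMod (p ^ (γ + 1))) + pmul p γ w)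
      = ((b.val : ℕ) : ZMod (p ^ (γ + 1))) := by
  haveI : NeZero p := ⟨hp.ne_zero⟩
  rw [sig, map_add, pi1_pmul, add_zero, map_natCast, natCast_val_self]

private lemma pi1_lift_add_pmul (γ : ℕ) (b : ZMod p) (w : ZMod (p ^ γ)) :
    pi1 p γ (((b.val : ℕ) : ZMod (p ^ (γ + 1))) + pmul p γ w) = b := by
  haveI : NeZero p := ⟨hp.ne_zero⟩
  rw [map_add, pi1_pmul, add_zero, map_natCast, natCast_val_self]

private lemma wlow_lift_add_pmul (γ : ℕ) (b : ZMod p) (w : ZMod (p ^ γ)) :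
    wlow p γ (((b.val : ℕ) : ZMod (p ^ (γ + 1))) + pmul p γ w) = w := by
  rw [wlow, sig_add_pmul hp, add_sub_cancel_left]
  exact div_pmul hp γ w

private lemma respects (γ : ℕ) (x : E → ZMod (p ^ (γ + 1)))
    (g : I → ZMod (p ^ (γ + 1))) (hg : ∀ e, (g (t e) - g (s e)) * x e = 0) :
    ∀ i j, qrel s t p (γ + 1) (p ^ (γ + 1)) x i j → pi1 p γ (g i) = pi1 p γ (g j) := by
  rintro i j ⟨e, hxe, rfl, rfl⟩
  have hx0 : x e ≠ 0 := (not_exists_top (x e)).mp hxe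
  have h := pi1_eq_zero_of_mul hp γ (hg e) hx0
  rw [map_sub, sub_eq_zero] at h
  exact h.symm

private lemma sig_cond (γ : ℕ) (x : E → ZMod (p ^ (γ + 1)))
    (g : I → ZMod (p ^ (γ + 1))) (hg : ∀ e, (g (t e) - g (s e)) * x e = 0) (e : E) :
    (sig p γ (g (t e)) - sig p γ (g (s e))) * x e = 0 := by
  by_cases hx : x e = 0
  · rw [hx, mul_zero]
  · have h := respects s t hp γ x g hg (s e) (t e)
      ⟨e, (not_exists_top (x e)).mpr hx, rfl, rfl⟩
    rw [sig, sig, h, sub_self, zero_mul]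

private def mainEquiv (γ : ℕ) (x : E → ZMod (p ^ (γ + 1))) (P : ZMod p → Prop) :
    {g : I → ZMod (p ^ (γ + 1)) //
        (∀ e : E, (g (t e) - g (s e)) * x e = 0) ∧ ∀ i, P (pi1 p γ (g i))} ≃
      (Quot (qrel s t p (γ + 1) (p ^ (γ + 1)) x) → {b : ZMod p // P b}) ×
        Asol s t (p ^ γ) (fun e => pim p γ (x e)) where
  toFun g :=
    ⟨Quot.lift (fun i => (⟨pi1 p γ (g.1 i), g.2.2 i⟩ : {b : ZMod p // P b}))
        (fun i j h => Subtype.ext (respects s t hp γ x g.1 g.2.1 i j h)),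
     ⟨fun i => wlow p γ (g.1 i), by
        intro e
        rw [← pmul_sub_mul_eq_zero_iff hp, pmul_wlow hp, pmul_wlow hp]
        have h1 := g.2.1 e
        have h2 := sig_cond s t hp γ x g.1 g.2.1 e
        linear_combination h1 - h2⟩⟩
  invFun Fw :=
    ⟨fun i => (((Fw.1 (Quot.mk _ i)).1.val : ℕ) : ZMod (p ^ (γ + 1))) + pmul p γ (Fw.2.1 i),
     by
        intro e
        have hσ : (((((Fw.1 (Quot.mk _ (t e))).1.val : ℕ) : ZMod (p ^ (γ + 1)))) -
            ((((Fw.1 (Quot.mk _ (s e))).1.val : ℕ) : ZMod (p ^ (γ + 1))))) * x e = 0 := by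
          by_cases hx : x e = 0
          · rw [hx, mul_zero]
          · have h : Quot.mk (qrel s t p (γ + 1) (p ^ (γ + 1)) x) (s e)
                = Quot.mk (qrel s t p (γ + 1) (p ^ (γ + 1)) x) (t e) :=
              Quot.sound ⟨e, (not_exists_top (x e)).mpr hx, rfl, rfl⟩
            rw [h, sub_self, zero_mul]
        have hw : (pmul p γ (Fw.2.1 (t e)) - pmul p γ (Fw.2.1 (s e))) * x e = 0 :=
          (pmul_sub_mul_eq_zero_iff hp γ _ _ _).mpr (Fw.2.2 e)
        linear_combination hσ + hw,
     by
        intro i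
        rw [pi1_lift_add_pmul hp]
        exact (Fw.1 (Quot.mk _ i)).2⟩
  left_inv g := by
    apply Subtype.ext
    funext i
    dsimp only
    show (((pi1 p γ (g.1 i)).val : ℕ) : ZMod (p ^ (γ + 1))) + pmul p γ (wlow p γ (g.1 i)) = g.1 i
    rw [pmul_wlow hp]
    show sig p γ (g.1 i) + _ = _
    ring
  right_inv Fw := by
    have hpi : ∀ i : I, pi1 p γ (((((Fw.1 (Quot.mk _ i)).1.val : ℕ) : ZMod (p ^ (γ + 1)))) +
        pmul p γ (Fw.2.1 i)) = (Fw.1 (Quot.mk _ i)).1 := fun i => pi1_lift_add_pmul hp γ _ _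
    refine Prod.ext ?_ ?_
    · funext q
      induction q using Quot.ind with
      | _ i =>
        refine Subtype.ext ?_
        dsimp only
        exact hpi i
    · apply Subtype.ext
      funext i
      show wlow p γ _ = Fw.2.1 i
      exact wlow_lift_add_pmul hp γ _ _

private lemma card_subtype [Fintype I] (γ : ℕ) (x : E → ZMod (p ^ (γ + 1)))
    (P : ZMod p → Prop) :
    Nat.card {g : I → ZMod (p ^ (γ + 1)) //
        (∀ e : E, (g (t e) - g (s e)) * x e = 0) ∧ ∀ i, P (pi1 p γ (g i))}
      = Nat.card {b : ZMod p // P b} ^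
          Nat.card (Quot (qrel s t p (γ + 1) (p ^ (γ + 1)) x)) *
        Nat.card (Asol s t (p ^ γ) (fun e => pim p γ (x e))) := by
  rw [Nat.card_congr (mainEquiv s t hp γ x P), Nat.card_prod, Nat.card_fun]

private lemma quot_congr (γ k : ℕ) (hkγ : k ≤ γ) (x : E → ZMod (p ^ (γ + 1))) :
    Nat.card (Quot (qrel s t p k (p ^ γ) (fun e => pim p γ (x e))))
      = Nat.card (Quot (qrel s t p k (p ^ (γ + 1)) x)) := by
  haveI : NeZero (p ^ (γ + 1)) := ⟨pow_ne_zero _ hp.ne_zero⟩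
  refine Nat.card_congr (Quot.congrRight fun i j => ?_)
  have key : ∀ e : E, (∃ z : ZMod (p ^ γ), pim p γ (x e) = (p : ZMod (p ^ γ)) ^ k * z) ↔
      (∃ z : ZMod (p ^ (γ + 1)), x e = (p : ZMod (p ^ (γ + 1))) ^ k * z) := by
    intro e
    rw [exists_iff_dvd_val hp k hkγ, exists_iff_dvd_val hp k (hkγ.trans (Nat.le_succ γ)),
      pim_val hp, ZMod.val_natCast]
    exact Nat.dvd_mod_iff (pow_dvd_pow p hkγ)
  constructor
  · rintro ⟨e, h, rfl, rfl⟩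
    exact ⟨e, fun hz => h ((key e).mpr hz), rfl, rfl⟩
  · rintro ⟨e, h, rfl, rfl⟩
    exact ⟨e, fun hz => h ((key e).mp hz), rfl, rfl⟩

private lemma card_Asol [Fintype I] :
    ∀ γ (x : E → ZMod (p ^ γ)),
      Nat.card (Asol s t (p ^ γ) x)
        = p ^ (∑ k ∈ Finset.Icc 1 γ, Nat.card (Quot (qrel s t p k (p ^ γ) x)))
  | 0, x => by
    haveI : Subsingleton (ZMod (p ^ 0)) := by rw [pow_zero]; infer_instance
    have h1 : Nat.card (Asol s t (p ^ 0) x) = 1 :=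
      Nat.card_eq_one_iff_unique.mpr
        ⟨by infer_instance, ⟨⟨fun _ => 0, fun e => by rw [sub_self, zero_mul]⟩⟩⟩
    rw [Finset.Icc_eq_empty (by norm_num), Finset.sum_empty, h1, pow_zero]
  | (γ + 1), x => by
    have e1 : Nat.card (Asol s t (p ^ (γ + 1)) x)
        = Nat.card {g : I → ZMod (p ^ (γ + 1)) //
            (∀ e : E, (g (t e) - g (s e)) * x e = 0) ∧
              ∀ i, (fun _ : ZMod p => True) (pi1 p γ (g i))} :=
      Nat.card_congr (Equiv.subtypeEquivRight fun g =>
        (and_iff_left fun _ => trivial).symm)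
    rw [e1, card_subtype s t hp γ x (fun _ => True),
      Nat.card_congr (Equiv.subtypeUnivEquiv fun _ : ZMod p => trivial),
      Nat.card_zmod, card_Asol γ (fun e => pim p γ (x e)),
      Finset.sum_congr rfl (fun k hk =>
        quot_congr s t hp γ k (Finset.mem_Icc.mp hk).2 x),
      Finset.sum_Icc_succ_top (Nat.one_le_iff_ne_zero.mpr (Nat.succ_ne_zero γ))]
    ring

private noncomputable def unitsEquiv (γ : ℕ) (x : E → ZMod (p ^ (γ + 1))) :
    {g : I → (ZMod (p ^ (γ + 1)))ˣ //
        ∀ e : E, ((g (t e) : ZMod (p ^ (γ + 1))) - (g (s e) : ZMod (p ^ (γ + 1)))) * x e = 0} ≃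
      {g : I → ZMod (p ^ (γ + 1)) //
        (∀ e : E, (g (t e) - g (s e)) * x e = 0) ∧
          ∀ i, (fun b : ZMod p => b ≠ 0) (pi1 p γ (g i))} where
  toFun g := ⟨fun i => (g.1 i : ZMod (p ^ (γ + 1))), g.2,
    fun i => (isUnit_iff_pi1 hp γ _).mp (g.1 i).isUnit⟩
  invFun h := ⟨fun i => ((isUnit_iff_pi1 hp γ _).mpr (h.2.2 i)).unit, by
    intro e
    simpa only [IsUnit.unit_spec] using h.2.1 e⟩
  left_inv g := by
    apply Subtype.ext
    funext i
    apply Units.ext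
    dsimp only
    simp only [IsUnit.unit_spec]
  right_inv h := by
    apply Subtype.ext
    funext i
    dsimp only
    simp only [IsUnit.unit_spec]

end QuiverPart

theorem stmt_14 {I E : Type*} [Fintype I] [Fintype E] (s t : E → I)
    (p : ℕ) (hp : p.Prime) (α : ℕ) (hα : 1 ≤ α)
    (x : E → ZMod (p ^ α))
    (c : ℕ → ℕ)
    (hc : ∀ k : ℕ, c k = Nat.card (Quot (fun i j : I =>
      ∃ e : E, (¬ ∃ z : ZMod (p ^ α), x e = (p : ZMod (p ^ α)) ^ k * z)
        ∧ s e = i ∧ t e = j))) :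
    Nat.card {g : I → (ZMod (p ^ α))ˣ //
        ∀ e : E, ((g (t e) : ZMod (p ^ α)) - (g (s e) : ZMod (p ^ α))) * x e = 0}
      = (p - 1) ^ (c α) * p ^ (∑ k ∈ Finset.Icc 1 (α - 1), c k) := by
  haveI : Fact p.Prime := ⟨hp⟩
  obtain ⟨γ, rfl⟩ : ∃ γ, α = γ + 1 := ⟨α - 1, (Nat.succ_pred_eq_of_pos hα).symm⟩
  have hcq : ∀ k, c k = Nat.card (Quot (qrel s t p k (p ^ (γ + 1)) x)) := fun k => hc k
  have h1 : Nat.card {b : ZMod p // ¬b = 0} = p - 1 := by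
    rw [← Nat.card_congr (unitsEquivNeZero (G₀ := ZMod p)), Nat.card_eq_fintype_card,
      ZMod.card_units_eq_totient, Nat.totient_prime hp]
  have hsum : (∑ k ∈ Finset.Icc 1 γ,
      Nat.card (Quot (qrel s t p k (p ^ γ) (fun e => pim p γ (x e)))))
        = ∑ k ∈ Finset.Icc 1 γ, c k :=
    Finset.sum_congr rfl fun k hk =>
      (quot_congr s t hp γ k (Finset.mem_Icc.mp hk).2 x).trans (hcq k).symm
  rw [Nat.card_congr (unitsEquiv s t hp γ x), card_subtype s t hp γ x (fun b => b ≠ 0),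
    card_Asol s t hp γ (fun e => pim p γ (x e)), hsum, h1, ← hcq, Nat.add_sub_cancel]
end

section
/- Let n ≥ 1, k ≥ 1, and R = ℂ[X]/(X^k). Let Y ∈ Matₙ(R) be a diagonal matrix such that the constant terms (coefficients of X⁰) of its diagonal entries are pairwise distinct. Suppose g ∈ GLₙ(R) is such that gYg⁻¹ − Y is a diagonal matrix all of whose entries are divisible by X. Then g is a diagonal matrix and gYg⁻¹ = Y. -/
/-- The truncated polynomial ring `ℂ[X]/(X^k)`. -/
noncomputable abbrev TruncPolyRing (k : ℕ) : Type :=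
  Polynomial ℂ ⧸ Ideal.span {(Polynomial.X : Polynomial ℂ) ^ k}

theorem stmt_17 (n k : ℕ) (hn : 1 ≤ n) (hk : 1 ≤ k)
    (π : TruncPolyRing k →+* ℂ)
    (hπ : ∀ q : Polynomial ℂ,
      π (Ideal.Quotient.mk (Ideal.span {(Polynomial.X : Polynomial ℂ) ^ k}) q) = q.eval 0)
    (Y : Matrix (Fin n) (Fin n) (TruncPolyRing k))
    (hYdiag : ∀ i j, i ≠ j → Y i j = 0)
    (hYreg : Function.Injective (fun i => π (Y i i)))
    (g : (Matrix (Fin n) (Fin n) (TruncPolyRing k))ˣ)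
    (hDdiag : ∀ i j, i ≠ j → (g.val * Y * g⁻¹.val - Y) i j = 0)
    (hDdivX : ∀ i j, ∃ y : TruncPolyRing k,
      (g.val * Y * g⁻¹.val - Y) i j
        = Ideal.Quotient.mk (Ideal.span {(Polynomial.X : Polynomial ℂ) ^ k}) Polynomial.X * y) :
    (∀ i j, i ≠ j → g.val i j = 0) ∧ g.val * Y * g⁻¹.val = Y := by
  set I := Ideal.span {(Polynomial.X : Polynomial ℂ) ^ k} with hI
  have hXk : (Ideal.Quotient.mk I (Polynomial.X : Polynomial ℂ)) ^ k = 0 := by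
    rw [← map_pow, Ideal.Quotient.eq_zero_iff_mem]
    exact Ideal.subset_span rfl
  have hπX : π (Ideal.Quotient.mk I Polynomial.X) = 0 := by
    simpa using hπ Polynomial.X
  -- any element with nonzero π-value is a unit
  have hunit : ∀ a : TruncPolyRing k, π a ≠ 0 → IsUnit a := by
    intro a ha
    obtain ⟨q, rfl⟩ := Ideal.Quotient.mk_surjective a
    have hc : q.eval 0 ≠ 0 := by rwa [hπ q] at ha
    have h0 : (q - Polynomial.C (q.eval 0)).coeff 0 = 0 := by
      simp [Polynomial.coeff_zero_eq_eval_zero]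
    obtain ⟨r, hr⟩ := Polynomial.X_dvd_iff.2 h0
    have hnil : IsNilpotent (Ideal.Quotient.mk I (q - Polynomial.C (q.eval 0))) := by
      refine ⟨k, ?_⟩
      rw [hr, map_mul, mul_pow, hXk, zero_mul]
    have huC : IsUnit (Ideal.Quotient.mk I (Polynomial.C (q.eval 0))) := by
      have : IsUnit (Polynomial.C (q.eval 0)) := Polynomial.isUnit_C.2 (isUnit_iff_ne_zero.2 hc)
      exact this.map _
    have := hnil.isUnit_add_left_of_commute huC (Commute.all _ _)
    simpa [← map_add] using this
  set D := g.val * Y * g⁻¹.val - Y with hD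
  have hπD : ∀ i, π (D i i) = 0 := by
    intro i
    obtain ⟨y, hy⟩ := hDdivX i i
    rw [show D i i = _ from hy, map_mul, hπX, zero_mul]
  have hgY : g.val * Y = (Y + D) * g.val := by
    have h1 : Y + D = g.val * Y * g⁻¹.val := by rw [hD]; abel
    rw [h1, Matrix.mul_assoc, Matrix.mul_assoc, g.inv_mul, Matrix.mul_one]
  have key : ∀ i j, g.val i j * (Y j j - Y i i - D i i) = 0 := by
    intro i j
    have h1 : (g.val * Y) i j = g.val i j * Y j j := by
      rw [Matrix.mul_apply]
      refine Finset.sum_eq_single j (fun l _ hl => ?_) (by simp)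
      rw [hYdiag l j hl, mul_zero]
    have h2 : ((Y + D) * g.val) i j = (Y i i + D i i) * g.val i j := by
      rw [Matrix.mul_apply]
      refine Finset.sum_eq_single i (fun l _ hl => ?_) (by simp)
      have : (Y + D) i l = 0 := by
        rw [Matrix.add_apply, hYdiag i l (Ne.symm hl), hDdiag i l (Ne.symm hl), add_zero]
      rw [this, zero_mul]
    have := congrFun (congrFun hgY i) j
    rw [h1, h2] at this
    linear_combination this
  have hoff : ∀ i j, i ≠ j → g.val i j = 0 := by
    intro i j hij
    have hu : IsUnit (Y j j - Y i i - D i i) := by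
      apply hunit
      have hne : π (Y j j) ≠ π (Y i i) := fun h => hij.symm (hYreg h)
      rw [map_sub, map_sub, hπD i, sub_zero]
      exact sub_ne_zero.2 hne
    obtain ⟨u, hu⟩ := hu
    have h := key i j
    rw [← hu] at h
    exact (Units.mul_left_eq_zero u).1 h
  refine ⟨hoff, ?_⟩
  have hcomm : g.val * Y = Y * g.val := by
    ext i j
    rw [Matrix.mul_apply, Matrix.mul_apply]
    rw [Finset.sum_eq_single j (fun l _ hl => by rw [hYdiag l j hl, mul_zero]) (by simp)]
    rw [Finset.sum_eq_single i (fun l _ hl => by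
      rw [hYdiag i l (Ne.symm hl), zero_mul]) (by simp)]
    by_cases hij : i = j
    · subst hij; ring
    · rw [hoff i j hij, zero_mul, mul_zero]
  rw [hcomm, Matrix.mul_assoc, g.mul_inv, Matrix.mul_one]
end

section
/- Let n ≥ 1, k ≥ 1, and R = ℂ[X]/(X^k). Let g ∈ Matₙ(R) be a diagonal invertible matrix with all entries constant (each diagonal entry is the image of a nonzero complex number), and let h ∈ GLₙ(R) satisfy h ≡ 1 (the identity matrix) modulo X, i.e. every entry of h − 1 is divisible by X. If hgh⁻¹ is a diagonal matrix, then hgh⁻¹ = g. -/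
theorem stmt_18 (n k : ℕ) (hn : 1 ≤ n) (hk : 1 ≤ k)
    (g h : (Matrix (Fin n) (Fin n) (TruncPolyRing k))ˣ)
    (hgdiag : ∀ i j, i ≠ j → g.val i j = 0)
    (hgconst : ∀ i, ∃ c : ℂ, c ≠ 0 ∧ g.val i i
      = Ideal.Quotient.mk (Ideal.span {(Polynomial.X : Polynomial ℂ) ^ k}) (Polynomial.C c))
    (hh1 : ∀ i j, ∃ y : TruncPolyRing k, (h.val - 1) i j
      = Ideal.Quotient.mk (Ideal.span {(Polynomial.X : Polynomial ℂ) ^ k}) Polynomial.X * y)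
    (hdiag : ∀ i j, i ≠ j → (h.val * g.val * h⁻¹.val) i j = 0) :
    h.val * g.val * h⁻¹.val = g.val := by
  set d := h.val * g.val * h⁻¹.val with hd
  have hdh : d * h.val = h.val * g.val := by
    rw [hd, Matrix.mul_assoc (h.val * g.val)]
    have : h⁻¹.val * h.val = 1 := by
      rw [← Units.val_mul, inv_mul_cancel, Units.val_one]
    rw [this, Matrix.mul_one]
  have hX : IsNilpotent (Ideal.Quotient.mk (Ideal.span {(Polynomial.X : Polynomial ℂ) ^ k})
      Polynomial.X) := by
    refine ⟨k, ?_⟩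
    rw [← map_pow, Ideal.Quotient.eq_zero_iff_mem]
    exact Ideal.subset_span rfl
  have hunit : ∀ i, IsUnit (h.val i i) := by
    intro i
    obtain ⟨y, hy⟩ := hh1 i i
    have h1 : h.val i i = 1 + (Ideal.Quotient.mk (Ideal.span {(Polynomial.X : Polynomial ℂ) ^ k})
        Polynomial.X * y) := by
      have := hy
      simp only [Matrix.sub_apply, Matrix.one_apply_eq] at this
      linear_combination this
    rw [h1]
    exact IsNilpotent.isUnit_one_add ((Commute.all _ _).isNilpotent_mul_right hX)
  have hdii : ∀ i, d i i = g.val i i := by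
    intro i
    have e1 : (d * h.val) i i = d i i * h.val i i := by
      rw [Matrix.mul_apply]
      exact Finset.sum_eq_single i (fun j _ hji => by rw [hdiag i j (Ne.symm hji), zero_mul])
        (fun hi => absurd (Finset.mem_univ i) hi)
    have e2 : (h.val * g.val) i i = h.val i i * g.val i i := by
      rw [Matrix.mul_apply]
      exact Finset.sum_eq_single i (fun j _ hji => by rw [hgdiag j i hji, mul_zero])
        (fun hi => absurd (Finset.mem_univ i) hi)
    have e3 : d i i * h.val i i = g.val i i * h.val i i := by
      rw [← e1, hdh, e2, mul_comm]
    exact (hunit i).mul_right_cancel e3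
  ext i j
  by_cases hij : i = j
  · subst hij; exact hdii i
  · rw [hdiag i j hij, hgdiag i j hij]
end
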